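/- arXiv:0904.2871 — 5 statements merged into one kernel-verified Lean document; each statement's English description precedes it below -/
import Mathlib

section
/- For all z ∈ ℂ with |z| ≥ 1 and all x ∈ [0,t], writing X₁ = exp(|Im z|·(2t−x) + ‖q‖_t + ‖p‖_t + ∫ₓᵗ|p(τ)|dτ), one has: |z|·|φ̃(x,z)| ≤ X₁, |φ̃'(x,z)| ≤ X₁, |θ̃(x,z)| ≤ X₁, |θ̃'(x,z)| ≤ |z|·X₁, and moreover |θ̃(x,z) − θ(x,z)| ≤ X₁·‖q‖_t/|z| and |φ̃(x,z) − φ(x,z)| ≤ X₁·‖q‖_t/|z|². -/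
set_option maxHeartbeats 1000000

open MeasureTheory

open intervalIntegral

lemma gronwall_cont {a b : ℝ} {H g f : ℝ → ℝ} {C : ℝ}
    (hH : ContinuousOn H (Set.Icc a b))
    (hg : Continuous g) (hg0 : ∀ x, 0 ≤ g x) (hf : Continuous f)
    (hle : ∀ x ∈ Set.Icc a b, H x ≤ C + ∫ s in a..x, (g s * H s + f s)) :
    ∀ x ∈ Set.Icc a b, H x ≤ (C + ∫ s in a..x, f s * Real.exp (-∫ σ in a..s, g σ))
        * Real.exp (∫ σ in a..x, g σ) := by
  intro x hx
  have hab : a ≤ b := hx.1.trans hx.2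
  set Q : ℝ → ℝ := fun u => ∫ σ in a..u, g σ with hQdef
  have hQd : ∀ u, HasDerivAt Q (g u) u := fun u =>
    integral_hasDerivAt_right (hg.intervalIntegrable a u)
      (hg.stronglyMeasurableAtFilter _ _) hg.continuousAt
  have hQcont : Continuous Q := continuous_iff_continuousAt.2 fun u => ((hQd u).differentiableAt).continuousAt
  set k : ℝ → ℝ := fun s => g s * H s + f s with hkdef
  have hkc : ContinuousOn k (Set.Icc a b) := ((hg.continuousOn).mul hH).add hf.continuousOn
  have hkint : ∀ u ∈ Set.Icc a b, IntervalIntegrable k volume a u := fun u hu =>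
    (hkc.mono (by rw [Set.uIcc_of_le hu.1]; exact Set.Icc_subset_Icc le_rfl hu.2)).intervalIntegrable
  set G : ℝ → ℝ := fun u => C + ∫ s in a..u, k s with hGdef
  have hGcont : ContinuousOn G (Set.Icc a b) := by
    apply continuousOn_const.add
    have := intervalIntegral.continuousOn_primitive_interval
      (μ := volume) (f := k) (a := a) (b := b) (by
        rw [Set.uIcc_of_le hab]; exact hkc.integrableOn_compact isCompact_Icc)
    rwa [Set.uIcc_of_le hab] at this
  set e : ℝ → ℝ := fun u => Real.exp (-Q u) with hedef
  have hecont : Continuous e := Real.continuous_exp.comp hQcont.neg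
  have hed : ∀ u, HasDerivAt e (e u * (-g u)) u := fun u => ((hQd u).neg).exp
  set Y0 : ℝ → ℝ := fun u => C + ∫ s in a..u, f s * e s with hY0def
  have hY0d : ∀ u, HasDerivAt Y0 (f u * e u) u := fun u => by
    have hc : Continuous (fun s => f s * e s) := hf.mul hecont
    exact (integral_hasDerivAt_right (hc.intervalIntegrable a u)
      (hc.stronglyMeasurableAtFilter _ _) hc.continuousAt).const_add C
  set φ : ℝ → ℝ := fun u => G u * e u - Y0 u with hφdef
  have hφc : ContinuousOn φ (Set.Icc a b) :=
    (hGcont.mul hecont.continuousOn).sub (fun u hu => ((hY0d u).differentiableAt).continuousAt.continuousWithinAt)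
  have key : ∀ u ∈ interior (Set.Icc a b), HasDerivAt φ (e u * (g u * (H u - G u))) u := by
    intro u hu
    rw [interior_Icc] at hu
    have hGd : HasDerivAt G (k u) u := by
      refine (integral_hasDerivAt_right (hkint u (Set.Ioo_subset_Icc_self hu)) ?_ ?_).const_add C
      · exact (hkc.mono Set.Ioo_subset_Icc_self).stronglyMeasurableAtFilter isOpen_Ioo u hu
      · exact hkc.continuousAt (Icc_mem_nhds hu.1 hu.2)
    have := ((hGd.mul (hed u)).sub (hY0d u))
    have h' : HasDerivAt φ (k u * e u + G u * (e u * -g u) - f u * e u) u := this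
    convert h' using 1
    simp only [hkdef]
    ring
  have hanti : AntitoneOn φ (Set.Icc a b) := by
    refine antitoneOn_of_deriv_nonpos (convex_Icc a b) hφc
      (fun u hu => ((key u hu).differentiableAt).differentiableWithinAt) (fun u hu => ?_)
    rw [(key u hu).deriv]
    have hu' : u ∈ Set.Icc a b := interior_subset hu
    have h1 : H u - G u ≤ 0 := sub_nonpos.2 (hle u hu')
    have : g u * (H u - G u) ≤ 0 := mul_nonpos_of_nonneg_of_nonpos (hg0 u) h1
    exact mul_nonpos_of_nonneg_of_nonpos (Real.exp_nonneg _) this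
  have hφa : φ a = 0 := by simp [hφdef, hGdef, hY0def, hedef, hQdef]
  have hφx : φ x ≤ 0 := by
    have := hanti (Set.left_mem_Icc.2 hab) hx hx.1
    rwa [hφa] at this
  have hGx : G x * e x ≤ Y0 x := by linarith [hφx, sub_nonpos.1 hφx]
  have hGx2 : G x ≤ Y0 x * Real.exp (Q x) := by
    have h1 : G x = (G x * e x) * Real.exp (Q x) := by
      rw [mul_assoc, hedef]
      simp [← Real.exp_add]
    rw [h1]
    exact mul_le_mul_of_nonneg_right hGx (Real.exp_nonneg _)
  exact (hle x hx).trans hGx2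

lemma approx_cont {a b : ℝ} (hab : a ≤ b) {h : ℝ → ℝ}
    (hint : IntervalIntegrable h volume a b) (h0 : ∀ x, 0 ≤ h x) :
    ∀ ε > (0:ℝ), ∃ g : ℝ → ℝ, Continuous g ∧ (∀ x, 0 ≤ g x) ∧
      (∫ s in a..b, |h s - g s|) ≤ ε ∧ IntervalIntegrable g volume a b := by
  intro ε hε
  set ht : ℝ → ℝ := (Set.Ioc a b).indicator h with htdef
  have htint : Integrable ht volume := by
    rw [htdef, integrable_indicator_iff measurableSet_Ioc]
    exact (intervalIntegrable_iff_integrableOn_Ioc_of_le hab).1 hint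
  obtain ⟨g₀, hg₀supp, hg₀close, hg₀cont, hg₀int⟩ :=
    htint.exists_hasCompactSupport_integral_sub_le hε
  refine ⟨fun x => max (g₀ x) 0, hg₀cont.max continuous_const, fun x => le_max_right _ _, ?_, ?_⟩
  · rw [intervalIntegral.integral_of_le hab]
    have hgint : IntegrableOn (fun x => max (g₀ x) 0) (Set.Ioc a b) volume := by
      apply Integrable.integrableOn
      have : (fun x => max (g₀ x) 0) = fun x => (g₀ x + |g₀ x|)/2 := by
        funext x
        rcases le_total (g₀ x) 0 with hc | hc
        · rw [abs_of_nonpos hc, max_eq_right hc]; ring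
        · rw [abs_of_nonneg hc, max_eq_left hc]; ring
      rw [this]
      exact (hg₀int.add hg₀int.abs).div_const 2
    have step1 : (∫ s in Set.Ioc a b, |h s - max (g₀ s) 0|)
        ≤ ∫ s in Set.Ioc a b, ‖ht s - g₀ s‖ := by
      apply setIntegral_mono_on
      · exact ((hint.1.sub hgint).abs)
      · exact ((htint.sub hg₀int).norm).integrableOn
      · exact measurableSet_Ioc
      · intro s hs
        rw [htdef, Set.indicator_of_mem hs]
        rcases le_total 0 (g₀ s) with hc | hc
        · rw [max_eq_left hc, Real.norm_eq_abs]
        · rw [max_eq_right hc, Real.norm_eq_abs, sub_zero]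
          rw [abs_of_nonneg (h0 s)]
          rw [abs_of_nonneg (by linarith [h0 s])]
          linarith [h0 s]
    refine step1.trans (le_trans ?_ hg₀close)
    exact setIntegral_le_integral ((htint.sub hg₀int).norm)
      (Filter.Eventually.of_forall fun s => norm_nonneg _)
  · apply MeasureTheory.Integrable.intervalIntegrable
    have : (fun x => max (g₀ x) 0) = fun x => (g₀ x + |g₀ x|)/2 := by
      funext x
      rcases le_total (g₀ x) 0 with hc | hc
      · rw [abs_of_nonpos hc, max_eq_right hc]; ring
      · rw [abs_of_nonneg hc, max_eq_left hc]; ring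
    rw [this]
    exact (hg₀int.add hg₀int.abs).div_const 2

lemma gronwall_L1 {a b : ℝ} {H g f : ℝ → ℝ} {C : ℝ} (hC : 0 ≤ C)
    (hH : ContinuousOn H (Set.Icc a b))
    (hg : IntervalIntegrable g volume a b) (hg0 : ∀ x, 0 ≤ g x)
    (hf : IntervalIntegrable f volume a b) (hf0 : ∀ x, 0 ≤ f x)
    (hle : ∀ x ∈ Set.Icc a b, H x ≤ C + ∫ s in a..x, (g s * H s + f s)) :
    ∀ x ∈ Set.Icc a b, H x ≤ (C + ∫ s in a..x, f s * Real.exp (-∫ σ in a..s, g σ))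
        * Real.exp (∫ σ in a..x, g σ) := by
  intro x hx
  have hab : a ≤ b := hx.1.trans hx.2
  obtain ⟨M, hM⟩ := isCompact_Icc.exists_bound_of_continuousOn hH
  have hM0 : 0 ≤ M := le_trans (norm_nonneg _) (hM x hx)
  -- Q and target ingredients
  set Q : ℝ → ℝ := fun u => ∫ σ in a..u, g σ with hQdef
  have hQcont : ContinuousOn Q (Set.Icc a b) := by
    have := intervalIntegral.continuousOn_primitive_interval
      (μ := volume) (f := g) (a := a) (b := b)
      (by rw [Set.uIcc_of_le hab]; exact (intervalIntegrable_iff_integrableOn_Icc_of_le hab).1 hg)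
    rwa [Set.uIcc_of_le hab] at this
  have hQ0 : ∀ s ∈ Set.Icc a b, 0 ≤ Q s := fun s hs =>
    intervalIntegral.integral_nonneg hs.1 (fun u _ => hg0 u)
  have hfeQ_int : IntervalIntegrable (fun s => f s * Real.exp (-Q s)) volume a x := by
    apply IntervalIntegrable.mul_continuousOn (hf.mono_set ?_)
    · apply Continuous.comp_continuousOn Real.continuous_exp
      exact (hQcont.mono (by rw [Set.uIcc_of_le hx.1]; exact Set.Icc_subset_Icc le_rfl hx.2)).neg
    · rw [Set.uIcc_of_le hx.1, Set.uIcc_of_le hab]; exact Set.Icc_subset_Icc le_rfl hx.2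
  set I1 : ℝ := ∫ s in a..x, f s * Real.exp (-Q s) with hI1def
  have hI1nonneg : 0 ≤ I1 :=
    intervalIntegral.integral_nonneg hx.1 (fun u _ => mul_nonneg (hf0 u) (Real.exp_nonneg _))
  -- the epsilon-family bound
  set Φ : ℝ → ℝ := fun ε => (C + (M+1)*ε + Real.exp ε * I1 + Real.exp ε * ε)
      * Real.exp (Q x + ε) with hΦdef
  have main : ∀ ε > (0:ℝ), H x ≤ Φ ε := by
    intro ε hε
    obtain ⟨g', hg'c, hg'0, hg'close, hg'int⟩ := approx_cont hab hg hg0 ε hε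
    obtain ⟨f', hf'c, hf'0, hf'close, hf'int⟩ := approx_cont hab hf hf0 ε hε
    -- integrability helpers on subintervals of [a,b]
    have hsub : ∀ u ∈ Set.Icc a b, Set.uIcc a u ⊆ Set.uIcc a b := fun u hu => by
      rw [Set.uIcc_of_le hu.1, Set.uIcc_of_le hab]; exact Set.Icc_subset_Icc le_rfl hu.2
    have hgH : ∀ u ∈ Set.Icc a b, IntervalIntegrable (fun s => g s * H s) volume a u :=
      fun u hu => ((hg.mono_set (hsub u hu)).mul_continuousOn
        (hH.mono (by rw [Set.uIcc_of_le hu.1]; exact Set.Icc_subset_Icc le_rfl hu.2)))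
    have hg'H : ∀ u ∈ Set.Icc a b, IntervalIntegrable (fun s => g' s * H s) volume a u :=
      fun u hu => (((hg'c.intervalIntegrable a u)).mul_continuousOn
        (hH.mono (by rw [Set.uIcc_of_le hu.1]; exact Set.Icc_subset_Icc le_rfl hu.2)))
    have hgg' : IntervalIntegrable (fun s => |g s - g' s|) volume a b :=
      (hg.sub (hg'c.intervalIntegrable a b)).abs
    have hff' : IntervalIntegrable (fun s => |f s - f' s|) volume a b :=
      (hf.sub (hf'c.intervalIntegrable a b)).abs
    -- new Gronwall hypothesis with continuous data
    have hle' : ∀ u ∈ Set.Icc a b, H u ≤ (C + (M+1)*ε) + ∫ s in a..u, (g' s * H s + f' s) := by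
      intro u hu
      have hint2' : IntervalIntegrable (fun s => (g s - g' s) * H s + (f s - f' s)) volume a u := by
        have e1 : (fun s => (g s - g' s) * H s + (f s - f' s))
            = fun s => (g s * H s - g' s * H s) + (f s - f' s) := by funext s; ring
        rw [e1]
        exact ((hgH u hu).sub (hg'H u hu)).add
          ((hf.mono_set (hsub u hu)).sub ((hf'c.intervalIntegrable a u)))
      have split : (∫ s in a..u, (g s * H s + f s))
          = (∫ s in a..u, (g' s * H s + f' s))
            + ∫ s in a..u, ((g s - g' s) * H s + (f s - f' s)) := by
        rw [← intervalIntegral.integral_add ((hg'H u hu).add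
          ((hf'c.intervalIntegrable a u))) hint2']
        congr 1; funext s; ring
      have err : (∫ s in a..u, ((g s - g' s) * H s + (f s - f' s)))
          ≤ (M+1)*ε := by
        have step1 : (∫ s in a..u, ((g s - g' s) * H s + (f s - f' s)))
            ≤ ∫ s in a..u, (|g s - g' s| * M + |f s - f' s|) := by
          apply intervalIntegral.integral_mono_on hu.1
          · exact hint2'
          · exact ((hgg'.mono_set (hsub u hu)).mul_const M).add (hff'.mono_set (hsub u hu))
          · intro s hs
            have h1 : (g s - g' s) * H s ≤ |g s - g' s| * M := by
              calc (g s - g' s) * H s ≤ |(g s - g' s) * H s| := le_abs_self _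
              _ = |g s - g' s| * |H s| := abs_mul _ _
              _ ≤ |g s - g' s| * M := by
                  apply mul_le_mul_of_nonneg_left _ (abs_nonneg _)
                  have := hM s (Set.mem_of_mem_of_subset hs (Set.Icc_subset_Icc le_rfl hu.2))
                  rwa [Real.norm_eq_abs] at this
            have h2 : f s - f' s ≤ |f s - f' s| := le_abs_self _
            linarith
        have step2 : (∫ s in a..u, (|g s - g' s| * M + |f s - f' s|))
            ≤ ∫ s in a..b, (|g s - g' s| * M + |f s - f' s|) := by
          apply intervalIntegral.integral_mono_interval le_rfl hu.1 hu.2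
          · filter_upwards with s
            exact add_nonneg (mul_nonneg (abs_nonneg _) hM0) (abs_nonneg _)
          · exact (hgg'.mul_const M).add hff'
        have step3 : (∫ s in a..b, (|g s - g' s| * M + |f s - f' s|))
            = (∫ s in a..b, |g s - g' s|) * M + ∫ s in a..b, |f s - f' s| := by
          rw [intervalIntegral.integral_add (hgg'.mul_const M) hff',
            intervalIntegral.integral_mul_const]
        have step4 : (∫ s in a..b, |g s - g' s|) * M ≤ ε * M :=
          mul_le_mul_of_nonneg_right hg'close hM0
        have : (∫ s in a..u, (|g s - g' s| * M + |f s - f' s|)) ≤ ε * M + ε :=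
          step2.trans (by rw [step3]; exact add_le_add step4 hf'close)
        refine (step1.trans this).trans (by ring_nf; rfl)
      calc H u ≤ C + ∫ s in a..u, (g s * H s + f s) := hle u hu
        _ = C + ((∫ s in a..u, (g' s * H s + f' s))
            + ∫ s in a..u, ((g s - g' s) * H s + (f s - f' s))) := by rw [split]
        _ ≤ (C + (M+1)*ε) + ∫ s in a..u, (g' s * H s + f' s) := by linarith [err]
    -- apply continuous Gronwall
    have hcg := gronwall_cont hH hg'c hg'0 hf'c hle' x hx
    -- compare Q' to Q
    set Q' : ℝ → ℝ := fun u => ∫ σ in a..u, g' σ with hQ'def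
    have hQQ' : ∀ s ∈ Set.Icc a x, Q' s ≤ Q s + ε ∧ Q s ≤ Q' s + ε := by
      intro s hs
      have hsIcc : s ∈ Set.Icc a b := ⟨hs.1, hs.2.trans hx.2⟩
      have habs : (∫ σ in a..s, |g σ - g' σ|) ≤ ε := by
        refine le_trans ?_ hg'close
        apply intervalIntegral.integral_mono_interval le_rfl hs.1 hsIcc.2
        · filter_upwards with σ; exact abs_nonneg _
        · exact hgg'
      constructor
      · have h1 : Q' s ≤ Q s + ∫ σ in a..s, |g σ - g' σ| := by
          rw [← intervalIntegral.integral_add (hg.mono_set (hsub s hsIcc))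
            (hgg'.mono_set (hsub s hsIcc))]
          apply intervalIntegral.integral_mono_on hs.1
            ((hg'c.intervalIntegrable a s))
            ((hg.mono_set (hsub s hsIcc)).add (hgg'.mono_set (hsub s hsIcc)))
          intro σ _
          have := abs_sub_abs_le_abs_sub (g σ) (g' σ)
          have h2 := neg_abs_le (g σ - g' σ)
          linarith [abs_nonneg (g σ - g' σ)]
        linarith
      · have h1 : Q s ≤ Q' s + ∫ σ in a..s, |g σ - g' σ| := by
          rw [← intervalIntegral.integral_add ((hg'c.intervalIntegrable a s))
            (hgg'.mono_set (hsub s hsIcc))]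
          apply intervalIntegral.integral_mono_on hs.1
            (hg.mono_set (hsub s hsIcc))
            (((hg'c.intervalIntegrable a s)).add (hgg'.mono_set (hsub s hsIcc)))
          intro σ _
          have := le_abs_self (g σ - g' σ)
          linarith
        linarith
    -- compare the f' integral
    have hint2 : (∫ s in a..x, f' s * Real.exp (-Q' s))
        ≤ Real.exp ε * I1 + Real.exp ε * ε := by
      have pw : ∀ s ∈ Set.Icc a x, f' s * Real.exp (-Q' s)
          ≤ Real.exp ε * (f s * Real.exp (-Q s)) + Real.exp ε * |f s - f' s| := by
        intro s hs
        have h1 : Real.exp (-Q' s) ≤ Real.exp ε * Real.exp (-Q s) := by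
          rw [← Real.exp_add]
          apply Real.exp_le_exp.2
          linarith [(hQQ' s hs).2]
        have h2 : f' s ≤ f s + |f s - f' s| := by
          have := neg_abs_le (f s - f' s); linarith
        have h3 : Real.exp (-Q s) ≤ 1 := by
          rw [← Real.exp_zero]
          apply Real.exp_le_exp.2
          have := hQ0 s ⟨hs.1, hs.2.trans hx.2⟩; linarith
        calc f' s * Real.exp (-Q' s) ≤ f' s * (Real.exp ε * Real.exp (-Q s)) := by
              apply mul_le_mul_of_nonneg_left h1 (hf'0 s)
          _ ≤ (f s + |f s - f' s|) * (Real.exp ε * Real.exp (-Q s)) := by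
              apply mul_le_mul_of_nonneg_right h2
                (mul_nonneg (Real.exp_nonneg _) (Real.exp_nonneg _))
          _ = Real.exp ε * (f s * Real.exp (-Q s))
              + Real.exp ε * (|f s - f' s| * Real.exp (-Q s)) := by ring
          _ ≤ Real.exp ε * (f s * Real.exp (-Q s)) + Real.exp ε * |f s - f' s| := by
              have : |f s - f' s| * Real.exp (-Q s) ≤ |f s - f' s| := by
                calc |f s - f' s| * Real.exp (-Q s) ≤ |f s - f' s| * 1 :=
                  mul_le_mul_of_nonneg_left h3 (abs_nonneg _)
                _ = |f s - f' s| := mul_one _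
              linarith [mul_le_mul_of_nonneg_left this (Real.exp_nonneg ε)]
      have hxIcc : Set.uIcc a x ⊆ Set.uIcc a b := hsub x hx
      have int_mono := intervalIntegral.integral_mono_on (μ := volume) hx.1 ?_ ?_ pw
      · have split : (∫ s in a..x, (Real.exp ε * (f s * Real.exp (-Q s))
            + Real.exp ε * |f s - f' s|))
            = Real.exp ε * I1 + Real.exp ε * (∫ s in a..x, |f s - f' s|) := by
          rw [intervalIntegral.integral_add ((hfeQ_int).const_mul _)
            ((hff'.mono_set hxIcc).const_mul _), intervalIntegral.integral_const_mul,
            intervalIntegral.integral_const_mul]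
        have hclose : (∫ s in a..x, |f s - f' s|) ≤ ε := by
          refine le_trans ?_ hf'close
          apply intervalIntegral.integral_mono_interval le_rfl hx.1 hx.2
          · filter_upwards with σ; exact abs_nonneg _
          · exact hff'
        refine int_mono.trans ?_
        rw [split]
        have := mul_le_mul_of_nonneg_left hclose (Real.exp_nonneg ε)
        linarith
      · -- integrability LHS: continuous
        have : Continuous fun s => f' s * Real.exp (-Q' s) := by
          apply hf'c.mul
          apply Real.continuous_exp.comp
          apply Continuous.neg
          exact continuous_iff_continuousAt.2 fun u =>
            ((integral_hasDerivAt_right (hg'c.intervalIntegrable a u)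
              (hg'c.stronglyMeasurableAtFilter _ _) hg'c.continuousAt).differentiableAt).continuousAt
        exact this.intervalIntegrable a x
      · exact ((hfeQ_int).const_mul _).add ((hff'.mono_set hxIcc).const_mul _)
    -- assemble
    have hA_nonneg : 0 ≤ (C + (M+1)*ε) + ∫ s in a..x, f' s * Real.exp (-Q' s) := by
      have h1 : 0 ≤ (∫ s in a..x, f' s * Real.exp (-Q' s)) :=
        intervalIntegral.integral_nonneg hx.1
          (fun u _ => mul_nonneg (hf'0 u) (Real.exp_nonneg _))
      have h2 : 0 ≤ (M+1)*ε := mul_nonneg (by linarith) hε.le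
      linarith
    have hexp : Real.exp (Q' x) ≤ Real.exp (Q x + ε) :=
      Real.exp_le_exp.2 ((hQQ' x ⟨hx.1, le_rfl⟩).1)
    calc H x ≤ ((C + (M+1)*ε) + ∫ s in a..x, f' s * Real.exp (-Q' s))
          * Real.exp (∫ σ in a..x, g' σ) := hcg
      _ ≤ (C + (M+1)*ε + (Real.exp ε * I1 + Real.exp ε * ε)) * Real.exp (Q x + ε) := by
          apply mul_le_mul (by linarith [hint2]) hexp (Real.exp_nonneg _)
          linarith [hint2, hA_nonneg]
      _ = Φ ε := by rw [hΦdef]; ring_nf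
  -- take the limit
  have hΦcont : Continuous Φ := by
    rw [hΦdef]
    exact (((continuous_const.add (continuous_const.mul continuous_id)).add
      (Real.continuous_exp.mul continuous_const)).add
      (Real.continuous_exp.mul continuous_id)).mul
      (Real.continuous_exp.comp (continuous_const.add continuous_id))
  have hlim : Filter.Tendsto Φ (nhdsWithin 0 (Set.Ioi 0)) (nhds (Φ 0)) :=
    (hΦcont.tendsto 0).mono_left nhdsWithin_le_nhds
  have hΦ0 : Φ 0 = (C + I1) * Real.exp (Q x) := by
    rw [hΦdef]; simp
  have : H x ≤ Φ 0 := by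
    refine ge_of_tendsto hlim ?_
    filter_upwards [self_mem_nhdsWithin] with ε hε
    exact main ε hε
  rwa [hΦ0] at this

lemma swap_core {l u : ℝ} (hlu : l ≤ u) {φ g : ℝ → ℂ}
    (hφ : IntervalIntegrable φ volume l u) (hg : Continuous g) :
    ∫ s in l..u, g s * (∫ σ in l..s, φ σ) = ∫ σ in l..u, φ σ * (∫ s in σ..u, g s) := by
  set μ := volume.restrict (Set.Ioc l u) with hμ
  have hφi : Integrable φ μ := (intervalIntegrable_iff_integrableOn_Ioc_of_le hlu).1 hφ
  have hgi : Integrable g μ := hg.integrableOn_Ioc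
  set K : ℝ → ℝ → ℂ := fun s σ => if σ ≤ s then g s * φ σ else 0 with hK
  have hKint : Integrable (Function.uncurry K) (μ.prod μ) := by
    have hE : MeasurableSet {p : ℝ × ℝ | p.2 ≤ p.1} :=
      measurableSet_le measurable_snd measurable_fst
    have heq : Function.uncurry K
        = Set.indicator {p : ℝ × ℝ | p.2 ≤ p.1} (fun p => g p.1 * φ p.2) := by
      funext p
      by_cases h : p.2 ≤ p.1
      · simp [Function.uncurry, hK, h, Set.indicator_of_mem, Set.mem_setOf_eq]
      · simp [Function.uncurry, hK, h, Set.indicator_of_notMem, Set.mem_setOf_eq]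
    rw [heq]
    exact (hgi.mul_prod hφi).indicator hE
  have stepB : ∀ s ∈ Set.Ioc l u, g s * (∫ σ in l..s, φ σ) = ∫ σ, K s σ ∂μ := by
    intro s hs
    have h1 : (fun σ => K s σ) = (Set.Iic s).indicator (fun σ => g s * φ σ) := by
      funext σ
      by_cases h : σ ≤ s
      · simp [hK, h, Set.indicator_of_mem, Set.mem_Iic]
      · simp [hK, h, Set.indicator_of_notMem, Set.mem_Iic]
    rw [h1, hμ, setIntegral_indicator measurableSet_Iic, Set.Ioc_inter_Iic,
      min_eq_right hs.2, MeasureTheory.integral_const_mul,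
      intervalIntegral.integral_of_le hs.1.le]
  have stepE : ∀ σ ∈ Set.Ioc l u, (∫ s, K s σ ∂μ) = φ σ * (∫ s in σ..u, g s) := by
    intro σ hσ
    have h1 : (fun s => K s σ) = (Set.Ici σ).indicator (fun s => g s * φ σ) := by
      funext s
      by_cases h : σ ≤ s
      · simp [hK, h, Set.indicator_of_mem, Set.mem_Ici]
      · simp [hK, h, Set.indicator_of_notMem, Set.mem_Ici]
    have h2 : Set.Ioc l u ∩ Set.Ici σ = Set.Icc σ u := by
      ext s
      simp only [Set.mem_inter_iff, Set.mem_Ioc, Set.mem_Ici, Set.mem_Icc]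
      constructor
      · rintro ⟨⟨_, h2⟩, h3⟩; exact ⟨h3, h2⟩
      · rintro ⟨h1, h2⟩; exact ⟨⟨lt_of_lt_of_le hσ.1 h1, h2⟩, h1⟩
    rw [h1, hμ, setIntegral_indicator measurableSet_Ici, h2,
      MeasureTheory.integral_mul_const, integral_Icc_eq_integral_Ioc,
      ← intervalIntegral.integral_of_le hσ.2, mul_comm]
  calc ∫ s in l..u, g s * (∫ σ in l..s, φ σ)
      = ∫ s, g s * (∫ σ in l..s, φ σ) ∂μ := intervalIntegral.integral_of_le hlu
    _ = ∫ s, (∫ σ, K s σ ∂μ) ∂μ := setIntegral_congr_fun measurableSet_Ioc stepB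
    _ = ∫ σ, (∫ s, K s σ ∂μ) ∂μ := integral_integral_swap hKint
    _ = ∫ σ, φ σ * (∫ s in σ..u, g s) ∂μ := setIntegral_congr_fun measurableSet_Ioc stepE
    _ = ∫ σ in l..u, φ σ * (∫ s in σ..u, g s) := (intervalIntegral.integral_of_le hlu).symm

lemma swap_core' {l u : ℝ} (hlu : l ≤ u) {φ g : ℝ → ℂ}
    (hφ : IntervalIntegrable φ volume l u) (hg : Continuous g) :
    ∫ s in l..u, g s * (∫ σ in s..u, φ σ) = ∫ σ in l..u, φ σ * (∫ s in l..σ, g s) := by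
  set μ := volume.restrict (Set.Ioc l u) with hμ
  have hφi : Integrable φ μ := (intervalIntegrable_iff_integrableOn_Ioc_of_le hlu).1 hφ
  have hgi : Integrable g μ := hg.integrableOn_Ioc
  set K : ℝ → ℝ → ℂ := fun s σ => if s ≤ σ then g s * φ σ else 0 with hK
  have hKint : Integrable (Function.uncurry K) (μ.prod μ) := by
    have hE : MeasurableSet {p : ℝ × ℝ | p.1 ≤ p.2} :=
      measurableSet_le measurable_fst measurable_snd
    have heq : Function.uncurry K
        = Set.indicator {p : ℝ × ℝ | p.1 ≤ p.2} (fun p => g p.1 * φ p.2) := by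
      funext p
      by_cases h : p.1 ≤ p.2
      · simp [Function.uncurry, hK, h, Set.indicator_of_mem, Set.mem_setOf_eq]
      · simp [Function.uncurry, hK, h, Set.indicator_of_notMem, Set.mem_setOf_eq]
    rw [heq]
    exact (hgi.mul_prod hφi).indicator hE
  have stepB : ∀ s ∈ Set.Ioc l u, g s * (∫ σ in s..u, φ σ) = ∫ σ, K s σ ∂μ := by
    intro s hs
    have h1 : (fun σ => K s σ) = (Set.Ici s).indicator (fun σ => g s * φ σ) := by
      funext σ
      by_cases h : s ≤ σ
      · simp [hK, h, Set.indicator_of_mem, Set.mem_Ici]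
      · simp [hK, h, Set.indicator_of_notMem, Set.mem_Ici]
    have h2 : Set.Ioc l u ∩ Set.Ici s = Set.Icc s u := by
      ext σ
      simp only [Set.mem_inter_iff, Set.mem_Ioc, Set.mem_Ici, Set.mem_Icc]
      constructor
      · rintro ⟨⟨_, h2⟩, h3⟩; exact ⟨h3, h2⟩
      · rintro ⟨h1, h2⟩; exact ⟨⟨lt_of_lt_of_le hs.1 h1, h2⟩, h1⟩
    rw [h1, hμ, setIntegral_indicator measurableSet_Ici, h2,
      MeasureTheory.integral_const_mul, integral_Icc_eq_integral_Ioc,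
      ← intervalIntegral.integral_of_le hs.2]
  have stepE : ∀ σ ∈ Set.Ioc l u, (∫ s, K s σ ∂μ) = φ σ * (∫ s in l..σ, g s) := by
    intro σ hσ
    have h1 : (fun s => K s σ) = (Set.Iic σ).indicator (fun s => g s * φ σ) := by
      funext s
      by_cases h : s ≤ σ
      · simp [hK, h, Set.indicator_of_mem, Set.mem_Iic]
      · simp [hK, h, Set.indicator_of_notMem, Set.mem_Iic]
    rw [h1, hμ, setIntegral_indicator measurableSet_Iic, Set.Ioc_inter_Iic,
      min_eq_right hσ.2, MeasureTheory.integral_mul_const,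
      ← intervalIntegral.integral_of_le hσ.1.le, mul_comm]
  calc ∫ s in l..u, g s * (∫ σ in s..u, φ σ)
      = ∫ s, g s * (∫ σ in s..u, φ σ) ∂μ := intervalIntegral.integral_of_le hlu
    _ = ∫ s, (∫ σ, K s σ ∂μ) ∂μ := setIntegral_congr_fun measurableSet_Ioc stepB
    _ = ∫ σ, (∫ s, K s σ ∂μ) ∂μ := integral_integral_swap hKint
    _ = ∫ σ, φ σ * (∫ s in l..σ, g s) ∂μ := setIntegral_congr_fun measurableSet_Ioc stepE
    _ = ∫ σ in l..u, φ σ * (∫ s in l..σ, g s) := (intervalIntegral.integral_of_le hlu).symm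

lemma swap_tri {c x : ℝ} {φ g : ℝ → ℂ}
    (hφ : IntervalIntegrable φ volume c x) (hg : Continuous g) :
    ∫ s in c..x, g s * (∫ σ in c..s, φ σ) = ∫ σ in c..x, φ σ * (∫ s in σ..x, g s) := by
  rcases le_total c x with h | h
  · exact swap_core h hφ hg
  · -- x ≤ c
    have e1 : (∫ s in c..x, g s * (∫ σ in c..s, φ σ))
        = ∫ s in x..c, g s * (∫ σ in s..c, φ σ) := by
      rw [intervalIntegral.integral_symm]
      rw [show (fun s => g s * (∫ σ in c..s, φ σ))
          = fun s => -(g s * (∫ σ in s..c, φ σ)) from funext fun s => by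
        rw [intervalIntegral.integral_symm]; ring]
      rw [intervalIntegral.integral_neg]; ring
    have e2 : (∫ σ in c..x, φ σ * (∫ s in σ..x, g s))
        = ∫ σ in x..c, φ σ * (∫ s in x..σ, g s) := by
      rw [intervalIntegral.integral_symm]
      rw [show (fun σ => φ σ * (∫ s in σ..x, g s))
          = fun σ => -(φ σ * (∫ s in x..σ, g s)) from funext fun σ => by
        rw [intervalIntegral.integral_symm]; ring]
      rw [intervalIntegral.integral_neg]; ring
    rw [e1, e2]
    exact swap_core' h hφ.symm hg

lemma gronwall_L1_bwd {a b : ℝ} {H g f : ℝ → ℝ} {C : ℝ} (hC : 0 ≤ C)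
    (hH : ContinuousOn H (Set.Icc a b))
    (hg : IntervalIntegrable g volume a b) (hg0 : ∀ x, 0 ≤ g x)
    (hf : IntervalIntegrable f volume a b) (hf0 : ∀ x, 0 ≤ f x)
    (hle : ∀ x ∈ Set.Icc a b, H x ≤ C + ∫ s in x..b, (g s * H s + f s)) :
    ∀ x ∈ Set.Icc a b, H x ≤ (C + ∫ s in x..b, f s * Real.exp (-∫ σ in s..b, g σ))
        * Real.exp (∫ σ in x..b, g σ) := by
  intro x hx
  have hab : a ≤ b := hx.1.trans hx.2
  have hrmem : ∀ u ∈ Set.Icc a b, a + b - u ∈ Set.Icc a b := fun u hu =>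
    ⟨by linarith [hu.2], by linarith [hu.1]⟩
  have hrcont : Continuous (fun u : ℝ => a + b - u) := continuous_const.sub continuous_id
  -- reflected data
  have hHr : ContinuousOn (fun u => H (a + b - u)) (Set.Icc a b) :=
    hH.comp hrcont.continuousOn (fun u hu => hrmem u hu)
  have hgr : IntervalIntegrable (fun u => g (a + b - u)) volume a b := by
    have := hg.comp_sub_left (a + b)
    rw [add_sub_cancel_left, add_sub_cancel_right] at this
    exact this.symm
  have hfr : IntervalIntegrable (fun u => f (a + b - u)) volume a b := by
    have := hf.comp_sub_left (a + b)
    rw [add_sub_cancel_left, add_sub_cancel_right] at this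
    exact this.symm
  have hler : ∀ u ∈ Set.Icc a b, (fun u => H (a + b - u)) u
      ≤ C + ∫ s in a..u, ((fun s => g (a + b - s)) s * (fun s => H (a + b - s)) s
        + (fun s => f (a + b - s)) s) := by
    intro u hu
    have key : (∫ s in a..u, (g (a + b - s) * H (a + b - s) + f (a + b - s)))
        = ∫ s in (a + b - u)..b, (g s * H s + f s) := by
      have := intervalIntegral.integral_comp_sub_left
        (fun s => g s * H s + f s) (a + b) (a := a) (b := u)
      rw [add_sub_cancel_left] at this
      exact this
    simpa [key] using hle (a + b - u) (hrmem u hu)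
  have main := gronwall_L1 hC hHr hgr
    (fun u => hg0 _) hfr (fun u => hf0 _) hler (a + b - x) (hrmem x hx)
  -- transport back
  have h1 : a + b - (a + b - x) = x := by ring
  rw [h1] at main
  have h2 : (∫ σ in a..(a + b - x), g (a + b - σ)) = ∫ σ in x..b, g σ := by
    have := intervalIntegral.integral_comp_sub_left g (a + b) (a := a) (b := a + b - x)
    rw [add_sub_cancel_left] at this
    rw [this, h1]
  have h3 : (∫ s in a..(a + b - x), f (a + b - s)
        * Real.exp (-∫ σ in a..s, g (a + b - σ)))
      = ∫ s in x..b, f s * Real.exp (-∫ σ in s..b, g σ) := by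
    have e1 : (fun s => f (a + b - s) * Real.exp (-∫ σ in a..s, g (a + b - σ)))
        = fun s => f (a + b - s) * Real.exp (-∫ σ in (a + b - s)..b, g σ) := by
      funext s
      congr 2
      have := intervalIntegral.integral_comp_sub_left g (a + b) (a := a) (b := s)
      rw [add_sub_cancel_left] at this
      rw [this]
    rw [e1]
    have := intervalIntegral.integral_comp_sub_left
      (fun v => f v * Real.exp (-∫ σ in v..b, g σ)) (a + b) (a := a) (b := a + b - x)
    rw [add_sub_cancel_left, h1] at this
    exact this
  rw [h2, h3] at main
  exact main

lemma contOn_primitive {E : Type*} [NormedAddCommGroup E] [NormedSpace ℝ E]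
    {a b c : ℝ} (hc : c ∈ Set.Icc a b) {ψ : ℝ → E}
    (hψ : IntervalIntegrable ψ volume a b) :
    ContinuousOn (fun s => ∫ σ in c..s, ψ σ) (Set.Icc a b) := by
  have hab : a ≤ b := hc.1.trans hc.2
  have hmem : ∀ u ∈ Set.Icc a b, IntervalIntegrable ψ volume a u := fun u hu =>
    hψ.mono_set (by rw [Set.uIcc_of_le hu.1, Set.uIcc_of_le hab]
                    exact Set.Icc_subset_Icc le_rfl hu.2)
  have base : ContinuousOn (fun s => ∫ σ in a..s, ψ σ) (Set.Icc a b) := by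
    have := intervalIntegral.continuousOn_primitive_interval
      (μ := volume) (f := ψ) (a := a) (b := b)
      (by rw [Set.uIcc_of_le hab]
          exact (intervalIntegrable_iff_integrableOn_Icc_of_le hab).1 hψ)
    rwa [Set.uIcc_of_le hab] at this
  have heq : ∀ s ∈ Set.Icc a b, (∫ σ in a..s, ψ σ) - (∫ σ in a..c, ψ σ)
      = (∫ σ in c..s, ψ σ) := fun s hs =>
    intervalIntegral.integral_interval_sub_left (hmem s hs) (hmem c hc)
  exact ContinuousOn.congr (base.sub continuousOn_const) (fun s hs => (heq s hs).symm)

lemma volterra_rep {a b c : ℝ} (hc : c ∈ Set.Icc a b) {α : ℂ} (hα : α ≠ 0)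
    {r F : ℝ → ℂ} (hr : ContinuousOn r (Set.Icc a b))
    (hF : IntervalIntegrable F volume a b)
    (heq : ∀ x ∈ Set.Icc a b, r x = r c + ∫ s in c..x, (F s + α * r s)) :
    ∀ x ∈ Set.Icc a b, r x = Complex.exp (α * x) *
      (Complex.exp (-(α * c)) * r c + ∫ σ in c..x, Complex.exp (-(α * σ)) * F σ) := by
  have hab : a ≤ b := hc.1.trans hc.2
  have hsub : ∀ u ∈ Set.Icc a b, Set.uIcc c u ⊆ Set.uIcc a b := fun u hu => by
    rw [Set.uIcc_of_le hab]
    exact Set.uIcc_subset_Icc hc hu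
  have hE1 : Continuous (fun s : ℝ => Complex.exp (α * s)) :=
    Complex.continuous_exp.comp (continuous_const.mul Complex.continuous_ofReal)
  have hE1' : Continuous (fun s : ℝ => Complex.exp (-(α * s))) :=
    Complex.continuous_exp.comp ((continuous_const.mul Complex.continuous_ofReal).neg)
  set ψ : ℝ → ℂ := fun σ => Complex.exp (-(α * σ)) * F σ with hψdef
  have hψint : IntervalIntegrable ψ volume a b := hF.continuousOn_mul hE1'.continuousOn
  set V : ℝ → ℂ := fun s => ∫ σ in c..s, ψ σ with hVdef
  have hVcont : ContinuousOn V (Set.Icc a b) := contOn_primitive hc hψint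
  set A : ℂ := Complex.exp (-(α * c)) * r c with hAdef
  set D : ℝ → ℂ := fun s => r s - Complex.exp (α * s) * (A + V s) with hDdef
  have hDcont : ContinuousOn D (Set.Icc a b) :=
    hr.sub (hE1.continuousOn.mul (continuousOn_const.add hVcont))
  have key : ∀ s ∈ Set.Icc a b, D s = α * ∫ σ in c..s, D σ := by
    intro s hs
    have hIccsub : Set.Icc (min c s) (max c s) ⊆ Set.Icc a b := Set.uIcc_subset_Icc hc hs
    have hFcs : IntervalIntegrable F volume c s := hF.mono_set (hsub s hs)
    have hψcs : IntervalIntegrable ψ volume c s := hψint.mono_set (hsub s hs)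
    have hrcs : IntervalIntegrable r volume c s := (hr.mono hIccsub).intervalIntegrable
    have hVcs : ContinuousOn V (Set.uIcc c s) := hVcont.mono hIccsub
    have hE1AVcs : IntervalIntegrable (fun σ => Complex.exp (α * σ) * (A + V σ)) volume c s :=
      (hE1.continuousOn.mul (continuousOn_const.add hVcs)).intervalIntegrable
    have hE1Vcs : IntervalIntegrable (fun σ => Complex.exp (α * σ) * V σ) volume c s :=
      (hE1.continuousOn.mul hVcs).intervalIntegrable
    -- T1 : α ∫ exp(ασ) = exp(αs) - exp(αc)
    have hT1 : α * (∫ σ in c..s, Complex.exp (α * σ))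
        = Complex.exp (α * s) - Complex.exp (α * c) := by
      rw [integral_exp_mul_complex hα]
      field_simp
    -- T3
    have hT3 : α * (∫ σ in c..s, Complex.exp (α * σ) * V σ)
        = Complex.exp (α * s) * V s - ∫ σ in c..s, F σ := by
      have e1 : α * (∫ σ in c..s, Complex.exp (α * σ) * V σ)
          = ∫ σ in c..s, (fun σ : ℝ => α * Complex.exp (α * σ)) σ * (∫ τ in c..σ, ψ τ) := by
        rw [← intervalIntegral.integral_const_mul]
        congr 1; funext σ; rw [hVdef]; ring
      have e2 := swap_tri (c := c) (x := s) (g := fun σ : ℝ => α * Complex.exp (α * σ)) hψcs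
        ((continuous_const.mul hE1) : Continuous fun σ : ℝ => α * Complex.exp (α * σ))
      have e3 : ∀ τ : ℝ, ψ τ * (∫ σ in τ..s, α * Complex.exp (α * σ))
          = Complex.exp (α * s) * ψ τ - F τ := by
        intro τ
        have : (∫ σ in τ..s, α * Complex.exp (α * σ))
            = Complex.exp (α * s) - Complex.exp (α * τ) := by
          rw [intervalIntegral.integral_const_mul, integral_exp_mul_complex hα]
          field_simp
        rw [this, hψdef]
        have hcancel : Complex.exp (-(α * τ)) * Complex.exp (α * τ) = 1 := by
          rw [← Complex.exp_add]; simp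
        calc Complex.exp (-(α * τ)) * F τ * (Complex.exp (α * s) - Complex.exp (α * τ))
            = Complex.exp (α * s) * (Complex.exp (-(α * τ)) * F τ)
              - (Complex.exp (-(α * τ)) * Complex.exp (α * τ)) * F τ := by ring
          _ = Complex.exp (α * s) * (Complex.exp (-(α * τ)) * F τ) - F τ := by
              rw [hcancel]; ring
      have e4 : (∫ τ in c..s, ψ τ * (∫ σ in τ..s, α * Complex.exp (α * σ)))
          = Complex.exp (α * s) * V s - ∫ τ in c..s, F τ := by
        rw [show (fun τ => ψ τ * (∫ σ in τ..s, α * Complex.exp (α * σ)))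
            = fun τ => Complex.exp (α * s) * ψ τ - F τ from funext e3]
        rw [intervalIntegral.integral_sub (hψcs.const_mul _) hFcs,
          intervalIntegral.integral_const_mul]
      rw [e1, e2, e4]
    -- split ∫ D
    have hsplit : α * (∫ σ in c..s, D σ)
        = α * (∫ σ in c..s, r σ) - (A * (Complex.exp (α * s) - Complex.exp (α * c))
          + (Complex.exp (α * s) * V s - ∫ σ in c..s, F σ)) := by
      have e5 : (∫ σ in c..s, D σ)
          = (∫ σ in c..s, r σ) - ∫ σ in c..s, Complex.exp (α * σ) * (A + V σ) := by
        rw [hDdef, intervalIntegral.integral_sub hrcs hE1AVcs]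
      have e6 : (∫ σ in c..s, Complex.exp (α * σ) * (A + V σ))
          = A * (∫ σ in c..s, Complex.exp (α * σ)) + ∫ σ in c..s, Complex.exp (α * σ) * V σ := by
        rw [← intervalIntegral.integral_const_mul,
          ← intervalIntegral.integral_add ((hE1.intervalIntegrable c s).const_mul A) hE1Vcs]
        congr 1; funext σ; ring
      rw [e5, e6]
      linear_combination (-A) * hT1 - hT3
    -- the equation from heq
    have e7 : r s = r c + ((∫ σ in c..s, F σ) + α * ∫ σ in c..s, r σ) := by
      rw [heq s hs, intervalIntegral.integral_add hFcs (hrcs.const_mul α),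
        intervalIntegral.integral_const_mul]
    have e8 : A * Complex.exp (α * c) = r c := by
      rw [hAdef, mul_comm (Complex.exp (-(α * c))) (r c), mul_assoc, ← Complex.exp_add]
      simp
    have goal' : r s - Complex.exp (α * s) * (A + V s) = α * ∫ σ in c..s, D σ := by
      rw [hsplit]
      linear_combination e7 - e8
    exact goal'
  -- Gronwall: D ≡ 0
  have hzero : ∀ x ∈ Set.Icc a b, D x = 0 := by
    intro x hx
    rcases le_total c x with hcx | hcx
    · have hIcc : Set.Icc c x ⊆ Set.Icc a b := Set.Icc_subset_Icc hc.1 hx.2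
      have hN : ContinuousOn (fun s => ‖D s‖) (Set.Icc c x) := (hDcont.mono hIcc).norm
      have hle' : ∀ s ∈ Set.Icc c x, ‖D s‖
          ≤ 0 + ∫ σ in c..s, ((fun _ => ‖α‖) σ * ‖D σ‖ + (fun _ => (0:ℝ)) σ) := by
        intro s hs
        have h1 : ‖D s‖ = ‖α‖ * ‖∫ σ in c..s, D σ‖ := by
          rw [key s (hIcc hs)]; exact norm_mul _ _
        have h2 : ‖∫ σ in c..s, D σ‖ ≤ ∫ σ in c..s, ‖D σ‖ :=
          intervalIntegral.norm_integral_le_integral_norm hs.1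
        have h3 : (∫ σ in c..s, ((fun _ => ‖α‖) σ * ‖D σ‖ + (fun _ => (0:ℝ)) σ))
            = ‖α‖ * ∫ σ in c..s, ‖D σ‖ := by
          simp only [add_zero]
          exact intervalIntegral.integral_const_mul _ _
        rw [h3, zero_add, h1]
        exact mul_le_mul_of_nonneg_left h2 (norm_nonneg α)
      have := gronwall_L1 (a := c) (b := x) (C := 0) le_rfl hN
        (continuous_const.intervalIntegrable c x) (fun _ => norm_nonneg α)
        (continuous_const.intervalIntegrable c x) (fun _ => le_rfl) hle' x
        (Set.right_mem_Icc.2 hcx)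
      simp only [zero_mul, intervalIntegral.integral_zero, zero_add, add_zero] at this
      have h0 : ‖D x‖ ≤ 0 := by
        calc ‖D x‖ ≤ (0 + ∫ s in c..x, (0:ℝ) * Real.exp (-∫ σ in c..s, ‖α‖))
            * Real.exp (∫ σ in c..x, ‖α‖) := by
              simpa using gronwall_L1 (a := c) (b := x) (C := 0) le_rfl hN
                (continuous_const.intervalIntegrable c x) (fun _ => norm_nonneg α)
                (continuous_const.intervalIntegrable c x) (fun _ => le_rfl) hle' x
                (Set.right_mem_Icc.2 hcx)
        _ = 0 := by simp
      exact norm_le_zero_iff.1 h0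
    · have hIcc : Set.Icc x c ⊆ Set.Icc a b := Set.Icc_subset_Icc hx.1 hc.2
      have hN : ContinuousOn (fun s => ‖D s‖) (Set.Icc x c) := (hDcont.mono hIcc).norm
      have hle' : ∀ s ∈ Set.Icc x c, ‖D s‖
          ≤ 0 + ∫ σ in s..c, ((fun _ => ‖α‖) σ * ‖D σ‖ + (fun _ => (0:ℝ)) σ) := by
        intro s hs
        have h1 : ‖D s‖ = ‖α‖ * ‖∫ σ in c..s, D σ‖ := by
          rw [key s (hIcc hs)]; exact norm_mul _ _
        have h1' : ‖∫ σ in c..s, D σ‖ = ‖∫ σ in s..c, D σ‖ := by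
          rw [intervalIntegral.integral_symm]; exact norm_neg _
        have h2 : ‖∫ σ in s..c, D σ‖ ≤ ∫ σ in s..c, ‖D σ‖ :=
          intervalIntegral.norm_integral_le_integral_norm hs.2
        have h3 : (∫ σ in s..c, ((fun _ => ‖α‖) σ * ‖D σ‖ + (fun _ => (0:ℝ)) σ))
            = ‖α‖ * ∫ σ in s..c, ‖D σ‖ := by
          simp only [add_zero]
          exact intervalIntegral.integral_const_mul _ _
        rw [h3, zero_add, h1, h1']
        exact mul_le_mul_of_nonneg_left h2 (norm_nonneg α)
      have h0 : ‖D x‖ ≤ 0 := by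
        calc ‖D x‖ ≤ (0 + ∫ s in x..c, (0:ℝ) * Real.exp (-∫ σ in s..c, ‖α‖))
            * Real.exp (∫ σ in x..c, ‖α‖) := by
              simpa using gronwall_L1_bwd (a := x) (b := c) (C := 0) le_rfl hN
                (continuous_const.intervalIntegrable x c) (fun _ => norm_nonneg α)
                (continuous_const.intervalIntegrable x c) (fun _ => le_rfl) hle' x
                (Set.left_mem_Icc.2 hcx)
        _ = 0 := by simp
      exact norm_le_zero_iff.1 h0
  intro x hx
  have := hzero x hx
  rw [hDdef, sub_eq_zero] at this
  exact this

-- norm facts for the r/w substitution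
lemma norm_exp_mul (β : ℂ) (u : ℝ) : ‖Complex.exp (β * u)‖ = Real.exp (β.re * u) := by
  rw [Complex.norm_exp]
  congr 1
  simp [Complex.mul_re]

lemma zy_le_max {z u v : ℂ} :
    ‖z‖ * ‖v‖ ≤ max ‖u + Complex.I * z * v‖ ‖u - Complex.I * z * v‖ := by
  have h1 : (u + Complex.I * z * v) - (u - Complex.I * z * v) = 2 * (Complex.I * z * v) := by ring
  have h2 : ‖(2 : ℂ) * (Complex.I * z * v)‖ = 2 * (‖z‖ * ‖v‖) := by
    simp [norm_mul, Complex.norm_I]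
  have h3 := norm_sub_le (u + Complex.I * z * v) (u - Complex.I * z * v)
  rw [h1, h2] at h3
  have h4 : ‖u + Complex.I * z * v‖ ≤ max ‖u + Complex.I * z * v‖ ‖u - Complex.I * z * v‖ :=
    le_max_left _ _
  have h5 : ‖u - Complex.I * z * v‖ ≤ max ‖u + Complex.I * z * v‖ ‖u - Complex.I * z * v‖ :=
    le_max_right _ _
  linarith

lemma u_le_max {z u v : ℂ} :
    ‖u‖ ≤ max ‖u + Complex.I * z * v‖ ‖u - Complex.I * z * v‖ := by
  have h1 : (u + Complex.I * z * v) + (u - Complex.I * z * v) = 2 * u := by ring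
  have h2 : ‖(2 : ℂ) * u‖ = 2 * ‖u‖ := by simp [norm_mul]
  have h3 := norm_add_le (u + Complex.I * z * v) (u - Complex.I * z * v)
  rw [h1, h2] at h3
  have h4 := le_max_left ‖u + Complex.I * z * v‖ ‖u - Complex.I * z * v‖
  have h5 := le_max_right ‖u + Complex.I * z * v‖ ‖u - Complex.I * z * v‖
  linarith

lemma rep_norm_bound {a b : ℝ} {α : ℂ} {μ : ℝ} (hμ : |α.re| ≤ μ) {r F : ℝ → ℂ}
    (hF : IntervalIntegrable F volume a b)
    (hrep : ∀ x ∈ Set.Icc a b, r x = Complex.exp (α * x) *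
      (Complex.exp (-(α * a)) * r a + ∫ σ in a..x, Complex.exp (-(α * σ)) * F σ)) :
    ∀ x ∈ Set.Icc a b, ‖r x‖ * Real.exp (-(μ * (x - a)))
      ≤ ‖r a‖ + ∫ σ in a..x, Real.exp (-(μ * (σ - a))) * ‖F σ‖ := by
  intro x hx
  have hab : a ≤ b := hx.1.trans hx.2
  have hax : a ≤ x := hx.1
  have hFn : IntervalIntegrable (fun σ => ‖F σ‖) volume a x :=
    (hF.norm).mono_set (by rw [Set.uIcc_of_le hax, Set.uIcc_of_le hab]
                           exact Set.Icc_subset_Icc le_rfl hx.2)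
  have hcont1 : Continuous fun σ : ℝ => Real.exp (-α.re * σ) :=
    Real.continuous_exp.comp (continuous_const.mul continuous_id)
  have hcont2 : Continuous fun σ : ℝ => Real.exp (-(μ * (σ - a))) :=
    Real.continuous_exp.comp ((continuous_const.mul (continuous_id.sub continuous_const)).neg)
  -- step 1 : norm of representation
  have s1 : ‖r x‖ ≤ Real.exp (α.re * x) *
      (Real.exp (-α.re * a) * ‖r a‖ + ∫ σ in a..x, Real.exp (-α.re * σ) * ‖F σ‖) := by
    rw [hrep x hx]
    rw [norm_mul, norm_exp_mul]
    apply mul_le_mul_of_nonneg_left _ (Real.exp_nonneg _)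
    refine (norm_add_le _ _).trans ?_
    have e1 : ‖Complex.exp (-(α * a)) * r a‖ = Real.exp (-α.re * a) * ‖r a‖ := by
      rw [norm_mul]
      congr 1
      have : -(α * (a:ℝ)) = (-α) * (a:ℝ) := by ring
      rw [this, norm_exp_mul]
      simp
    have e2 : ‖∫ σ in a..x, Complex.exp (-(α * σ)) * F σ‖
        ≤ ∫ σ in a..x, Real.exp (-α.re * σ) * ‖F σ‖ := by
      refine (intervalIntegral.norm_integral_le_integral_norm hax).trans_eq ?_
      congr 1
      funext σ
      rw [norm_mul]
      congr 1
      have : -(α * (σ:ℝ)) = (-α) * (σ:ℝ) := by ring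
      rw [this, norm_exp_mul]
      simp
    rw [e1]
    exact add_le_add le_rfl e2
  -- step 2: multiply by the weight and estimate the exponentials
  have hw : (0:ℝ) < Real.exp (-(μ * (x - a))) := Real.exp_pos _
  have s2 : ‖r x‖ * Real.exp (-(μ * (x - a)))
      ≤ Real.exp (α.re * x - μ * (x - a) - α.re * a) * ‖r a‖
        + ∫ σ in a..x, Real.exp (α.re * x - μ * (x - a) - α.re * σ) * ‖F σ‖ := by
    have hmul := mul_le_mul_of_nonneg_right s1 hw.le
    refine hmul.trans_eq ?_
    have econst : Real.exp (α.re * x - μ * (x - a) - α.re * a)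
        = Real.exp (α.re * x) * Real.exp (-(μ * (x - a))) * Real.exp (-α.re * a) := by
      rw [show α.re * x - μ * (x - a) - α.re * a
          = (α.re * x + -(μ * (x - a))) + -α.re * a by ring, Real.exp_add, Real.exp_add]
    have eint : (∫ σ in a..x, Real.exp (α.re * x - μ * (x - a) - α.re * σ) * ‖F σ‖)
        = (Real.exp (α.re * x) * Real.exp (-(μ * (x - a))))
          * ∫ σ in a..x, Real.exp (-α.re * σ) * ‖F σ‖ := by
      rw [← intervalIntegral.integral_const_mul]
      congr 1
      funext σ
      rw [show α.re * x - μ * (x - a) - α.re * σ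
          = (α.re * x + -(μ * (x - a))) + -α.re * σ by ring, Real.exp_add, Real.exp_add]
      ring
    rw [econst, eint]
    ring
  refine s2.trans ?_
  have t1 : Real.exp (α.re * x - μ * (x - a) - α.re * a) * ‖r a‖ ≤ ‖r a‖ := by
    have hexp : α.re * x - μ * (x - a) - α.re * a ≤ 0 := by
      have h1 : α.re * (x - a) ≤ μ * (x - a) :=
        mul_le_mul_of_nonneg_right (le_trans (le_abs_self _) hμ) (by linarith)
      nlinarith
    calc Real.exp (α.re * x - μ * (x - a) - α.re * a) * ‖r a‖
        ≤ 1 * ‖r a‖ := mul_le_mul_of_nonneg_right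
          (by rw [← Real.exp_zero]; exact Real.exp_le_exp.2 hexp) (norm_nonneg _)
      _ = ‖r a‖ := one_mul _
  have t2 : (∫ σ in a..x, Real.exp (α.re * x - μ * (x - a) - α.re * σ) * ‖F σ‖)
      ≤ ∫ σ in a..x, Real.exp (-(μ * (σ - a))) * ‖F σ‖ := by
    apply intervalIntegral.integral_mono_on hax
    · refine hFn.continuousOn_mul (Continuous.continuousOn ?_)
      exact Real.continuous_exp.comp
        (continuous_const.sub (continuous_const.mul continuous_id))
    · exact hFn.continuousOn_mul hcont2.continuousOn
    · intro σ hσ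
      apply mul_le_mul_of_nonneg_right _ (norm_nonneg _)
      apply Real.exp_le_exp.2
      have h1 : α.re * (x - σ) ≤ μ * (x - σ) :=
        mul_le_mul_of_nonneg_right (le_trans (le_abs_self _) hμ) (by linarith [hσ.2])
      nlinarith [hσ.1, hσ.2]
  linarith

lemma apriori_fwd {a b : ℝ} (hab : a ≤ b) {z : ℂ} (hz : 1 ≤ ‖z‖)
    {P : ℝ → ℝ} {ρ y yD : ℝ → ℂ}
    (hP : IntervalIntegrable P volume a b) (hρ : IntervalIntegrable ρ volume a b)
    (hy : ∀ x, HasDerivAt y (yD x) x)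
    (heq : ∀ x ∈ Set.Icc a b, yD x = yD a
      + ∫ s in a..x, (((P s : ℂ) - z^2) * y s + ρ s)) :
    ∀ x ∈ Set.Icc a b,
      max ‖yD x + Complex.I * z * y x‖ ‖yD x - Complex.I * z * y x‖ ≤
        (max ‖yD a + Complex.I * z * y a‖ ‖yD a - Complex.I * z * y a‖
          + ∫ s in a..x, ‖ρ s‖ * Real.exp (-(|z.im| * (s - a)) - ∫ σ in a..s, |P σ|))
        * Real.exp (|z.im| * (x - a) + ∫ σ in a..x, |P σ|) := by
  have hz0 : z ≠ 0 := fun h => by simp [h] at hz; linarith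
  have hα : Complex.I * z ≠ 0 := mul_ne_zero Complex.I_ne_zero hz0
  have hα' : -(Complex.I * z) ≠ 0 := neg_ne_zero.2 hα
  set μ : ℝ := |z.im| with hμdef
  have hμα : |(Complex.I * z).re| ≤ μ := by
    rw [hμdef]
    simp [Complex.mul_re]
  have hμα' : |(-(Complex.I * z)).re| ≤ μ := by
    rw [hμdef]
    simp [Complex.mul_re]
  have hycont : Continuous y := by
    refine continuous_iff_continuousAt.2 fun u => ((hy u).differentiableAt).continuousAt
  have hsub : ∀ u ∈ Set.Icc a b, Set.uIcc a u ⊆ Set.uIcc a b := fun u hu => by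
    rw [Set.uIcc_of_le hu.1, Set.uIcc_of_le hab]; exact Set.Icc_subset_Icc le_rfl hu.2
  -- integrability of the basic integrand
  have hPC : IntervalIntegrable (fun s => ((P s : ℝ) : ℂ)) volume a b :=
    ⟨hP.1.ofReal, hP.2.ofReal⟩
  have hPy : IntervalIntegrable (fun s => ((P s : ℂ) - z^2) * y s) volume a b :=
    (hPC.sub (intervalIntegrable_const)).mul_continuousOn hycont.continuousOn
  have hG : IntervalIntegrable (fun s => ((P s : ℂ) - z^2) * y s + ρ s) volume a b :=
    hPy.add hρ
  -- F = P y + ρ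
  set F : ℝ → ℂ := fun s => (P s : ℂ) * y s + ρ s with hFdef
  have hFint : IntervalIntegrable F volume a b :=
    (hPC.mul_continuousOn hycont.continuousOn).add hρ
  -- continuity of yD on [a,b]
  have hyDcont : ContinuousOn yD (Set.Icc a b) := by
    have hprim : ContinuousOn (fun x => yD a
        + ∫ s in a..x, (((P s : ℂ) - z^2) * y s + ρ s)) (Set.Icc a b) :=
      continuousOn_const.add (contOn_primitive (Set.left_mem_Icc.2 hab) hG)
    exact ContinuousOn.congr hprim heq
  -- FTC for y
  have hyint : ∀ x ∈ Set.Icc a b, y x = y a + ∫ s in a..x, yD s := by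
    intro x hx
    have hyDii : IntervalIntegrable yD volume a x :=
      ((hyDcont.mono (Set.uIcc_subset_Icc (Set.left_mem_Icc.2 hab) hx))).intervalIntegrable
    have := intervalIntegral.integral_eq_sub_of_hasDerivAt
      (f := y) (f' := yD) (a := a) (b := x) (fun t _ => hy t) hyDii
    rw [this]; ring
  -- r and w
  set r : ℝ → ℂ := fun s => yD s + Complex.I * z * y s with hrdef
  set w : ℝ → ℂ := fun s => yD s - Complex.I * z * y s with hwdef
  have hr_eq : ∀ s, r s = yD s + Complex.I * z * y s := fun _ => rfl
  have hw_eq : ∀ s, w s = yD s - Complex.I * z * y s := fun _ => rfl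

  have hrcont : ContinuousOn r (Set.Icc a b) :=
    hyDcont.add ((continuous_const.mul hycont).continuousOn)
  have hwcont : ContinuousOn w (Set.Icc a b) :=
    hyDcont.sub ((continuous_const.mul hycont).continuousOn)
  have hIzIz : (Complex.I * z) * (Complex.I * z) = -(z^2) := by
    have := Complex.I_sq
    calc (Complex.I * z) * (Complex.I * z) = Complex.I^2 * z^2 := by ring
    _ = -(z^2) := by rw [this]; ring
  -- integral equations for r and w
  have heqr : ∀ x ∈ Set.Icc a b, r x = r a + ∫ s in a..x, (F s + (Complex.I * z) * r s) := by
    intro x hx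
    have hyDii : IntervalIntegrable yD volume a x :=
      ((hyDcont.mono (Set.uIcc_subset_Icc (Set.left_mem_Icc.2 hab) hx))).intervalIntegrable
    have e1 : (∫ s in a..x, (F s + (Complex.I * z) * r s))
        = (∫ s in a..x, (((P s : ℂ) - z^2) * y s + ρ s))
          + (Complex.I * z) * ∫ s in a..x, yD s := by
      rw [← intervalIntegral.integral_const_mul,
        ← intervalIntegral.integral_add (hG.mono_set (hsub x hx)) (hyDii.const_mul _)]
      congr 1
      funext s
      have hF_eq : F s = (P s : ℂ) * y s + ρ s := rfl
      rw [hF_eq, hr_eq s]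
      linear_combination (y s) * hIzIz
    rw [e1, hr_eq x, hr_eq a, heq x hx, hyint x hx]
    ring
  have heqw : ∀ x ∈ Set.Icc a b, w x = w a + ∫ s in a..x, (F s + (-(Complex.I * z)) * w s) := by
    intro x hx
    have hyDii : IntervalIntegrable yD volume a x :=
      ((hyDcont.mono (Set.uIcc_subset_Icc (Set.left_mem_Icc.2 hab) hx))).intervalIntegrable
    have e1 : (∫ s in a..x, (F s + (-(Complex.I * z)) * w s))
        = (∫ s in a..x, (((P s : ℂ) - z^2) * y s + ρ s))
          - (Complex.I * z) * ∫ s in a..x, yD s := by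
      rw [← intervalIntegral.integral_const_mul, ← intervalIntegral.integral_sub
        (hG.mono_set (hsub x hx)) (hyDii.const_mul _)]
      congr 1
      funext s
      have hF_eq : F s = (P s : ℂ) * y s + ρ s := rfl
      rw [hF_eq, hw_eq s]
      linear_combination (y s) * hIzIz
    rw [e1, hw_eq x, hw_eq a, heq x hx, hyint x hx]
    ring
  -- representations and norm bounds
  have hrepr := volterra_rep (Set.left_mem_Icc.2 hab) hα hrcont hFint heqr
  have hrepw := volterra_rep (Set.left_mem_Icc.2 hab) hα' hwcont hFint heqw
  have hbr := rep_norm_bound hμα hFint hrepr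
  have hbw := rep_norm_bound hμα' hFint hrepw
  -- h and H
  set hh : ℝ → ℝ := fun s => max ‖r s‖ ‖w s‖ with hhdef
  set HH : ℝ → ℝ := fun s => hh s * Real.exp (-(μ * (s - a))) with hHHdef
  have hh_nonneg : ∀ s, 0 ≤ hh s := fun s => le_trans (norm_nonneg _) (le_max_left _ _)
  have hh_eq : ∀ s, hh s = max ‖r s‖ ‖w s‖ := fun _ => rfl
  have hHH_eq : ∀ s, HH s = hh s * Real.exp (-(μ * (s - a))) := fun _ => rfl
  have hHHcont : ContinuousOn HH (Set.Icc a b) := by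
    apply ContinuousOn.mul
    · exact fun x hx => ((hrcont.norm) x hx).max ((hwcont.norm) x hx)
    · exact (Real.continuous_exp.comp
        ((continuous_const.mul (continuous_id.sub continuous_const)).neg)).continuousOn
  -- bound for ‖F‖
  have hFbound : ∀ s, ‖F s‖ ≤ |P s| * hh s + ‖ρ s‖ := by
    intro s
    have h1 : ‖F s‖ ≤ ‖(P s : ℂ) * y s‖ + ‖ρ s‖ := norm_add_le _ _
    have h2 : ‖(P s : ℂ) * y s‖ = |P s| * ‖y s‖ := by
      rw [norm_mul, Complex.norm_real, Real.norm_eq_abs]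
    have h3 : ‖y s‖ ≤ hh s := by
      have h4 : ‖z‖ * ‖y s‖ ≤ hh s := zy_le_max
      have h5 : ‖y s‖ ≤ ‖z‖ * ‖y s‖ := by
        nlinarith [norm_nonneg (y s)]
      linarith
    have h6 : |P s| * ‖y s‖ ≤ |P s| * hh s :=
      mul_le_mul_of_nonneg_left h3 (abs_nonneg _)
    linarith
  -- Gronwall hypothesis
  have hgr : ∀ x ∈ Set.Icc a b, HH x ≤ hh a
      + ∫ s in a..x, (|P s| * HH s + ‖ρ s‖ * Real.exp (-(μ * (s - a)))) := by
    intro x hx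
    have hax : a ≤ x := hx.1
    have hFn : IntervalIntegrable (fun σ => Real.exp (-(μ * (σ - a))) * ‖F σ‖) volume a x :=
      ((hFint.norm).mono_set (hsub x hx)).continuousOn_mul
        ((Real.continuous_exp.comp
          ((continuous_const.mul (continuous_id.sub continuous_const)).neg)).continuousOn)
    have hRHSint : IntervalIntegrable
        (fun s => |P s| * HH s + ‖ρ s‖ * Real.exp (-(μ * (s - a)))) volume a x := by
      apply IntervalIntegrable.add
      · exact ((hP.abs).mono_set (hsub x hx)).mul_continuousOn
          (hHHcont.mono (Set.uIcc_subset_Icc (Set.left_mem_Icc.2 hab) hx))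
      · exact ((hρ.norm).mono_set (hsub x hx)).mul_continuousOn
          ((Real.continuous_exp.comp
            ((continuous_const.mul (continuous_id.sub continuous_const)).neg)).continuousOn)
    have hstep : (∫ σ in a..x, Real.exp (-(μ * (σ - a))) * ‖F σ‖)
        ≤ ∫ s in a..x, (|P s| * HH s + ‖ρ s‖ * Real.exp (-(μ * (s - a)))) := by
      apply intervalIntegral.integral_mono_on hax hFn hRHSint
      intro s hs
      have := hFbound s
      have hexp0 : 0 < Real.exp (-(μ * (s - a))) := Real.exp_pos _
      have h7 : Real.exp (-(μ * (s - a))) * ‖F s‖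
          ≤ Real.exp (-(μ * (s - a))) * (|P s| * hh s + ‖ρ s‖) :=
        mul_le_mul_of_nonneg_left (hFbound s) hexp0.le
      have h8 : Real.exp (-(μ * (s - a))) * (|P s| * hh s + ‖ρ s‖)
          = |P s| * HH s + ‖ρ s‖ * Real.exp (-(μ * (s - a))) := by
        rw [hHH_eq s]; ring
      linarith
    have hbr' := hbr x hx
    have hbw' := hbw x hx
    have hra : ‖r a‖ ≤ hh a := le_max_left _ _
    have hwa : ‖w a‖ ≤ hh a := le_max_right _ _
    have hHHx : HH x = max (‖r x‖ * Real.exp (-(μ * (x - a))))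
        (‖w x‖ * Real.exp (-(μ * (x - a)))) := by
      rw [hHH_eq x, hh_eq x]
      exact max_mul_of_nonneg _ _ (Real.exp_pos _).le
    rw [hHHx]
    exact max_le (hbr'.trans (by linarith)) (hbw'.trans (by linarith))
  -- apply Gronwall
  have := gronwall_L1 (hh_nonneg a) hHHcont (hP.abs) (fun s => abs_nonneg _)
    ((hρ.norm).mul_continuousOn ((Real.continuous_exp.comp
      ((continuous_const.mul (continuous_id.sub continuous_const)).neg)).continuousOn))
    (fun s => mul_nonneg (norm_nonneg _) (Real.exp_nonneg _)) hgr
  intro x hx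
  have hgrx := this x hx
  -- convert conclusion
  have hexp_pos : (0:ℝ) < Real.exp (μ * (x - a)) := Real.exp_pos _
  have hfinal : hh x ≤ (hh a + ∫ s in a..x, (‖ρ s‖ * Real.exp (-(μ * (s - a))))
      * Real.exp (-∫ σ in a..s, |P σ|)) * (Real.exp (∫ σ in a..x, |P σ|)
      * Real.exp (μ * (x - a))) := by
    have h9 : hh x = HH x * Real.exp (μ * (x - a)) := by
      rw [hHH_eq x, mul_assoc, ← Real.exp_add]
      simp
    rw [h9]
    calc HH x * Real.exp (μ * (x - a))
        ≤ ((hh a + ∫ s in a..x, (‖ρ s‖ * Real.exp (-(μ * (s - a))))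
          * Real.exp (-∫ σ in a..s, |P σ|)) * Real.exp (∫ σ in a..x, |P σ|))
          * Real.exp (μ * (x - a)) := mul_le_mul_of_nonneg_right hgrx hexp_pos.le
      _ = _ := by ring
  have eB : (∫ s in a..x, (‖ρ s‖ * Real.exp (-(μ * (s - a)))) * Real.exp (-∫ σ in a..s, |P σ|))
      = ∫ s in a..x, ‖ρ s‖ * Real.exp (-(μ * (s - a)) - ∫ σ in a..s, |P σ|) := by
    congr 1
    funext s
    rw [mul_assoc, ← Real.exp_add,
      show -(μ * (s - a)) + -(∫ σ in a..s, |P σ|)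
        = -(μ * (s - a)) - ∫ σ in a..s, |P σ| by ring]
  have eE : Real.exp (∫ σ in a..x, |P σ|) * Real.exp (μ * (x - a))
      = Real.exp (μ * (x - a) + ∫ σ in a..x, |P σ|) := by
    rw [← Real.exp_add, add_comm]
  rw [eB, eE] at hfinal
  exact hfinal

lemma apriori_bwd {a b : ℝ} (hab : a ≤ b) {z : ℂ} (hz : 1 ≤ ‖z‖)
    {P : ℝ → ℝ} {ρ y yD : ℝ → ℂ}
    (hP : IntervalIntegrable P volume a b) (hρ : IntervalIntegrable ρ volume a b)
    (hy : ∀ x, HasDerivAt y (yD x) x)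
    (heq : ∀ x ∈ Set.Icc a b, yD x = yD b
      + ∫ s in b..x, (((P s : ℂ) - z^2) * y s + ρ s)) :
    ∀ x ∈ Set.Icc a b,
      max ‖yD x + Complex.I * z * y x‖ ‖yD x - Complex.I * z * y x‖ ≤
        (max ‖yD b + Complex.I * z * y b‖ ‖yD b - Complex.I * z * y b‖
          + ∫ s in x..b, ‖ρ s‖ * Real.exp (-(|z.im| * (b - s)) - ∫ σ in s..b, |P σ|))
        * Real.exp (|z.im| * (b - x) + ∫ σ in x..b, |P σ|) := by
  intro x hx
  have hrmem : ∀ u ∈ Set.Icc a b, a + b - u ∈ Set.Icc a b := fun u hu =>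
    ⟨by linarith [hu.2], by linarith [hu.1]⟩
  -- reflected data
  have hPr : IntervalIntegrable (fun u => P (a + b - u)) volume a b := by
    have := hP.comp_sub_left (a + b)
    rw [add_sub_cancel_left, add_sub_cancel_right] at this
    exact this.symm
  have hρr : IntervalIntegrable (fun u => ρ (a + b - u)) volume a b := by
    have := hρ.comp_sub_left (a + b)
    rw [add_sub_cancel_left, add_sub_cancel_right] at this
    exact this.symm
  have hyr : ∀ u : ℝ, HasDerivAt (fun u => y (a + b - u)) (-yD (a + b - u)) u := by
    intro u
    have h1 : HasDerivAt (fun u : ℝ => a + b - u) (-1) u := by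
      simpa using (hasDerivAt_id u).const_sub (a + b)
    have h2 := HasDerivAt.scomp (𝕜 := ℝ) u (hy (a + b - u)) h1
    have h3 : HasDerivAt (fun u => y (a + b - u)) ((-1:ℝ) • yD (a + b - u)) u := h2
    simpa using h3
  have heqr : ∀ u ∈ Set.Icc a b, (fun u => -yD (a + b - u)) u = (fun u => -yD (a + b - u)) a
      + ∫ s in a..u, (((P (a + b - s) : ℂ) - z^2) * y (a + b - s) + ρ (a + b - s)) := by
    intro u hu
    have key : (∫ s in a..u, (((P (a + b - s) : ℂ) - z^2) * y (a + b - s) + ρ (a + b - s)))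
        = ∫ s in (a + b - u)..b, (((P s : ℂ) - z^2) * y s + ρ s) := by
      have := intervalIntegral.integral_comp_sub_left
        (fun s => ((P s : ℂ) - z^2) * y s + ρ s) (a + b) (a := a) (b := u)
      rw [add_sub_cancel_left] at this
      exact this
    have hv := heq (a + b - u) (hrmem u hu)
    simp only [add_sub_cancel_left]
    rw [key, hv,
      show (∫ s in (a + b - u)..b, (((P s : ℂ) - z^2) * y s + ρ s))
        = -∫ s in b..(a + b - u), (((P s : ℂ) - z^2) * y s + ρ s) from
        intervalIntegral.integral_symm _ _]
    ring
  have main := apriori_fwd hab hz hPr hρr hyr heqr (a + b - x) (hrmem x hx)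
  -- transport back
  have h1 : a + b - (a + b - x) = x := by ring
  rw [h1] at main
  simp only [add_sub_cancel_left] at main
  -- swap the maxes using norm_neg
  have swap1 : ∀ u v : ℂ, max ‖-u + Complex.I * z * v‖ ‖-u - Complex.I * z * v‖
      = max ‖u + Complex.I * z * v‖ ‖u - Complex.I * z * v‖ := by
    intro u v
    have e1 : ‖-u + Complex.I * z * v‖ = ‖u - Complex.I * z * v‖ := by
      rw [show -u + Complex.I * z * v = -(u - Complex.I * z * v) by ring, norm_neg]
    have e2 : ‖-u - Complex.I * z * v‖ = ‖u + Complex.I * z * v‖ := by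
      rw [show -u - Complex.I * z * v = -(u + Complex.I * z * v) by ring, norm_neg]
    rw [e1, e2, max_comm]
  rw [swap1 (yD x) (y x), swap1 (yD b) (y b)] at main
  -- convert integrals
  have hPabs : (∫ σ in a..(a + b - x), |P (a + b - σ)|) = ∫ σ in x..b, |P σ| := by
    have := intervalIntegral.integral_comp_sub_left (fun v => |P v|) (a + b)
      (a := a) (b := a + b - x)
    rw [add_sub_cancel_left, h1] at this
    exact this
  have hmain2 : (∫ s in a..(a + b - x), ‖ρ (a + b - s)‖
        * Real.exp (-(|z.im| * (s - a)) - ∫ σ in a..s, |P (a + b - σ)|))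
      = ∫ s in x..b, ‖ρ s‖ * Real.exp (-(|z.im| * (b - s)) - ∫ σ in s..b, |P σ|) := by
    have e1 : (fun s => ‖ρ (a + b - s)‖
          * Real.exp (-(|z.im| * (s - a)) - ∫ σ in a..s, |P (a + b - σ)|))
        = fun s => (fun v => ‖ρ v‖ * Real.exp (-(|z.im| * (b - v))
            - ∫ σ in v..b, |P σ|)) (a + b - s) := by
      funext s
      have e2 : (∫ σ in a..s, |P (a + b - σ)|) = ∫ σ in (a + b - s)..b, |P σ| := by
        have := intervalIntegral.integral_comp_sub_left (fun v => |P v|) (a + b)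
          (a := a) (b := s)
        rw [add_sub_cancel_left] at this
        exact this
      rw [e2]
      have e3 : s - a = b - (a + b - s) := by ring
      rw [e3]
    rw [e1]
    have := intervalIntegral.integral_comp_sub_left
      (fun v => ‖ρ v‖ * Real.exp (-(|z.im| * (b - v)) - ∫ σ in v..b, |P σ|)) (a + b)
      (a := a) (b := a + b - x)
    rw [add_sub_cancel_left, h1] at this
    exact this
  have h4 : a + b - x - a = b - x := by ring
  rw [hPabs, hmain2, h4] at main
  exact main

lemma p_locint {p : ℝ → ℝ}
    (hper : ∀ᵐ x ∂(volume : Measure ℝ), p (x + 1) = p x)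
    (hpint : IntegrableOn p (Set.Icc 0 1)) :
    ∀ t : ℝ, IntervalIntegrable p volume 0 t ∨ t < 0 := by
  -- a.e. translates
  have hstep : ∀ n : ℕ, (∀ᵐ x ∂(volume : Measure ℝ), p (x + n + 1) = p (x + n)) := by
    intro n
    have hmp : MeasurePreserving (fun x : ℝ => x + (n : ℝ)) volume volume :=
      measurePreserving_add_right volume (n : ℝ)
    exact hmp.quasiMeasurePreserving.ae hper
  have hInt : ∀ n : ℕ, IntegrableOn (fun x : ℝ => p (x + n)) (Set.Ioc (0:ℝ) 1) volume := by
    intro n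
    induction n with
    | zero => simpa using hpint.mono_set Set.Ioc_subset_Icc_self
    | succ k ih =>
      apply ih.congr_fun_ae
      have := hstep k
      have h2 : ∀ᵐ x ∂(volume.restrict (Set.Ioc (0:ℝ) 1)), p (x + k + 1) = p (x + k) :=
        ae_restrict_of_ae this
      filter_upwards [h2] with x hx
      have : (x + (k + 1 : ℕ) : ℝ) = x + k + 1 := by push_cast; ring
      rw [this, hx]
  have hblock : ∀ n : ℕ, IntervalIntegrable p volume (n : ℝ) ((n : ℝ) + 1) := by
    intro n
    have h1 : IntervalIntegrable (fun x : ℝ => p (x + n)) volume 0 1 := by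
      rw [intervalIntegrable_iff_integrableOn_Ioc_of_le (by norm_num)]
      exact hInt n
    have h2 := h1.comp_sub_right (n : ℝ)
    have h3 : (fun x : ℝ => p (x - n + n)) = p := funext fun x => by rw [sub_add_cancel]
    rw [h3] at h2
    rw [zero_add, add_comm] at h2
    exact h2
  have hchain : ∀ n : ℕ, IntervalIntegrable p volume 0 (n : ℝ) := by
    intro n
    induction n with
    | zero => simp
    | succ k ih =>
      have := ih.trans (hblock k)
      have hc : ((k : ℝ) + 1) = ((k + 1 : ℕ) : ℝ) := by push_cast; ring
      rwa [hc] at this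
  intro t
  rcases lt_or_ge t 0 with h | h
  · exact Or.inr h
  · left
    have := (hchain ⌈t⌉₊).mono_set (by
      rw [Set.uIcc_of_le h, Set.uIcc_of_le (by positivity : (0:ℝ) ≤ (⌈t⌉₊ : ℝ))]
      exact Set.Icc_subset_Icc le_rfl (Nat.le_ceil t))
    exact this

noncomputable section

/-- `y` together with its x-derivative `y'` solves `-y'' + p·y = z²·y` on `ℝ`,
with `y'` locally absolutely continuous; this is encoded by requiring that `y'`
is everywhere the derivative of `y` and that `y'` is the integral of
`(p - z²)·y` (the equation holding a.e.). -/
def IsSol (p : ℝ → ℝ) (z : ℂ) (y y' : ℝ → ℂ) : Prop :=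
  (∀ x : ℝ, HasDerivAt y (y' x) x) ∧
  (∀ x : ℝ, y' x = y' 0 + ∫ s in (0:ℝ)..x, ((p s : ℂ) - z ^ 2) * y s)

/-- Estimates for the perturbed solutions `θ̃, φ̃` of `-y''+(p+q)y = z²y` that
coincide with `θ, φ` (together with their derivatives) on `[t,∞)`: for
`|z| ≥ 1` and `x ∈ [0,t]`, with
`X₁ = exp(|Im z|(2t−x) + ‖q‖_t + ‖p‖_t + ∫ₓᵗ|p|)`, one has
`|z||φ̃| ≤ X₁`, `|φ̃'| ≤ X₁`, `|θ̃| ≤ X₁`, `|θ̃'| ≤ |z|X₁`,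
`|θ̃−θ| ≤ X₁‖q‖_t/|z|` and `|φ̃−φ| ≤ X₁‖q‖_t/|z|²`. -/
theorem statement_3
    (p q : ℝ → ℝ) (t : ℝ) (ht : 0 < t)
    (hper : ∀ᵐ x ∂(volume : Measure ℝ), p (x + 1) = p x)
    (hpint : IntegrableOn p (Set.Icc 0 1))
    (hq : Integrable q) (hqsupp : Function.support q ⊆ Set.Icc 0 t)
    (θ φ θD φD : ℂ → ℝ → ℂ)
    (hθ : ∀ z : ℂ, IsSol p z (θ z) (θD z))
    (hθ0 : ∀ z : ℂ, θ z 0 = 1) (hθD0 : ∀ z : ℂ, θD z 0 = 0)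
    (hφ : ∀ z : ℂ, IsSol p z (φ z) (φD z))
    (hφ0 : ∀ z : ℂ, φ z 0 = 0) (hφD0 : ∀ z : ℂ, φD z 0 = 1)
    (θt φt θtD φtD : ℂ → ℝ → ℂ)
    (hθt : ∀ z : ℂ, IsSol (fun x => p x + q x) z (θt z) (θtD z))
    (hφt : ∀ z : ℂ, IsSol (fun x => p x + q x) z (φt z) (φtD z))
    (hθmatch : ∀ z : ℂ, ∀ x : ℝ, t ≤ x → θt z x = θ z x ∧ θtD z x = θD z x)
    (hφmatch : ∀ z : ℂ, ∀ x : ℝ, t ≤ x → φt z x = φ z x ∧ φtD z x = φD z x) :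
    ∀ z : ℂ, 1 ≤ ‖z‖ → ∀ x ∈ Set.Icc (0:ℝ) t, ∀ X₁ normQ : ℝ,
      normQ = (∫ s in (0:ℝ)..t, |q s|) →
      X₁ = Real.exp (|z.im| * (2 * t - x) + normQ + (∫ s in (0:ℝ)..t, |p s|)
              + ∫ τ in x..t, |p τ|) →
      ‖z‖ * ‖φt z x‖ ≤ X₁ ∧
      ‖φtD z x‖ ≤ X₁ ∧
      ‖θt z x‖ ≤ X₁ ∧
      ‖θtD z x‖ ≤ ‖z‖ * X₁ ∧
      ‖θt z x - θ z x‖ ≤ X₁ * normQ / ‖z‖ ∧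
      ‖φt z x - φ z x‖ ≤ X₁ * normQ / ‖z‖ ^ 2 := by
  intro z hz x hx X₁ normQ hnormQ hX₁
  have ht' : (0:ℝ) ≤ t := ht.le
  have hz0 : (0:ℝ) < ‖z‖ := lt_of_lt_of_le one_pos hz
  set μ : ℝ := |z.im| with hμdef
  -- integrability
  have hpt : IntervalIntegrable p volume 0 t :=
    (p_locint hper hpint t).resolve_right (not_lt.2 ht')
  have hqt : IntervalIntegrable q volume 0 t := hq.intervalIntegrable
  have hpqt : IntervalIntegrable (fun s => p s + q s) volume 0 t := hpt.add hqt
  set Pt : ℝ := ∫ s in (0:ℝ)..t, |p s| with hPtdef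
  have hPt0 : 0 ≤ Pt := intervalIntegral.integral_nonneg ht' (fun s _ => abs_nonneg _)
  have hnq0 : 0 ≤ normQ := by
    rw [hnormQ]; exact intervalIntegral.integral_nonneg ht' (fun s _ => abs_nonneg _)
  have hsub : ∀ u ∈ Set.Icc (0:ℝ) t, Set.uIcc 0 u ⊆ Set.uIcc 0 t := fun u hu => by
    rw [Set.uIcc_of_le hu.1, Set.uIcc_of_le ht']; exact Set.Icc_subset_Icc le_rfl hu.2
  have hsub2 : ∀ u ∈ Set.Icc (0:ℝ) t, Set.uIcc u t ⊆ Set.uIcc 0 t := fun u hu => by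
    rw [Set.uIcc_of_le hu.2, Set.uIcc_of_le ht']; exact Set.Icc_subset_Icc hu.1 le_rfl
  -- continuity of solutions
  have hθc : Continuous (θ z) := continuous_iff_continuousAt.2
    (fun u => (((hθ z).1 u).differentiableAt).continuousAt)
  have hφc : Continuous (φ z) := continuous_iff_continuousAt.2
    (fun u => (((hφ z).1 u).differentiableAt).continuousAt)
  have hθtc : Continuous (θt z) := continuous_iff_continuousAt.2
    (fun u => (((hθt z).1 u).differentiableAt).continuousAt)
  have hφtc : Continuous (φt z) := continuous_iff_continuousAt.2
    (fun u => (((hφt z).1 u).differentiableAt).continuousAt)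
  -- integrable integrands
  have hofReal : ∀ {P : ℝ → ℝ}, IntervalIntegrable P volume 0 t →
      IntervalIntegrable (fun s => ((P s : ℝ) : ℂ)) volume 0 t := fun hP =>
    ⟨hP.1.ofReal, hP.2.ofReal⟩
  have hGint : ∀ (P : ℝ → ℝ) (y : ℝ → ℂ), IntervalIntegrable P volume 0 t → Continuous y →
      IntervalIntegrable (fun s => ((P s : ℂ) - z^2) * y s) volume 0 t := by
    intro P y hP hy
    exact ((hofReal hP).sub intervalIntegrable_const).mul_continuousOn hy.continuousOn
  -- base change 0 → t
  have base_t : ∀ (G : ℝ → ℂ), IntervalIntegrable G volume 0 t → ∀ (yD' : ℝ → ℂ),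
      (∀ x' : ℝ, yD' x' = yD' 0 + ∫ s in (0:ℝ)..x', G s) →
      ∀ x' ∈ Set.Icc (0:ℝ) t, yD' x' = yD' t + ∫ s in t..x', G s := by
    intro G hG yD' h x' hx'
    have h1 : IntervalIntegrable G volume 0 x' := hG.mono_set (hsub x' hx')
    have h2 := intervalIntegral.integral_interval_sub_left h1 hG
    rw [h x', h t]
    rw [← h2]
    ring
  ----------------------------------------------------------------
  -- STEP A : forward bounds for θ, φ on [0,t]
  ----------------------------------------------------------------
  have heqθ : ∀ x' ∈ Set.Icc (0:ℝ) t, θD z x' = θD z 0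
      + ∫ s in (0:ℝ)..x', (((p s : ℂ) - z^2) * θ z s + (fun _ => (0:ℂ)) s) := by
    intro x' _
    rw [(hθ z).2 x']
    congr 1
    congr 1
    funext s
    simp
  have heqφ : ∀ x' ∈ Set.Icc (0:ℝ) t, φD z x' = φD z 0
      + ∫ s in (0:ℝ)..x', (((p s : ℂ) - z^2) * φ z s + (fun _ => (0:ℂ)) s) := by
    intro x' _
    rw [(hφ z).2 x']
    congr 1
    congr 1
    funext s
    simp
  have hθfwd := apriori_fwd ht' hz hpt (intervalIntegrable_const (c := (0:ℂ)))
    (hθ z).1 heqθ t (Set.right_mem_Icc.2 ht')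
  have hφfwd := apriori_fwd ht' hz hpt (intervalIntegrable_const (c := (0:ℂ)))
    (hφ z).1 heqφ t (Set.right_mem_Icc.2 ht')
  simp only [norm_zero, zero_mul, intervalIntegral.integral_zero, add_zero, sub_zero] at hθfwd hφfwd
  rw [hθ0, hθD0] at hθfwd
  rw [hφ0, hφD0] at hφfwd
  have hmaxθ0 : max ‖0 + Complex.I * z * 1‖ ‖0 - Complex.I * z * 1‖ = ‖z‖ := by
    simp [norm_mul]
  have hmaxφ0 : max ‖1 + Complex.I * z * 0‖ ‖1 - Complex.I * z * 0‖ = 1 := by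
    simp
  rw [hmaxθ0] at hθfwd
  rw [hmaxφ0] at hφfwd
  -- hθfwd : maxθ(t) ≤ ‖z‖ * exp (μ(t-0) + ∫_0^t |p|), similarly φ with 1
  ----------------------------------------------------------------
  -- STEP B : backward bounds for θt, φt on [0,t]
  ----------------------------------------------------------------
  set E : ℝ → ℝ := fun s => Real.exp (μ * (2*t - s) + normQ + Pt + ∫ σ in s..t, |p σ|)
    with hEdef
  have hE_eq : ∀ s, E s = Real.exp (μ * (2*t - s) + normQ + Pt + ∫ σ in s..t, |p σ|) :=
    fun _ => rfl
  have hGθt : IntervalIntegrable (fun s => (((p s + q s : ℝ) : ℂ) - z^2) * θt z s) volume 0 t :=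
    hGint _ _ hpqt hθtc
  have hGφt : IntervalIntegrable (fun s => (((p s + q s : ℝ) : ℂ) - z^2) * φt z s) volume 0 t :=
    hGint _ _ hpqt hφtc
  have hGθ : IntervalIntegrable (fun s => ((p s : ℂ) - z^2) * θ z s) volume 0 t :=
    hGint _ _ hpt hθc
  have hGφ : IntervalIntegrable (fun s => ((p s : ℂ) - z^2) * φ z s) volume 0 t :=
    hGint _ _ hpt hφc
  -- exponent comparison for the P = p + q backward estimate
  have hexp_pq : ∀ x' ∈ Set.Icc (0:ℝ) t,
      Real.exp (μ * t + Pt) * Real.exp (μ * (t - x') + ∫ σ in x'..t, |p σ + q σ|)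
        ≤ E x' := by
    intro x' hx'
    rw [← Real.exp_add, hE_eq]
    apply Real.exp_le_exp.2
    have h1 : (∫ σ in x'..t, |p σ + q σ|) ≤ (∫ σ in x'..t, |p σ|) + ∫ σ in x'..t, |q σ| := by
      rw [← intervalIntegral.integral_add ((hpt.abs).mono_set (hsub2 x' hx'))
        ((hqt.abs).mono_set (hsub2 x' hx'))]
      apply intervalIntegral.integral_mono_on hx'.2
        ((hpqt.abs).mono_set (hsub2 x' hx'))
        (((hpt.abs).mono_set (hsub2 x' hx')).add ((hqt.abs).mono_set (hsub2 x' hx')))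
      intro s _
      exact abs_add_le _ _
    have h2 : (∫ σ in x'..t, |q σ|) ≤ normQ := by
      rw [hnormQ]
      apply intervalIntegral.integral_mono_interval hx'.1 hx'.2 le_rfl
      · filter_upwards with s; exact abs_nonneg _
      · exact hqt.abs
    linarith
  -- backward estimate, generic in the solution pair
  have hbwd_gen : ∀ (y yD : ℝ → ℂ), (∀ u, HasDerivAt y (yD u) u) →
      (∀ u : ℝ, yD u = yD 0 + ∫ s in (0:ℝ)..u, (((p s + q s : ℝ) : ℂ) - z^2) * y s) →
      Continuous y →
      ∀ x' ∈ Set.Icc (0:ℝ) t,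
        max ‖yD x' + Complex.I * z * y x'‖ ‖yD x' - Complex.I * z * y x'‖ ≤
          (max ‖yD t + Complex.I * z * y t‖ ‖yD t - Complex.I * z * y t‖)
          * Real.exp (μ * (t - x') + ∫ σ in x'..t, |p σ + q σ|) := by
    intro y yD hy heq0 hyc
    have hGy : IntervalIntegrable (fun s => (((p s + q s : ℝ) : ℂ) - z^2) * y s) volume 0 t :=
      hGint _ _ hpqt hyc
    have heqt := base_t _ hGy yD heq0
    have heqt' : ∀ x' ∈ Set.Icc (0:ℝ) t, yD x' = yD t
        + ∫ s in t..x', ((((fun u => p u + q u) s : ℝ) : ℂ) - z^2) * y s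
          + (fun _ => (0:ℂ)) s := by
      intro x' hx'
      rw [heqt x' hx']
      congr 1
      congr 1
      funext s
      simp
    intro x' hx'
    have := apriori_bwd ht' hz hpqt (intervalIntegrable_const (c := (0:ℂ))) hy heqt' x' hx'
    simp only [norm_zero, zero_mul, intervalIntegral.integral_zero, add_zero] at this
    exact this
  -- θt backward
  have hθt_max : ∀ x' ∈ Set.Icc (0:ℝ) t,
      max ‖θtD z x' + Complex.I * z * θt z x'‖ ‖θtD z x' - Complex.I * z * θt z x'‖
        ≤ ‖z‖ * E x' := by
    intro x' hx'
    have h1 := hbwd_gen (θt z) (θtD z) (hθt z).1 (hθt z).2 hθtc x' hx'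
    have hmatch := hθmatch z t le_rfl
    rw [hmatch.1, hmatch.2] at h1
    have h2 : max ‖θD z t + Complex.I * z * θ z t‖ ‖θD z t - Complex.I * z * θ z t‖
        ≤ ‖z‖ * Real.exp (μ * t + Pt) := hθfwd
    calc max ‖θtD z x' + Complex.I * z * θt z x'‖ ‖θtD z x' - Complex.I * z * θt z x'‖
        ≤ (max ‖θD z t + Complex.I * z * θ z t‖ ‖θD z t - Complex.I * z * θ z t‖)
          * Real.exp (μ * (t - x') + ∫ σ in x'..t, |p σ + q σ|) := h1
      _ ≤ (‖z‖ * Real.exp (μ * t + Pt))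
          * Real.exp (μ * (t - x') + ∫ σ in x'..t, |p σ + q σ|) :=
          mul_le_mul_of_nonneg_right h2 (Real.exp_nonneg _)
      _ = ‖z‖ * (Real.exp (μ * t + Pt)
          * Real.exp (μ * (t - x') + ∫ σ in x'..t, |p σ + q σ|)) := by ring
      _ ≤ ‖z‖ * E x' := mul_le_mul_of_nonneg_left (hexp_pq x' hx') hz0.le

  have hφt_max : ∀ x' ∈ Set.Icc (0:ℝ) t,
      max ‖φtD z x' + Complex.I * z * φt z x'‖ ‖φtD z x' - Complex.I * z * φt z x'‖
        ≤ E x' := by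
    intro x' hx'
    have h1 := hbwd_gen (φt z) (φtD z) (hφt z).1 (hφt z).2 hφtc x' hx'
    have hmatch := hφmatch z t le_rfl
    rw [hmatch.1, hmatch.2] at h1
    have h2 : max ‖φD z t + Complex.I * z * φ z t‖ ‖φD z t - Complex.I * z * φ z t‖
        ≤ 1 * Real.exp (μ * t + Pt) := hφfwd
    calc max ‖φtD z x' + Complex.I * z * φt z x'‖ ‖φtD z x' - Complex.I * z * φt z x'‖
        ≤ (max ‖φD z t + Complex.I * z * φ z t‖ ‖φD z t - Complex.I * z * φ z t‖)
          * Real.exp (μ * (t - x') + ∫ σ in x'..t, |p σ + q σ|) := h1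
      _ ≤ (1 * Real.exp (μ * t + Pt))
          * Real.exp (μ * (t - x') + ∫ σ in x'..t, |p σ + q σ|) :=
          mul_le_mul_of_nonneg_right h2 (Real.exp_nonneg _)
      _ = Real.exp (μ * t + Pt)
          * Real.exp (μ * (t - x') + ∫ σ in x'..t, |p σ + q σ|) := by ring
      _ ≤ E x' := hexp_pq x' hx'
  have hX1E : X₁ = E x := by rw [hX₁, hE_eq]
  have hX10 : 0 ≤ X₁ := by rw [hX1E, hE_eq]; exact (Real.exp_nonneg _)
  -- pointwise bounds
  have hθt_pt : ∀ s ∈ Set.Icc (0:ℝ) t, ‖θt z s‖ ≤ E s := by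
    intro s hs
    have h1 : ‖z‖ * ‖θt z s‖ ≤ ‖z‖ * E s := le_trans zy_le_max (hθt_max s hs)
    exact (mul_le_mul_iff_right₀ hz0).1 h1
  have hφt_pt : ∀ s ∈ Set.Icc (0:ℝ) t, ‖z‖ * ‖φt z s‖ ≤ E s :=
    fun s hs => le_trans zy_le_max (hφt_max s hs)
  refine ⟨?_, ?_, ?_, ?_, ?_, ?_⟩
  · rw [hX1E]; exact hφt_pt x hx
  · rw [hX1E]; exact le_trans u_le_max (hφt_max x hx)
  · rw [hX1E]; exact hθt_pt x hx
  · rw [hX1E]; exact le_trans u_le_max (hθt_max x hx)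
  -- difference estimates
  · -- θ difference
    have hsub3 : ∀ u ∈ Set.Icc (0:ℝ) t, Set.uIcc t u ⊆ Set.uIcc 0 t := fun u hu => by
      rw [Set.uIcc_comm]; exact hsub2 u hu
    have heqθt_t := base_t _ hGθt (θtD z) (hθt z).2
    have heqθ_t := base_t _ hGθ (θD z) (hθ z).2
    have hρθint : IntervalIntegrable (fun s => (q s : ℂ) * θt z s) volume 0 t :=
      (hofReal hqt).mul_continuousOn hθtc.continuousOn
    have hηD : ∀ u, HasDerivAt (fun s => θt z s - θ z s) (θtD z u - θD z u) u :=
      fun u => ((hθt z).1 u).sub ((hθ z).1 u)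
    have heqη : ∀ x' ∈ Set.Icc (0:ℝ) t, θtD z x' - θD z x' = (θtD z t - θD z t)
        + ∫ s in t..x', (((p s : ℂ) - z^2) * (θt z s - θ z s) + (q s : ℂ) * θt z s) := by
      intro x' hx'
      have e1 : (∫ s in t..x', (((p s : ℂ) - z^2) * (θt z s - θ z s) + (q s : ℂ) * θt z s))
          = (∫ s in t..x', (((p s + q s : ℝ) : ℂ) - z^2) * θt z s)
            - ∫ s in t..x', ((p s : ℂ) - z^2) * θ z s := by
        rw [← intervalIntegral.integral_sub (hGθt.mono_set (hsub3 x' hx'))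
          (hGθ.mono_set (hsub3 x' hx'))]
        congr 1
        funext s
        push_cast
        ring
      rw [e1, heqθt_t x' hx', heqθ_t x' hx']
      ring
    have hη_bwd := apriori_bwd ht' hz hpt hρθint hηD heqη x hx
    have hm := hθmatch z t le_rfl
    simp only [hm.1, hm.2, sub_self, mul_zero, add_zero, zero_sub, norm_zero, norm_neg,
      max_self, zero_add] at hη_bwd
    -- bound the integral term
    set K : ℝ := Real.exp (μ * t + normQ + Pt) with hKdef
    have hcontP : ContinuousOn (fun s => ∫ σ in s..t, |p σ|) (Set.Icc (0:ℝ) t) := by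
      have h1 : ContinuousOn (fun s => -(∫ σ in t..s, |p σ|)) (Set.Icc (0:ℝ) t) :=
        (contOn_primitive (Set.right_mem_Icc.2 ht') (hpt.abs)).neg
      apply h1.congr
      intro s _
      exact intervalIntegral.integral_symm t s
    have hcontExp : ContinuousOn
        (fun s => Real.exp (-(μ * (t - s)) - ∫ σ in s..t, |p σ|)) (Set.Icc (0:ℝ) t) := by
      apply Real.continuous_exp.comp_continuousOn
      exact (((continuous_const.mul (continuous_const.sub continuous_id)).neg).continuousOn).sub
        hcontP
    have hEK : ∀ s, E s * Real.exp (-(μ * (t - s)) - ∫ σ in s..t, |p σ|) = K := by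
      intro s
      rw [hE_eq, hKdef, ← Real.exp_add]
      congr 1
      ring
    have hIbound : ∀ (v : ℝ → ℂ), Continuous v → (∀ s ∈ Set.Icc (0:ℝ) t, ‖v s‖ ≤ E s) →
        (∫ s in x..t, ‖(q s : ℂ) * v s‖ * Real.exp (-(μ * (t - s)) - ∫ σ in s..t, |p σ|))
          ≤ normQ * K := by
      intro v hv hvE
      have hint1 : IntervalIntegrable
          (fun s => ‖(q s : ℂ) * v s‖ * Real.exp (-(μ * (t - s)) - ∫ σ in s..t, |p σ|))
          volume x t := by
        apply IntervalIntegrable.mul_continuousOn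
        · exact (((hofReal hqt).mul_continuousOn hv.continuousOn).norm).mono_set (hsub2 x hx)
        · exact hcontExp.mono (Set.uIcc_subset_Icc ⟨hx.1, hx.2⟩ (Set.right_mem_Icc.2 ht'))
      have hint2 : IntervalIntegrable (fun s => |q s| * K) volume x t :=
        ((hqt.abs).mono_set (hsub2 x hx)).mul_const K
      have hmono : (∫ s in x..t, ‖(q s : ℂ) * v s‖
            * Real.exp (-(μ * (t - s)) - ∫ σ in s..t, |p σ|))
          ≤ ∫ s in x..t, |q s| * K := by
        apply intervalIntegral.integral_mono_on hx.2 hint1 hint2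
        intro s hs
        have hsIcc : s ∈ Set.Icc (0:ℝ) t := ⟨le_trans hx.1 hs.1, hs.2⟩
        have h1 : ‖(q s : ℂ) * v s‖ = |q s| * ‖v s‖ := by
          rw [norm_mul, Complex.norm_real, Real.norm_eq_abs]
        rw [h1]
        calc |q s| * ‖v s‖ * Real.exp (-(μ * (t - s)) - ∫ σ in s..t, |p σ|)
            ≤ |q s| * E s * Real.exp (-(μ * (t - s)) - ∫ σ in s..t, |p σ|) := by
              apply mul_le_mul_of_nonneg_right _ (Real.exp_nonneg _)
              exact mul_le_mul_of_nonneg_left (hvE s hsIcc) (abs_nonneg _)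
          _ = |q s| * K := by rw [mul_assoc, hEK s]
      have hqle : (∫ s in x..t, |q s|) ≤ normQ := by
        rw [hnormQ]
        apply intervalIntegral.integral_mono_interval hx.1 hx.2 le_rfl
        · filter_upwards with s; exact abs_nonneg _
        · exact hqt.abs
      calc (∫ s in x..t, ‖(q s : ℂ) * v s‖
            * Real.exp (-(μ * (t - s)) - ∫ σ in s..t, |p σ|)) ≤ ∫ s in x..t, |q s| * K := hmono
        _ = (∫ s in x..t, |q s|) * K := intervalIntegral.integral_mul_const _ _
        _ ≤ normQ * K := mul_le_mul_of_nonneg_right hqle (Real.exp_nonneg _)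
    have hKX : K * Real.exp (μ * (t - x) + ∫ σ in x..t, |p σ|) = X₁ := by
      rw [hKdef, hX₁, ← Real.exp_add]
      congr 1
      ring
    have hfin : max ‖(θtD z x - θD z x) + Complex.I * z * (θt z x - θ z x)‖
        ‖(θtD z x - θD z x) - Complex.I * z * (θt z x - θ z x)‖ ≤ normQ * X₁ := by
      refine hη_bwd.trans ?_
      calc (∫ s in x..t, ‖(q s : ℂ) * θt z s‖
            * Real.exp (-(μ * (t - s)) - ∫ σ in s..t, |p σ|))
            * Real.exp (μ * (t - x) + ∫ σ in x..t, |p σ|)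
          ≤ (normQ * K) * Real.exp (μ * (t - x) + ∫ σ in x..t, |p σ|) := by
            apply mul_le_mul_of_nonneg_right (hIbound (θt z) hθtc hθt_pt) (Real.exp_nonneg _)
        _ = normQ * X₁ := by rw [mul_assoc, hKX]
    have h5 : ‖z‖ * ‖θt z x - θ z x‖ ≤ normQ * X₁ := le_trans zy_le_max hfin
    rw [le_div_iff₀ hz0]
    nlinarith [h5]
  · -- φ difference
    have hsub3 : ∀ u ∈ Set.Icc (0:ℝ) t, Set.uIcc t u ⊆ Set.uIcc 0 t := fun u hu => by
      rw [Set.uIcc_comm]; exact hsub2 u hu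
    have heqφt_t := base_t _ hGφt (φtD z) (hφt z).2
    have heqφ_t := base_t _ hGφ (φD z) (hφ z).2
    have hρφint : IntervalIntegrable (fun s => (q s : ℂ) * φt z s) volume 0 t :=
      (hofReal hqt).mul_continuousOn hφtc.continuousOn
    have hηD : ∀ u, HasDerivAt (fun s => φt z s - φ z s) (φtD z u - φD z u) u :=
      fun u => ((hφt z).1 u).sub ((hφ z).1 u)
    have heqη : ∀ x' ∈ Set.Icc (0:ℝ) t, φtD z x' - φD z x' = (φtD z t - φD z t)
        + ∫ s in t..x', (((p s : ℂ) - z^2) * (φt z s - φ z s) + (q s : ℂ) * φt z s) := by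
      intro x' hx'
      have e1 : (∫ s in t..x', (((p s : ℂ) - z^2) * (φt z s - φ z s) + (q s : ℂ) * φt z s))
          = (∫ s in t..x', (((p s + q s : ℝ) : ℂ) - z^2) * φt z s)
            - ∫ s in t..x', ((p s : ℂ) - z^2) * φ z s := by
        rw [← intervalIntegral.integral_sub (hGφt.mono_set (hsub3 x' hx'))
          (hGφ.mono_set (hsub3 x' hx'))]
        congr 1
        funext s
        push_cast
        ring
      rw [e1, heqφt_t x' hx', heqφ_t x' hx']
      ring
    have hη_bwd := apriori_bwd ht' hz hpt hρφint hηD heqη x hx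
    have hm := hφmatch z t le_rfl
    simp only [hm.1, hm.2, sub_self, mul_zero, add_zero, zero_sub, norm_zero, norm_neg,
      max_self, zero_add] at hη_bwd
    set K : ℝ := Real.exp (μ * t + normQ + Pt) with hKdef
    have hcontP : ContinuousOn (fun s => ∫ σ in s..t, |p σ|) (Set.Icc (0:ℝ) t) := by
      have h1 : ContinuousOn (fun s => -(∫ σ in t..s, |p σ|)) (Set.Icc (0:ℝ) t) :=
        (contOn_primitive (Set.right_mem_Icc.2 ht') (hpt.abs)).neg
      apply h1.congr
      intro s _
      exact intervalIntegral.integral_symm t s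
    have hcontExp : ContinuousOn
        (fun s => Real.exp (-(μ * (t - s)) - ∫ σ in s..t, |p σ|)) (Set.Icc (0:ℝ) t) := by
      apply Real.continuous_exp.comp_continuousOn
      exact (((continuous_const.mul (continuous_const.sub continuous_id)).neg).continuousOn).sub
        hcontP
    have hEK : ∀ s, E s * Real.exp (-(μ * (t - s)) - ∫ σ in s..t, |p σ|) = K := by
      intro s
      rw [hE_eq, hKdef, ← Real.exp_add]
      congr 1
      ring
    have hIbound : (∫ s in x..t, ‖(q s : ℂ) * φt z s‖
          * Real.exp (-(μ * (t - s)) - ∫ σ in s..t, |p σ|))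
        ≤ normQ * (K / ‖z‖) := by
      have hint1 : IntervalIntegrable
          (fun s => ‖(q s : ℂ) * φt z s‖ * Real.exp (-(μ * (t - s)) - ∫ σ in s..t, |p σ|))
          volume x t := by
        apply IntervalIntegrable.mul_continuousOn
        · exact (((hofReal hqt).mul_continuousOn hφtc.continuousOn).norm).mono_set (hsub2 x hx)
        · exact hcontExp.mono (Set.uIcc_subset_Icc ⟨hx.1, hx.2⟩ (Set.right_mem_Icc.2 ht'))
      have hint2 : IntervalIntegrable (fun s => |q s| * (K / ‖z‖)) volume x t :=
        ((hqt.abs).mono_set (hsub2 x hx)).mul_const _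
      have hmono : (∫ s in x..t, ‖(q s : ℂ) * φt z s‖
            * Real.exp (-(μ * (t - s)) - ∫ σ in s..t, |p σ|))
          ≤ ∫ s in x..t, |q s| * (K / ‖z‖) := by
        apply intervalIntegral.integral_mono_on hx.2 hint1 hint2
        intro s hs
        have hsIcc : s ∈ Set.Icc (0:ℝ) t := ⟨le_trans hx.1 hs.1, hs.2⟩
        have h1 : ‖(q s : ℂ) * φt z s‖ = |q s| * ‖φt z s‖ := by
          rw [norm_mul, Complex.norm_real, Real.norm_eq_abs]
        have h2 : ‖φt z s‖ ≤ E s / ‖z‖ := by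
          rw [le_div_iff₀ hz0]
          have := hφt_pt s hsIcc
          linarith [this, mul_comm (‖z‖) (‖φt z s‖)]
        rw [h1]
        calc |q s| * ‖φt z s‖ * Real.exp (-(μ * (t - s)) - ∫ σ in s..t, |p σ|)
            ≤ |q s| * (E s / ‖z‖) * Real.exp (-(μ * (t - s)) - ∫ σ in s..t, |p σ|) := by
              apply mul_le_mul_of_nonneg_right _ (Real.exp_nonneg _)
              exact mul_le_mul_of_nonneg_left h2 (abs_nonneg _)
          _ = |q s| * ((E s * Real.exp (-(μ * (t - s)) - ∫ σ in s..t, |p σ|)) / ‖z‖) := by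
              ring
          _ = |q s| * (K / ‖z‖) := by rw [hEK s]
      have hqle : (∫ s in x..t, |q s|) ≤ normQ := by
        rw [hnormQ]
        apply intervalIntegral.integral_mono_interval hx.1 hx.2 le_rfl
        · filter_upwards with s; exact abs_nonneg _
        · exact hqt.abs
      calc (∫ s in x..t, ‖(q s : ℂ) * φt z s‖
            * Real.exp (-(μ * (t - s)) - ∫ σ in s..t, |p σ|))
          ≤ ∫ s in x..t, |q s| * (K / ‖z‖) := hmono
        _ = (∫ s in x..t, |q s|) * (K / ‖z‖) := intervalIntegral.integral_mul_const _ _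
        _ ≤ normQ * (K / ‖z‖) := mul_le_mul_of_nonneg_right hqle
            (div_nonneg (Real.exp_nonneg _) hz0.le)
    have hKX : K * Real.exp (μ * (t - x) + ∫ σ in x..t, |p σ|) = X₁ := by
      rw [hKdef, hX₁, ← Real.exp_add]
      congr 1
      ring
    have hfin : max ‖(φtD z x - φD z x) + Complex.I * z * (φt z x - φ z x)‖
        ‖(φtD z x - φD z x) - Complex.I * z * (φt z x - φ z x)‖
          ≤ normQ * X₁ / ‖z‖ := by
      refine hη_bwd.trans ?_
      calc (∫ s in x..t, ‖(q s : ℂ) * φt z s‖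
            * Real.exp (-(μ * (t - s)) - ∫ σ in s..t, |p σ|))
            * Real.exp (μ * (t - x) + ∫ σ in x..t, |p σ|)
          ≤ (normQ * (K / ‖z‖)) * Real.exp (μ * (t - x) + ∫ σ in x..t, |p σ|) :=
            mul_le_mul_of_nonneg_right hIbound (Real.exp_nonneg _)
        _ = normQ * ((K * Real.exp (μ * (t - x) + ∫ σ in x..t, |p σ|)) / ‖z‖) := by ring
        _ = normQ * X₁ / ‖z‖ := by rw [hKX]; ring
    have h6 : ‖z‖ * ‖φt z x - φ z x‖ ≤ normQ * X₁ / ‖z‖ := le_trans zy_le_max hfin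
    rw [le_div_iff₀ (by positivity : (0:ℝ) < ‖z‖^2)]
    have h7 := mul_le_mul_of_nonneg_left h6 hz0.le
    have h8 : ‖z‖ * (normQ * X₁ / ‖z‖) = normQ * X₁ := by
      field_simp
    rw [h8] at h7
    calc ‖φt z x - φ z x‖ * ‖z‖^2 = ‖z‖ * (‖z‖ * ‖φt z x - φ z x‖) := by ring
      _ ≤ normQ * X₁ := h7
      _ = X₁ * normQ := mul_comm _ _

end
end

section
/- Fix z ∈ ℂ. Let y₀ : ℝ → ℂ be any solution of −y'' + p·y = z²·y on ℝ, and let f : ℝ → ℂ solve −f'' + (p+q)·f = z²·f on ℝ with f = y₀ and f' = y₀' on [t,∞). Then for every x ≤ t: f(x) = y₀(x) − ∫ₓᵗ (θ(τ,z)·φ(x,z) − φ(τ,z)·θ(x,z))·q(τ)·f(τ) dτ. -/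
open MeasureTheory

noncomputable section

namespace Statement4Aux

open intervalIntegral Set

lemma II_congr {f g : ℝ → ℝ} {a b : ℝ} (h : f =ᵐ[(volume : Measure ℝ)] g)
    (hf : IntervalIntegrable f volume a b) : IntervalIntegrable g volume a b := by
  rw [intervalIntegrable_iff] at hf ⊢
  exact hf.congr (ae_restrict_of_ae h)

lemma periodic_II {p : ℝ → ℝ}
    (hper : ∀ᵐ x ∂(volume : Measure ℝ), p (x + 1) = p x)
    (hpint : IntegrableOn p (Set.Icc 0 1)) (a b : ℝ) :
    IntervalIntegrable p volume a b := by
  have hper' : (fun x => p (x + 1)) =ᵐ[(volume : Measure ℝ)] p := hper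
  have hsub : p =ᵐ[(volume : Measure ℝ)] fun x => p (x - 1) := by
    have hmp : Filter.Tendsto (fun x : ℝ => x - 1) (ae volume) (ae volume) := by
      have : MeasurePreserving (fun x : ℝ => x + (-1)) volume volume :=
        measurePreserving_add_right volume (-1)
      have h2 := this.quasiMeasurePreserving.tendsto_ae
      simpa [sub_eq_add_neg] using h2
    have h3 := hper'.comp_tendsto hmp
    filter_upwards [h3] with y hy
    simpa [Function.comp, sub_add_cancel] using hy
  have up : ∀ c : ℝ, IntervalIntegrable p volume c (c + 1) →
      IntervalIntegrable p volume (c + 1) (c + 2) := by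
    intro c hf
    have h1 := hf.comp_sub_right 1
    have h2 : IntervalIntegrable (fun x => p (x - 1)) volume (c + 1) (c + 2) := by
      have e : c + 1 + 1 = c + 2 := by ring
      rwa [e] at h1
    exact II_congr hsub.symm h2
  have down : ∀ c : ℝ, IntervalIntegrable p volume c (c + 1) →
      IntervalIntegrable p volume (c - 1) c := by
    intro c hf
    have h1 := hf.comp_add_right 1
    have h2 : IntervalIntegrable (fun x => p (x + 1)) volume (c - 1) c := by
      have e : c + 1 - 1 = c := by ring
      rwa [e] at h1
    exact II_congr hper' h2
  have base : IntervalIntegrable p volume 0 1 :=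
    (intervalIntegrable_iff_integrableOn_Icc_of_le (by norm_num)).2 hpint
  have key : ∀ n : ℕ, IntervalIntegrable p volume (-(n : ℝ)) ((n : ℝ) + 1) := by
    intro n
    induction n with
    | zero => simpa using base
    | succ n ih =>
      have hle : -(n : ℝ) ≤ (n : ℝ) + 1 := by
        have := n.cast_nonneg (α := ℝ); linarith
      have hmem1 : (n : ℝ) ∈ Set.uIcc (-(n : ℝ)) ((n : ℝ) + 1) := by
        rw [Set.uIcc_of_le hle]
        constructor <;> [linarith [n.cast_nonneg (α := ℝ)]; linarith]
      have h1 : IntervalIntegrable p volume (n : ℝ) ((n : ℝ) + 1) :=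
        ih.mono_set (Set.uIcc_subset_uIcc hmem1 Set.right_mem_uIcc)
      have hmem2 : (-(n : ℝ) + 1) ∈ Set.uIcc (-(n : ℝ)) ((n : ℝ) + 1) := by
        rw [Set.uIcc_of_le hle]
        constructor <;> [linarith; linarith [n.cast_nonneg (α := ℝ)]]
      have h2 : IntervalIntegrable p volume (-(n : ℝ)) (-(n : ℝ) + 1) :=
        ih.mono_set (Set.uIcc_subset_uIcc Set.left_mem_uIcc hmem2)
      have h3 : IntervalIntegrable p volume (-(n : ℝ) - 1) (-(n : ℝ)) := down _ h2
      have h4 : IntervalIntegrable p volume ((n : ℝ) + 1) ((n : ℝ) + 2) := up _ h1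
      have h5 : IntervalIntegrable p volume (-(n : ℝ) - 1) ((n : ℝ) + 2) :=
        (h3.trans ih).trans h4
      have e1 : (-(↑(n + 1) : ℝ)) = -(n : ℝ) - 1 := by push_cast; ring
      have e2 : ((↑(n + 1) : ℝ) + 1) = (n : ℝ) + 2 := by push_cast; ring
      rw [e1, e2]
      exact h5
  obtain ⟨n, hn⟩ := exists_nat_ge (max |a| |b|)
  have ha : |a| ≤ (n : ℝ) := le_trans (le_max_left _ _) hn
  have hb : |b| ≤ (n : ℝ) := le_trans (le_max_right _ _) hn
  rw [abs_le] at ha hb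
  have hle : -(n : ℝ) ≤ (n : ℝ) + 1 := by
    have := n.cast_nonneg (α := ℝ); linarith
  refine (key n).mono_set (Set.uIcc_subset_uIcc ?_ ?_) <;>
    rw [Set.uIcc_of_le hle] <;> constructor <;> linarith [ha.1, ha.2, hb.1, hb.2]

lemma pot_II {P : ℝ → ℝ} (hP : ∀ a b : ℝ, IntervalIntegrable P volume a b) (z : ℂ)
    {y : ℝ → ℂ} (hy : Continuous y) (a b : ℝ) :
    IntervalIntegrable (fun s => ((P s : ℂ) - z ^ 2) * y s) volume a b := by
  have h1 : IntervalIntegrable (fun s => (P s : ℂ)) volume a b := by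
    have h := hP a b
    rw [intervalIntegrable_iff] at h ⊢
    exact h.ofReal
  exact (h1.sub intervalIntegrable_const).mul_continuousOn hy.continuousOn

lemma tri_swap {g w : ℝ → ℂ} {a b : ℝ} (hab : a ≤ b)
    (hg : IntervalIntegrable g volume a b) (hw : IntervalIntegrable w volume a b) :
    ∫ x in a..b, (∫ s in a..x, g s) * w x = ∫ s in a..b, g s * ∫ x in s..b, w x := by
  have hgI : IntegrableOn g (Set.Ioc a b) :=
    (intervalIntegrable_iff_integrableOn_Ioc_of_le hab).1 hg
  have hwI : IntegrableOn w (Set.Ioc a b) :=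
    (intervalIntegrable_iff_integrableOn_Ioc_of_le hab).1 hw
  set S : Set (ℝ × ℝ) := {q : ℝ × ℝ | q.2 ≤ q.1} with hSdef
  have hS : MeasurableSet S := measurableSet_le measurable_snd measurable_fst
  set F : ℝ × ℝ → ℂ := S.indicator (fun q => w q.1 * g q.2) with hFdef
  have hH : Integrable (fun q : ℝ × ℝ => w q.1 * g q.2)
      ((volume.restrict (Set.Ioc a b)).prod (volume.restrict (Set.Ioc a b))) :=
    hwI.mul_prod hgI
  have hF : Integrable F
      ((volume.restrict (Set.Ioc a b)).prod (volume.restrict (Set.Ioc a b))) :=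
    hH.indicator hS
  have step1 : ∫ x in a..b, (∫ s in a..x, g s) * w x
      = ∫ x in Set.Ioc a b, ∫ s in Set.Ioc a b, F (x, s) := by
    rw [intervalIntegral.integral_of_le hab]
    apply setIntegral_congr_fun measurableSet_Ioc
    intro x hx
    have hax : a ≤ x := hx.1.le
    have hxb : x ≤ b := hx.2
    have e1 : (∫ s in a..x, g s) = ∫ s in Set.Ioc a x, g s :=
      intervalIntegral.integral_of_le hax
    have e2 : ∀ s : ℝ, F (x, s) = (Set.Iic x).indicator (fun s => w x * g s) s := by
      intro s
      simp only [hFdef, Set.indicator_apply, hSdef, Set.mem_setOf_eq, Set.mem_Iic]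
    calc (∫ s in a..x, g s) * w x = ∫ s in Set.Ioc a x, g s * w x := by
          rw [e1, MeasureTheory.integral_mul_const]
      _ = ∫ s in Set.Ioc a x, w x * g s := by simp [mul_comm]
      _ = ∫ s in Set.Ioc a b ∩ Set.Iic x, w x * g s := by
          rw [Set.Ioc_inter_Iic, min_eq_right hxb]
      _ = ∫ s in Set.Ioc a b, (Set.Iic x).indicator (fun s => w x * g s) s := by
          rw [setIntegral_indicator measurableSet_Iic]
      _ = ∫ s in Set.Ioc a b, F (x, s) := by
          apply setIntegral_congr_fun measurableSet_Ioc
          intro s _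
          exact (e2 s).symm
  have step2 : ∫ x in Set.Ioc a b, ∫ s in Set.Ioc a b, F (x, s)
      = ∫ s in Set.Ioc a b, ∫ x in Set.Ioc a b, F (x, s) :=
    integral_integral_swap hF
  have step3 : ∫ s in Set.Ioc a b, ∫ x in Set.Ioc a b, F (x, s)
      = ∫ s in a..b, g s * ∫ x in s..b, w x := by
    rw [intervalIntegral.integral_of_le hab]
    apply setIntegral_congr_fun measurableSet_Ioc
    intro s hs
    have has : a < s := hs.1
    have hsb : s ≤ b := hs.2
    have e2 : ∀ x : ℝ, F (x, s) = (Set.Ici s).indicator (fun x => w x * g s) x := by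
      intro x
      simp only [hFdef, Set.indicator_apply, hSdef, Set.mem_setOf_eq, Set.mem_Ici]
    have hset : Set.Ioc a b ∩ Set.Ici s = Set.Icc s b := by
      ext y
      simp only [Set.mem_inter_iff, Set.mem_Ioc, Set.mem_Ici, Set.mem_Icc]
      constructor
      · rintro ⟨⟨_, h2⟩, h3⟩; exact ⟨h3, h2⟩
      · rintro ⟨h1, h2⟩; exact ⟨⟨lt_of_lt_of_le has h1, h2⟩, h1⟩
    calc ∫ x in Set.Ioc a b, F (x, s)
        = ∫ x in Set.Ioc a b, (Set.Ici s).indicator (fun x => w x * g s) x := by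
          apply setIntegral_congr_fun measurableSet_Ioc
          intro x _
          exact e2 x
      _ = ∫ x in Set.Ioc a b ∩ Set.Ici s, w x * g s := by
          rw [setIntegral_indicator measurableSet_Ici]
      _ = ∫ x in Set.Icc s b, w x * g s := by rw [hset]
      _ = ∫ x in Set.Ioc s b, w x * g s := integral_Icc_eq_integral_Ioc
      _ = (∫ x in Set.Ioc s b, w x) * g s := integral_mul_const _ _
      _ = g s * ∫ x in s..b, w x := by
          rw [intervalIntegral.integral_of_le hsb, mul_comm]
  rw [step1, step2, step3]

lemma parts {u uD v w : ℝ → ℂ} {a b : ℝ} (hab : a ≤ b)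
    (hu : ∀ x, HasDerivAt u (uD x) x)
    (huD : IntervalIntegrable uD volume a b)
    (hv : ∀ x, v x = v a + ∫ s in a..x, w s)
    (hw : IntervalIntegrable w volume a b) :
    ∫ x in a..b, (u x * w x + uD x * v x) = u b * v b - u a * v a := by
  have hucont : Continuous u := by
    refine continuous_iff_continuousAt.2 fun x => (hu x).continuousAt
  have hvcont : ContinuousOn v (Set.uIcc a b) := by
    have h1 : ContinuousOn (fun x => ∫ s in a..x, w s) (Set.uIcc a b) :=
      intervalIntegral.continuousOn_primitive_interval' hw Set.left_mem_uIcc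
    have : v = fun x => v a + ∫ s in a..x, w s := funext hv
    rw [this]
    exact continuousOn_const.add h1
  have hprim : ContinuousOn (fun x => ∫ s in a..x, uD s) (Set.uIcc a b) :=
    intervalIntegral.continuousOn_primitive_interval' huD Set.left_mem_uIcc
  have hFTC : ∀ x ∈ Set.uIcc a b, u x = u a + ∫ s in a..x, uD s := by
    intro x hx
    have h1 : ∫ s in a..x, uD s = u x - u a :=
      intervalIntegral.integral_eq_sub_of_hasDerivAt (fun y _ => hu y)
        (huD.mono_set (Set.uIcc_subset_uIcc Set.left_mem_uIcc hx))
    rw [h1]; ring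
  have hIuw : IntervalIntegrable (fun x => u x * w x) volume a b :=
    hw.continuousOn_mul hucont.continuousOn
  have hIuDv : IntervalIntegrable (fun x => uD x * v x) volume a b :=
    huD.mul_continuousOn hvcont
  rw [intervalIntegral.integral_add hIuw hIuDv]
  have e1 : ∫ x in a..b, u x * w x
      = ∫ x in a..b, (u a + ∫ s in a..x, uD s) * w x := by
    apply intervalIntegral.integral_congr
    intro x hx
    show u x * w x = (u a + ∫ (s : ℝ) in a..x, uD s) * w x
    rw [← hFTC x hx]
  have e2 : ∫ x in a..b, (u a + ∫ s in a..x, uD s) * w x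
      = u a * (∫ x in a..b, w x) + ∫ x in a..b, (∫ s in a..x, uD s) * w x := by
    have h1 : IntervalIntegrable (fun x => u a * w x) volume a b := hw.const_mul _
    have h2 : IntervalIntegrable (fun x => (∫ s in a..x, uD s) * w x) volume a b :=
      hw.continuousOn_mul hprim
    rw [← intervalIntegral.integral_const_mul, ← intervalIntegral.integral_add h1 h2]
    apply intervalIntegral.integral_congr
    intro x _
    ring
  have e3 : ∫ x in a..b, (∫ s in a..x, uD s) * w x
      = ∫ s in a..b, uD s * ∫ x in s..b, w x := tri_swap hab huD hw
  have e4 : ∀ s ∈ Set.uIcc a b, (∫ x in s..b, w x) = v b - v s := by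
    intro s hs
    have hsplit : (∫ x in a..s, w x) + ∫ x in s..b, w x = ∫ x in a..b, w x :=
      intervalIntegral.integral_add_adjacent_intervals
        (hw.mono_set (Set.uIcc_subset_uIcc Set.left_mem_uIcc hs))
        (hw.mono_set (Set.uIcc_subset_uIcc hs Set.right_mem_uIcc))
    rw [hv b, hv s, ← hsplit]; ring
  have e5 : ∫ s in a..b, uD s * ∫ x in s..b, w x
      = ∫ s in a..b, uD s * (v b - v s) := by
    apply intervalIntegral.integral_congr
    intro s hs
    show uD s * (∫ (x : ℝ) in s..b, w x) = uD s * (v b - v s)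
    rw [e4 s hs]
  have e6 : ∫ s in a..b, uD s * (v b - v s)
      = (∫ s in a..b, uD s) * v b - ∫ s in a..b, uD s * v s := by
    have h1 : IntervalIntegrable (fun s => uD s * v b) volume a b := huD.mul_const _
    rw [← intervalIntegral.integral_mul_const, ← intervalIntegral.integral_sub h1 hIuDv]
    apply intervalIntegral.integral_congr
    intro s _
    ring
  have e7 : (∫ s in a..b, uD s) = u b - u a :=
    intervalIntegral.integral_eq_sub_of_hasDerivAt (fun y _ => hu y) huD
  have e8 : ∫ x in a..b, w x = v b - v a := by rw [hv b]; ring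
  rw [e1, e2, e3, e5, e6, e7, e8]
  ring

lemma wron_le {u uD gu v vD gv : ℝ → ℂ} {a b : ℝ} (hab : a ≤ b)
    (hu : ∀ x, HasDerivAt u (uD x) x) (hv : ∀ x, HasDerivAt v (vD x) x)
    (huD : ∀ x, uD x = uD a + ∫ s in a..x, gu s)
    (hvD : ∀ x, vD x = vD a + ∫ s in a..x, gv s)
    (hgu : ∀ c d : ℝ, IntervalIntegrable gu volume c d)
    (hgv : ∀ c d : ℝ, IntervalIntegrable gv volume c d) :
    u b * vD b - uD b * v b - (u a * vD a - uD a * v a)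
      = ∫ x in a..b, (u x * gv x - v x * gu x) := by
  have hucont : Continuous u := continuous_iff_continuousAt.2 fun x => (hu x).continuousAt
  have hvcont : Continuous v := continuous_iff_continuousAt.2 fun x => (hv x).continuousAt
  have huDcont : Continuous uD := by
    have : uD = fun x => uD a + ∫ s in a..x, gu s := funext huD
    rw [this]
    exact continuous_const.add (intervalIntegral.continuous_primitive hgu a)
  have hvDcont : Continuous vD := by
    have : vD = fun x => vD a + ∫ s in a..x, gv s := funext hvD
    rw [this]
    exact continuous_const.add (intervalIntegral.continuous_primitive hgv a)
  have P1 : ∫ x in a..b, (u x * gv x + uD x * vD x) = u b * vD b - u a * vD a :=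
    parts hab hu (huDcont.intervalIntegrable a b) hvD (hgv a b)
  have P2 : ∫ x in a..b, (v x * gu x + vD x * uD x) = v b * uD b - v a * uD a :=
    parts hab hv (hvDcont.intervalIntegrable a b) huD (hgu a b)
  have I1 : IntervalIntegrable (fun x => u x * gv x + uD x * vD x) volume a b :=
    ((hgv a b).continuousOn_mul hucont.continuousOn).add
      ((huDcont.intervalIntegrable a b).mul_continuousOn hvDcont.continuousOn)
  have I2 : IntervalIntegrable (fun x => v x * gu x + vD x * uD x) volume a b :=
    ((hgu a b).continuousOn_mul hvcont.continuousOn).add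
      ((hvDcont.intervalIntegrable a b).mul_continuousOn huDcont.continuousOn)
  have hsub : ∫ x in a..b, (u x * gv x - v x * gu x)
      = (∫ x in a..b, (u x * gv x + uD x * vD x))
        - ∫ x in a..b, (v x * gu x + vD x * uD x) := by
    rw [← intervalIntegral.integral_sub I1 I2]
    apply intervalIntegral.integral_congr
    intro x _
    ring
  rw [hsub, P1, P2]
  ring

lemma wron_all {u uD gu v vD gv : ℝ → ℂ}
    (hu : ∀ x, HasDerivAt u (uD x) x) (hv : ∀ x, HasDerivAt v (vD x) x)
    (huD0 : ∀ x, uD x = uD 0 + ∫ s in (0:ℝ)..x, gu s)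
    (hvD0 : ∀ x, vD x = vD 0 + ∫ s in (0:ℝ)..x, gv s)
    (hgu : ∀ c d : ℝ, IntervalIntegrable gu volume c d)
    (hgv : ∀ c d : ℝ, IntervalIntegrable gv volume c d)
    (a b : ℝ) :
    u b * vD b - uD b * v b - (u a * vD a - uD a * v a)
      = ∫ x in a..b, (u x * gv x - v x * gu x) := by
  have hrep : ∀ c x : ℝ, uD x = uD c + ∫ s in c..x, gu s := by
    intro c x
    have h3 : (∫ s in (0:ℝ)..c, gu s) + ∫ s in c..x, gu s = ∫ s in (0:ℝ)..x, gu s :=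
      intervalIntegral.integral_add_adjacent_intervals (hgu 0 c) (hgu c x)
    rw [huD0 x, huD0 c, ← h3]; ring
  have hrepv : ∀ c x : ℝ, vD x = vD c + ∫ s in c..x, gv s := by
    intro c x
    have h3 : (∫ s in (0:ℝ)..c, gv s) + ∫ s in c..x, gv s = ∫ s in (0:ℝ)..x, gv s :=
      intervalIntegral.integral_add_adjacent_intervals (hgv 0 c) (hgv c x)
    rw [hvD0 x, hvD0 c, ← h3]; ring
  rcases le_total a b with hab | hba
  · exact wron_le hab hu hv (hrep a) (hrepv a) hgu hgv
  · have h := wron_le hba hu hv (hrep b) (hrepv b) hgu hgv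
    rw [intervalIntegral.integral_symm, ← h]
    ring

end Statement4Aux

open Statement4Aux in
/-- Volterra representation of the perturbed solution: if `f` solves
`-f''+(p+q)f = z²f` and coincides (with its derivative) with a solution `y₀`
of `-y''+p·y = z²y` on `[t,∞)`, then for `x ≤ t`
`f(x) = y₀(x) − ∫ₓᵗ (θ(τ)φ(x) − φ(τ)θ(x)) q(τ) f(τ) dτ`. -/
theorem statement_4
    (p q : ℝ → ℝ) (t : ℝ) (ht : 0 < t)
    (hper : ∀ᵐ x ∂(volume : Measure ℝ), p (x + 1) = p x)
    (hpint : IntegrableOn p (Set.Icc 0 1))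
    (hq : Integrable q) (hqsupp : Function.support q ⊆ Set.Icc 0 t)
    (z : ℂ)
    (θ φ θD φD : ℝ → ℂ)
    (hθ : IsSol p z θ θD) (hθ0 : θ 0 = 1) (hθD0 : θD 0 = 0)
    (hφ : IsSol p z φ φD) (hφ0 : φ 0 = 0) (hφD0 : φD 0 = 1)
    (y₀ y₀D f fD : ℝ → ℂ)
    (hy₀ : IsSol p z y₀ y₀D)
    (hf : IsSol (fun x => p x + q x) z f fD)
    (hmatch : ∀ x : ℝ, t ≤ x → f x = y₀ x ∧ fD x = y₀D x) :
    ∀ x : ℝ, x ≤ t →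
      f x = y₀ x - ∫ τ in x..t, (θ τ * φ x - φ τ * θ x) * (q τ : ℂ) * f τ := by
  have hploc : ∀ a b : ℝ, IntervalIntegrable p volume a b := periodic_II hper hpint
  have hqloc : ∀ a b : ℝ, IntervalIntegrable q volume a b := fun a b => hq.intervalIntegrable
  have hpqloc : ∀ a b : ℝ, IntervalIntegrable (fun x => p x + q x) volume a b :=
    fun a b => (hploc a b).add (hqloc a b)
  have hθc : Continuous θ := continuous_iff_continuousAt.2 fun x => (hθ.1 x).continuousAt
  have hφc : Continuous φ := continuous_iff_continuousAt.2 fun x => (hφ.1 x).continuousAt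
  have hfc : Continuous f := continuous_iff_continuousAt.2 fun x => (hf.1 x).continuousAt
  have hyc : Continuous y₀ := continuous_iff_continuousAt.2 fun x => (hy₀.1 x).continuousAt
  have hgθ : ∀ a b : ℝ, IntervalIntegrable (fun s => ((p s : ℂ) - z ^ 2) * θ s) volume a b :=
    pot_II hploc z hθc
  have hgφ : ∀ a b : ℝ, IntervalIntegrable (fun s => ((p s : ℂ) - z ^ 2) * φ s) volume a b :=
    pot_II hploc z hφc
  have hgy : ∀ a b : ℝ, IntervalIntegrable (fun s => ((p s : ℂ) - z ^ 2) * y₀ s) volume a b :=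
    pot_II hploc z hyc
  have hgf : ∀ a b : ℝ,
      IntervalIntegrable (fun s => (((p s + q s : ℝ) : ℂ) - z ^ 2) * f s) volume a b :=
    pot_II hpqloc z hfc
  have hqC : ∀ a b : ℝ, IntervalIntegrable (fun s => (q s : ℂ)) volume a b := by
    intro a b
    have h := hqloc a b
    rw [intervalIntegrable_iff] at h ⊢
    exact h.ofReal
  intro x hx
  have Wθf := wron_all hθ.1 hf.1 hθ.2 hf.2 hgθ hgf x t
  have Wφf := wron_all hφ.1 hf.1 hφ.2 hf.2 hgφ hgf x t
  have Wθy := wron_all hθ.1 hy₀.1 hθ.2 hy₀.2 hgθ hgy x t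
  have Wφy := wron_all hφ.1 hy₀.1 hφ.2 hy₀.2 hgφ hgy x t
  have Wθφ := wron_all hθ.1 hφ.1 hθ.2 hφ.2 hgθ hgφ 0 x
  have hA : ∫ τ in x..t,
      (θ τ * ((((p τ + q τ : ℝ) : ℂ) - z ^ 2) * f τ) - f τ * (((p τ : ℂ) - z ^ 2) * θ τ))
      = ∫ τ in x..t, (q τ : ℂ) * θ τ * f τ := by
    apply intervalIntegral.integral_congr
    intro τ _
    push_cast
    ring
  have hB : ∫ τ in x..t,
      (φ τ * ((((p τ + q τ : ℝ) : ℂ) - z ^ 2) * f τ) - f τ * (((p τ : ℂ) - z ^ 2) * φ τ))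
      = ∫ τ in x..t, (q τ : ℂ) * φ τ * f τ := by
    apply intervalIntegral.integral_congr
    intro τ _
    push_cast
    ring
  have hθy0 : ∫ τ in x..t,
      (θ τ * (((p τ : ℂ) - z ^ 2) * y₀ τ) - y₀ τ * (((p τ : ℂ) - z ^ 2) * θ τ)) = 0 := by
    have : (fun τ => θ τ * (((p τ : ℂ) - z ^ 2) * y₀ τ) - y₀ τ * (((p τ : ℂ) - z ^ 2) * θ τ))
        = fun _ => (0 : ℂ) := funext fun τ => by ring
    rw [this, intervalIntegral.integral_zero]
  have hφy0 : ∫ τ in x..t,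
      (φ τ * (((p τ : ℂ) - z ^ 2) * y₀ τ) - y₀ τ * (((p τ : ℂ) - z ^ 2) * φ τ)) = 0 := by
    have : (fun τ => φ τ * (((p τ : ℂ) - z ^ 2) * y₀ τ) - y₀ τ * (((p τ : ℂ) - z ^ 2) * φ τ))
        = fun _ => (0 : ℂ) := funext fun τ => by ring
    rw [this, intervalIntegral.integral_zero]
  have hθφ0 : ∫ τ in (0:ℝ)..x,
      (θ τ * (((p τ : ℂ) - z ^ 2) * φ τ) - φ τ * (((p τ : ℂ) - z ^ 2) * θ τ)) = 0 := by
    have : (fun τ => θ τ * (((p τ : ℂ) - z ^ 2) * φ τ) - φ τ * (((p τ : ℂ) - z ^ 2) * θ τ))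
        = fun _ => (0 : ℂ) := funext fun τ => by ring
    rw [this, intervalIntegral.integral_zero]
  rw [hA] at Wθf
  rw [hB] at Wφf
  rw [hθy0] at Wθy
  rw [hφy0] at Wφy
  rw [hθφ0, hθ0, hφ0, hθD0, hφD0] at Wθφ
  obtain ⟨hft, hfDt⟩ := hmatch t le_rfl
  rw [hft, hfDt] at Wθf Wφf
  have hqθf : IntervalIntegrable (fun τ => (q τ : ℂ) * θ τ * f τ) volume x t := by
    have h := (hqC x t).mul_continuousOn (hθc.mul hfc).continuousOn
    have e : (fun τ => (q τ : ℂ) * θ τ * f τ) = fun τ => (q τ : ℂ) * (θ τ * f τ) :=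
      funext fun τ => by ring
    rw [e]; exact h
  have hqφf : IntervalIntegrable (fun τ => (q τ : ℂ) * φ τ * f τ) volume x t := by
    have h := (hqC x t).mul_continuousOn (hφc.mul hfc).continuousOn
    have e : (fun τ => (q τ : ℂ) * φ τ * f τ) = fun τ => (q τ : ℂ) * (φ τ * f τ) :=
      funext fun τ => by ring
    rw [e]; exact h
  have hsplit : ∫ τ in x..t, (θ τ * φ x - φ τ * θ x) * (q τ : ℂ) * f τ
      = φ x * (∫ τ in x..t, (q τ : ℂ) * θ τ * f τ)
        - θ x * ∫ τ in x..t, (q τ : ℂ) * φ τ * f τ := by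
    rw [← intervalIntegral.integral_const_mul, ← intervalIntegral.integral_const_mul,
      ← intervalIntegral.integral_sub (hqθf.const_mul _) (hqφf.const_mul _)]
    apply intervalIntegral.integral_congr
    intro τ _
    ring
  rw [hsplit]
  linear_combination (θ x) * Wφf - (φ x) * Wθf + (φ x) * Wθy - (θ x) * Wφy
    + (y₀ x - f x) * Wθφ
end
end

section
/- For every x ∈ ℝ and z ∈ ℂ, the value at 1 of the solution of the translated equation satisfies φ(1,z,x) = φ(1,z)·θ(x,z)² − θ'(1,z)·φ(x,z)² + 2β(z)·θ(x,z)·φ(x,z), where ' denotes the derivative in the first (space) variable. -/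
open MeasureTheory

noncomputable section

open intervalIntegral

namespace Statement8Aux

lemma parts_aux {u u' f : ℝ → ℂ} {a b : ℝ} (hab : a ≤ b)
    (hu : ∀ s, HasDerivAt u (u' s) s) (hu'c : Continuous u')
    (hf : IntervalIntegrable f volume a b) :
    (∫ s in a..b, u' s * ∫ r in a..s, f r)
      = ∫ r in a..b, (u b - u r) * f r := by
  have hfi : IntegrableOn f (Set.Ioc a b) := hf.1
  set S : Set (ℝ × ℝ) := {q : ℝ × ℝ | q.2 ≤ q.1 ∧ a < q.2} with hSdef
  have hS : MeasurableSet S :=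
    (measurableSet_le measurable_snd measurable_fst).inter
      (measurableSet_lt measurable_const measurable_snd)
  set F : ℝ × ℝ → ℂ := S.indicator (fun q => u' q.1 * f q.2) with hFdef
  have hu'i : IntegrableOn u' (Set.Ioc a b) := (hu'c.intervalIntegrable a b).1
  have hFi : Integrable F
      ((volume.restrict (Set.Ioc a b)).prod (volume.restrict (Set.Ioc a b))) :=
    (hu'i.mul_prod hfi).indicator hS
  have key1 : ∀ s ∈ Set.Ioc a b,
      u' s * (∫ r in a..s, f r) = ∫ r in Set.Ioc a b, F (s, r) := by
    intro s hs
    have h1 : (fun r => F (s, r)) = (Set.Ioc a s).indicator (fun r => u' s * f r) := by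
      funext r
      by_cases h : r ∈ Set.Ioc a s
      · rw [Set.indicator_of_mem h, hFdef, Set.indicator_of_mem (show (s, r) ∈ S from ⟨h.2, h.1⟩)]
      · rw [Set.indicator_of_notMem h, hFdef, Set.indicator_of_notMem]
        intro hmem; exact h ⟨hmem.2, hmem.1⟩
    rw [h1, MeasureTheory.integral_indicator measurableSet_Ioc,
      Measure.restrict_restrict measurableSet_Ioc,
      Set.inter_eq_self_of_subset_left (Set.Ioc_subset_Ioc_right hs.2),
      MeasureTheory.integral_const_mul, intervalIntegral.integral_of_le hs.1.le]
  have key2 : ∀ r ∈ Set.Ioc a b,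
      (∫ s in Set.Ioc a b, F (s, r)) = (u b - u r) * f r := by
    intro r hr
    have h1 : (fun s => F (s, r)) = (Set.Ici r).indicator (fun s => u' s * f r) := by
      funext s
      by_cases h : s ∈ Set.Ici r
      · rw [Set.indicator_of_mem h, hFdef, Set.indicator_of_mem (show (s, r) ∈ S from ⟨h, hr.1⟩)]
      · rw [Set.indicator_of_notMem h, hFdef, Set.indicator_of_notMem]
        intro hmem; exact h hmem.1
    have hset : Set.Ici r ∩ Set.Ioc a b = Set.Icc r b := by
      ext t
      simp only [Set.mem_inter_iff, Set.mem_Ici, Set.mem_Ioc, Set.mem_Icc]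
      constructor
      · rintro ⟨h1, _, h3⟩; exact ⟨h1, h3⟩
      · rintro ⟨h1, h2⟩; exact ⟨h1, lt_of_lt_of_le hr.1 h1, h2⟩
    have hftc : (∫ s in r..b, u' s) = u b - u r :=
      integral_eq_sub_of_hasDerivAt (fun t _ => hu t) (hu'c.intervalIntegrable r b)
    rw [h1, MeasureTheory.integral_indicator measurableSet_Ici,
      Measure.restrict_restrict measurableSet_Ici, hset,
      MeasureTheory.integral_mul_const, MeasureTheory.integral_Icc_eq_integral_Ioc,
      ← intervalIntegral.integral_of_le hr.2, hftc]
  rw [intervalIntegral.integral_of_le hab,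
    MeasureTheory.setIntegral_congr_fun measurableSet_Ioc key1,
    MeasureTheory.integral_integral_swap (f := fun s r => F (s, r)) (by exact hFi),
    MeasureTheory.setIntegral_congr_fun measurableSet_Ioc key2,
    ← intervalIntegral.integral_of_le hab]


lemma parts {u u' g f : ℝ → ℂ} {a b : ℝ} (hab : a ≤ b)
    (hu : ∀ s, HasDerivAt u (u' s) s) (hu'c : Continuous u')
    (hf : IntervalIntegrable f volume a b)
    (hg : ∀ s, g s = g a + ∫ r in a..s, f r) :
    u b * g b - u a * g a = ∫ s in a..b, (u' s * g s + u s * f s) := by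
  have huc : Continuous u := by
    rw [continuous_iff_continuousAt]; exact fun t => (hu t).continuousAt
  set G : ℝ → ℂ := fun s => ∫ r in a..s, f r with hGdef
  have hGc : ContinuousOn G (Set.uIcc a b) :=
    intervalIntegral.continuousOn_primitive_interval' hf Set.left_mem_uIcc
  have hgc : ContinuousOn g (Set.uIcc a b) := by
    have hfun : g = fun s => g a + G s := funext hg
    rw [hfun]; exact continuousOn_const.add hGc
  have i1 : IntervalIntegrable (fun s => u' s * g s) volume a b :=
    (hu'c.continuousOn.mul hgc).intervalIntegrable
  have i2 : IntervalIntegrable (fun s => u s * f s) volume a b :=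
    hf.continuousOn_mul huc.continuousOn
  have i4 : IntervalIntegrable (fun s => u' s * G s) volume a b :=
    (hu'c.continuousOn.mul hGc).intervalIntegrable
  have i3 : IntervalIntegrable (fun s => u' s * g a) volume a b :=
    (hu'c.continuousOn.mul continuousOn_const).intervalIntegrable
  have i5 : IntervalIntegrable (fun s => (u b - u s) * f s) volume a b :=
    hf.continuousOn_mul (continuousOn_const.sub huc.continuousOn)
  have hftc : (∫ s in a..b, u' s) = u b - u a :=
    integral_eq_sub_of_hasDerivAt (fun t _ => hu t) (hu'c.intervalIntegrable a b)
  have e1 : (∫ s in a..b, (u' s * g s + u s * f s))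
      = (∫ s in a..b, u' s * g s) + ∫ s in a..b, u s * f s :=
    intervalIntegral.integral_add i1 i2
  have e2 : (∫ s in a..b, u' s * g s)
      = (∫ s in a..b, (u' s * g a + u' s * G s)) := by
    apply intervalIntegral.integral_congr
    intro s _
    show u' s * g s = u' s * g a + u' s * G s
    rw [hg s]; ring
  have e3 : (∫ s in a..b, (u' s * g a + u' s * G s))
      = (∫ s in a..b, u' s * g a) + ∫ s in a..b, u' s * G s :=
    intervalIntegral.integral_add i3 i4
  have e4 : (∫ s in a..b, u' s * g a) = (u b - u a) * g a := by
    rw [intervalIntegral.integral_mul_const, hftc]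
  have e5 : (∫ s in a..b, u' s * G s) = ∫ r in a..b, (u b - u r) * f r :=
    parts_aux hab hu hu'c hf
  have e6 : (∫ s in a..b, (u b - u s) * f s) + (∫ s in a..b, u s * f s)
      = ∫ s in a..b, u b * f s := by
    rw [← intervalIntegral.integral_add i5 i2]
    apply intervalIntegral.integral_congr
    intro s _; ring
  have e7 : (∫ s in a..b, u b * f s) = u b * ∫ s in a..b, f s :=
    intervalIntegral.integral_const_mul _ _
  rw [hg b]
  linear_combination -e1 - e2 - e3 - e4 - e5 - e6 - e7

/-- Solutions of `y'' = Q y` in integral form. -/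
def SolQ (Q : ℝ → ℂ) (y y' : ℝ → ℂ) : Prop :=
  (∀ x : ℝ, HasDerivAt y (y' x) x) ∧
  (∀ x : ℝ, y' x = y' 0 + ∫ s in (0:ℝ)..x, Q s * y s)

lemma SolQ.cont {Q y y'} (h : SolQ Q y y') : Continuous y := by
  rw [continuous_iff_continuousAt]; exact fun t => (h.1 t).continuousAt

lemma SolQ.fInt {Q y y'} (hQ : ∀ a b : ℝ, IntervalIntegrable Q volume a b)
    (h : SolQ Q y y') (a b : ℝ) :
    IntervalIntegrable (fun s => Q s * y s) volume a b :=
  (hQ a b).mul_continuousOn h.cont.continuousOn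

lemma SolQ.contD {Q y y'} (hQ : ∀ a b : ℝ, IntervalIntegrable Q volume a b)
    (h : SolQ Q y y') : Continuous y' := by
  have hfun : y' = fun x => y' 0 + ∫ s in (0:ℝ)..x, Q s * y s := funext h.2
  rw [hfun]
  exact continuous_const.add (intervalIntegral.continuous_primitive (h.fInt hQ) 0)

lemma SolQ.rep {Q y y'} (hQ : ∀ a b : ℝ, IntervalIntegrable Q volume a b)
    (h : SolQ Q y y') (a s : ℝ) :
    y' s = y' a + ∫ r in a..s, Q r * y r := by
  have hsub := intervalIntegral.integral_interval_sub_left (h.fInt hQ 0 s) (h.fInt hQ 0 a)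
  linear_combination h.2 s - h.2 a + hsub

lemma wronskian_eq {Q y1 y1' y2 y2' : ℝ → ℂ}
    (hQ : ∀ a b : ℝ, IntervalIntegrable Q volume a b)
    (h1 : SolQ Q y1 y1') (h2 : SolQ Q y2 y2') (x : ℝ) :
    y1 x * y2' x - y1' x * y2 x = y1 0 * y2' 0 - y1' 0 * y2 0 := by
  have main : ∀ a b : ℝ, a ≤ b →
      y1 b * y2' b - y1' b * y2 b = y1 a * y2' a - y1' a * y2 a := by
    intro a b hab
    have E1 := parts hab h1.1 (h1.contD hQ) (h2.fInt hQ a b) (fun s => h2.rep hQ a s)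
    have E2 := parts hab h2.1 (h2.contD hQ) (h1.fInt hQ a b) (fun s => h1.rep hQ a s)
    have iA : IntervalIntegrable (fun s => y1' s * y2' s + y1 s * (Q s * y2 s)) volume a b :=
      ((h1.contD hQ).continuousOn.mul (h2.contD hQ).continuousOn).intervalIntegrable.add
        ((h2.fInt hQ a b).continuousOn_mul h1.cont.continuousOn)
    have iB : IntervalIntegrable (fun s => y2' s * y1' s + y2 s * (Q s * y1 s)) volume a b :=
      ((h2.contD hQ).continuousOn.mul (h1.contD hQ).continuousOn).intervalIntegrable.add
        ((h1.fInt hQ a b).continuousOn_mul h2.cont.continuousOn)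
    have hzero : (∫ s in a..b, (y1' s * y2' s + y1 s * (Q s * y2 s)))
        - (∫ s in a..b, (y2' s * y1' s + y2 s * (Q s * y1 s))) = 0 := by
      rw [← intervalIntegral.integral_sub iA iB]
      have : (∫ s in a..b, ((y1' s * y2' s + y1 s * (Q s * y2 s))
          - (y2' s * y1' s + y2 s * (Q s * y1 s)))) = ∫ s in a..b, (0:ℂ) := by
        apply intervalIntegral.integral_congr
        intro s _; ring
      rw [this, intervalIntegral.integral_zero]
    linear_combination E1 - E2 + hzero
  rcases le_total 0 x with h | h
  · exact main 0 x h
  · exact (main x 0 h).symm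

lemma solQ_unique_zero {Q : ℝ → ℂ} (hQ : ∀ a b : ℝ, IntervalIntegrable Q volume a b)
    {t t' f f' y y' : ℝ → ℂ}
    (ht : SolQ Q t t') (hf : SolQ Q f f') (hy : SolQ Q y y')
    (hw : t 0 * f' 0 - t' 0 * f 0 ≠ 0)
    (hy0 : y 0 = 0) (hy'0 : y' 0 = 0) : ∀ x, y x = 0 := by
  intro x
  have h1 := wronskian_eq hQ ht hy x
  have h2 := wronskian_eq hQ hf hy x
  have h0 := wronskian_eq hQ ht hf x
  have key : y x * (t 0 * f' 0 - t' 0 * f 0) = 0 := by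
    rw [hy0, hy'0] at h1 h2
    linear_combination f x * h1 - t x * h2 - y x * h0
  exact ((mul_eq_zero.mp key).resolve_right hw)

lemma solQ_combo {Q y1 y1' y2 y2' : ℝ → ℂ}
    (hQ : ∀ a b : ℝ, IntervalIntegrable Q volume a b)
    (h1 : SolQ Q y1 y1') (h2 : SolQ Q y2 y2') (c1 c2 : ℂ) :
    SolQ Q (fun s => c1 * y1 s + c2 * y2 s) (fun s => c1 * y1' s + c2 * y2' s) := by
  constructor
  · intro s
    exact ((h1.1 s).const_mul c1).add ((h2.1 s).const_mul c2)
  · intro s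
    have hc : (∫ r in (0:ℝ)..s, Q r * (c1 * y1 r + c2 * y2 r))
        = ∫ r in (0:ℝ)..s, (c1 * (Q r * y1 r) + c2 * (Q r * y2 r)) := by
      apply intervalIntegral.integral_congr
      intro r _; ring
    rw [hc, intervalIntegral.integral_add ((h1.fInt hQ 0 s).const_mul c1)
        ((h2.fInt hQ 0 s).const_mul c2),
      intervalIntegral.integral_const_mul, intervalIntegral.integral_const_mul]
    linear_combination c1 * h1.2 s + c2 * h2.2 s

lemma solQ_translate {Q y y' : ℝ → ℂ}
    (hQ : ∀ a b : ℝ, IntervalIntegrable Q volume a b)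
    (h : SolQ Q y y') (τ : ℝ) :
    SolQ (fun s => Q (s + τ)) (fun s => y (s + τ)) (fun s => y' (s + τ)) := by
  constructor
  · intro s
    exact HasDerivAt.comp_add_const s τ (h.1 (s + τ))
  · intro s
    have hrep := h.rep hQ τ (s + τ)
    have hcv := intervalIntegral.integral_comp_add_right (a := (0:ℝ)) (b := s)
      (fun r => Q r * y r) τ
    rw [zero_add] at hcv
    show y' (s + τ) = y' (0 + τ) + ∫ r in (0:ℝ)..s, Q (r + τ) * y (r + τ)
    rw [zero_add, hrep, ← hcv]

lemma solQ_congr_ae {Q Q' y y' : ℝ → ℂ}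
    (hQQ' : ∀ᵐ s ∂(volume : Measure ℝ), Q s = Q' s)
    (h : SolQ Q y y') : SolQ Q' y y' := by
  refine ⟨h.1, fun s => ?_⟩
  rw [h.2 s]
  congr 1
  apply intervalIntegral.integral_congr_ae
  filter_upwards [hQQ'] with r hr _
  rw [hr]


lemma ofReal_II {f : ℝ → ℝ} {a b : ℝ} (h : IntervalIntegrable f volume a b) :
    IntervalIntegrable (fun x => (f x : ℂ)) volume a b :=
  ⟨h.1.ofReal, h.2.ofReal⟩

end Statement8Aux

open Statement8Aux

/-- The identity `φ(1,z,x) = φ(1,z)θ(x,z)² − θ'(1,z)φ(x,z)² + 2β(z)θ(x,z)φ(x,z)`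
for the solution `φ(·,z,x)` of the translated equation `−y'' + p(·+x)y = z²y`
with `y(0)=0, y'(0)=1`. -/
theorem statement_8
    (p : ℝ → ℝ)
    (hper : ∀ᵐ x ∂(volume : Measure ℝ), p (x + 1) = p x)
    (hpint : IntegrableOn p (Set.Icc 0 1))
    (θ φ θD φD : ℂ → ℝ → ℂ)
    (hθ : ∀ z : ℂ, IsSol p z (θ z) (θD z))
    (hθ0 : ∀ z : ℂ, θ z 0 = 1) (hθD0 : ∀ z : ℂ, θD z 0 = 0)
    (hφ : ∀ z : ℂ, IsSol p z (φ z) (φD z))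
    (hφ0 : ∀ z : ℂ, φ z 0 = 0) (hφD0 : ∀ z : ℂ, φD z 0 = 1)
    (φt φtD : ℂ → ℝ → ℝ → ℂ)
    (hφt : ∀ z : ℂ, ∀ τ : ℝ, IsSol (fun s => p (s + τ)) z (φt z τ) (φtD z τ))
    (hφt0 : ∀ z : ℂ, ∀ τ : ℝ, φt z τ 0 = 0)
    (hφtD0 : ∀ z : ℂ, ∀ τ : ℝ, φtD z τ 0 = 1) :
    ∀ x : ℝ, ∀ z : ℂ,
      φt z x 1 = φ z 1 * θ z x ^ 2 - θD z 1 * φ z x ^ 2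
          + 2 * ((φD z 1 - θ z 1) / 2) * θ z x * φ z x := by
  -- integrability of p on all intervals
  have hp1 : IntervalIntegrable p volume 0 1 := by
    rw [intervalIntegrable_iff_integrableOn_Ioc_of_le zero_le_one]
    exact hpint.mono_set Set.Ioc_subset_Icc_self
  have hshift : ∀ n : ℤ, ∀ᵐ x ∂(volume : Measure ℝ), p (x + n) = p x := by
    intro n
    induction n using Int.induction_on with
    | zero => simp
    | succ n ih =>
      have h2 : ∀ᵐ x ∂(volume : Measure ℝ), p (x + (n:ℝ) + 1) = p (x + (n:ℝ)) :=
        (measurePreserving_add_right volume (n:ℝ)).quasiMeasurePreserving.ae hper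
      filter_upwards [ih, h2] with x hx1 hx2
      have e : x + (((n:ℤ)+1 : ℤ):ℝ) = x + (n:ℝ) + 1 := by push_cast; ring
      rw [e, hx2]
      simpa using hx1
    | pred n ih =>
      have h2 : ∀ᵐ x ∂(volume : Measure ℝ), p (x + (-(n:ℝ)-1) + 1) = p (x + (-(n:ℝ)-1)) :=
        (measurePreserving_add_right volume (-(n:ℝ)-1)).quasiMeasurePreserving.ae hper
      filter_upwards [ih, h2] with x hx1 hx2
      have e1 : x + ((-(n:ℤ)-1 : ℤ):ℝ) = x + (-(n:ℝ)-1) := by push_cast; ring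
      have e2 : x + (-(n:ℝ)-1) + 1 = x + ((-(n:ℤ) : ℤ):ℝ) := by push_cast; ring
      rw [e1, ← hx2, e2]
      exact hx1
  have hploc : ∀ n : ℤ, IntervalIntegrable p volume (n:ℝ) ((n:ℝ)+1) := by
    intro n
    have hae := hshift n
    have h1 : IntervalIntegrable (fun x => p (x + (n:ℝ))) volume 0 1 :=
      ⟨hp1.1.congr (ae_restrict_of_ae (hae.mono fun x hx => hx.symm)),
       hp1.2.congr (ae_restrict_of_ae (hae.mono fun x hx => hx.symm))⟩
    have h2 := h1.comp_sub_right (n:ℝ)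
    have hfun : (fun x => p (x - (n:ℝ) + (n:ℝ))) = p := funext fun x => by rw [sub_add_cancel]
    rw [hfun] at h2
    rw [show (0:ℝ)+(n:ℝ) = (n:ℝ) by ring, show (1:ℝ)+(n:ℝ) = (n:ℝ)+1 by ring] at h2
    exact h2
  have hpN : ∀ n : ℕ, IntervalIntegrable p volume (-(n:ℝ)) (n:ℝ) := by
    intro n
    induction n with
    | zero => simpa using (⟨by simp, by simp⟩ :
        IntervalIntegrable p volume (0:ℝ) (0:ℝ))
    | succ n ih =>
      have l : IntervalIntegrable p volume (-((n:ℝ)+1)) (-(n:ℝ)) := by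
        have h := hploc (-(n:ℤ)-1)
        rw [show ((-(n:ℤ)-1 : ℤ):ℝ) = -((n:ℝ)+1) by push_cast; ring] at h
        rw [show -((n:ℝ)+1) + 1 = -(n:ℝ) by ring] at h
        exact h
      have r : IntervalIntegrable p volume (n:ℝ) ((n:ℝ)+1) := by
        simpa using hploc (n:ℤ)
      have := (l.trans ih).trans r
      push_cast
      exact this
  have hpAll : ∀ a b : ℝ, IntervalIntegrable p volume a b := by
    intro a b
    obtain ⟨n, hn⟩ := exists_nat_ge (max |a| |b|)
    have ha := abs_le.mp (le_trans (le_max_left |a| |b|) hn)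
    have hb := abs_le.mp (le_trans (le_max_right |a| |b|) hn)
    apply (hpN n).mono_set
    have hle : -(n:ℝ) ≤ (n:ℝ) := by linarith
    refine Set.uIcc_subset_uIcc ?_ ?_ <;> rw [Set.uIcc_of_le hle]
    · exact ⟨ha.1, ha.2⟩
    · exact ⟨hb.1, hb.2⟩
  have hpShift : ∀ τ a b : ℝ, IntervalIntegrable (fun s => p (s + τ)) volume a b := by
    intro τ a b
    have := (hpAll (a+τ) (b+τ)).comp_add_right τ
    simpa using this
  intro x z
  -- interval integrability of the potentials
  have hQi : ∀ a b : ℝ, IntervalIntegrable (fun s => ((p s : ℂ) - z^2)) volume a b :=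
    fun a b => (ofReal_II (hpAll a b)).sub intervalIntegrable_const
  have hQxi : ∀ a b : ℝ, IntervalIntegrable (fun s => ((p (s+x) : ℂ) - z^2)) volume a b :=
    fun a b => (ofReal_II (hpShift x a b)).sub intervalIntegrable_const
  have hθs : SolQ (fun s => ((p s : ℂ) - z^2)) (θ z) (θD z) := hθ z
  have hφs : SolQ (fun s => ((p s : ℂ) - z^2)) (φ z) (φD z) := hφ z
  have hφts : SolQ (fun s => ((p (s+x) : ℂ) - z^2)) (φt z x) (φtD z x) := hφt z x
  -- Wronskian of θ, φ at x equals 1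
  have hW : θ z x * φD z x - θD z x * φ z x = 1 := by
    have hW0 := wronskian_eq hQi hθs hφs x
    rw [hθ0 z, hθD0 z, hφ0 z, hφD0 z] at hW0
    rw [hW0]; ring
  -- translated fundamental pair
  have hΘ : SolQ (fun s => ((p (s+x) : ℂ) - z^2))
      (fun s => θ z (s+x)) (fun s => θD z (s+x)) := solQ_translate hQi hθs x
  have hΦ : SolQ (fun s => ((p (s+x) : ℂ) - z^2))
      (fun s => φ z (s+x)) (fun s => φD z (s+x)) := solQ_translate hQi hφs x
  have hwx : (fun s => θ z (s+x)) 0 * (fun s => φD z (s+x)) 0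
      - (fun s => θD z (s+x)) 0 * (fun s => φ z (s+x)) 0 ≠ 0 := by
    show θ z (0+x) * φD z (0+x) - θD z (0+x) * φ z (0+x) ≠ 0
    rw [zero_add, hW]
    exact one_ne_zero
  -- Ψ := θ(x)·φ(·+x) − φ(x)·θ(·+x)
  have hΨ : SolQ (fun s => ((p (s+x) : ℂ) - z^2))
      (fun s => θ z x * φ z (s+x) + (-(φ z x)) * θ z (s+x))
      (fun s => θ z x * φD z (s+x) + (-(φ z x)) * θD z (s+x)) :=
    solQ_combo hQxi hΦ hΘ (θ z x) (-(φ z x))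
  have hU : SolQ (fun s => ((p (s+x) : ℂ) - z^2))
      (fun s => 1 * φt z x s + (-1) * (θ z x * φ z (s+x) + (-(φ z x)) * θ z (s+x)))
      (fun s => 1 * φtD z x s + (-1) * (θ z x * φD z (s+x) + (-(φ z x)) * θD z (s+x))) :=
    solQ_combo hQxi hφts hΨ 1 (-1)
  have hU0 : (fun s => 1 * φt z x s
      + (-1) * (θ z x * φ z (s+x) + (-(φ z x)) * θ z (s+x))) 0 = 0 := by
    show 1 * φt z x 0 + (-1) * (θ z x * φ z (0+x) + (-(φ z x)) * θ z (0+x)) = 0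
    rw [hφt0 z x, zero_add]; ring
  have hU0' : (fun s => 1 * φtD z x s
      + (-1) * (θ z x * φD z (s+x) + (-(φ z x)) * θD z (s+x))) 0 = 0 := by
    show 1 * φtD z x 0 + (-1) * (θ z x * φD z (0+x) + (-(φ z x)) * θD z (0+x)) = 0
    rw [hφtD0 z x, zero_add]
    linear_combination -hW
  have hU1 : 1 * φt z x 1 + (-1) * (θ z x * φ z (1+x) + (-(φ z x)) * θ z (1+x)) = 0 :=
    solQ_unique_zero hQxi hΘ hΦ hU hwx hU0 hU0' 1
  rw [show (1:ℝ) + x = x + 1 from add_comm 1 x] at hU1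
  -- monodromy
  have hper1 : ∀ᵐ s ∂(volume : Measure ℝ),
      (fun s => ((p (s+1) : ℂ) - z^2)) s = (fun s => ((p s : ℂ) - z^2)) s := by
    have := hshift 1
    filter_upwards [this] with s hs
    show ((p (s+1) : ℂ) - z^2) = ((p s : ℂ) - z^2)
    have : p (s + 1) = p s := by simpa using hs
    rw [this]
  have hwf : θ z 0 * φD z 0 - θD z 0 * φ z 0 ≠ 0 := by
    rw [hθ0 z, hθD0 z, hφ0 z, hφD0 z]
    norm_num
  have hYφ : SolQ (fun s => ((p s : ℂ) - z^2))
      (fun s => φ z (s+1)) (fun s => φD z (s+1)) :=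
    solQ_congr_ae hper1 (solQ_translate hQi hφs 1)
  have hYθ : SolQ (fun s => ((p s : ℂ) - z^2))
      (fun s => θ z (s+1)) (fun s => θD z (s+1)) :=
    solQ_congr_ae hper1 (solQ_translate hQi hθs 1)
  have hZφ : SolQ (fun s => ((p s : ℂ) - z^2))
      (fun s => φ z 1 * θ z s + φD z 1 * φ z s)
      (fun s => φ z 1 * θD z s + φD z 1 * φD z s) :=
    solQ_combo hQi hθs hφs (φ z 1) (φD z 1)
  have hZθ : SolQ (fun s => ((p s : ℂ) - z^2))
      (fun s => θ z 1 * θ z s + θD z 1 * φ z s)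
      (fun s => θ z 1 * θD z s + θD z 1 * φD z s) :=
    solQ_combo hQi hθs hφs (θ z 1) (θD z 1)
  have hDφ : SolQ (fun s => ((p s : ℂ) - z^2))
      (fun s => 1 * φ z (s+1) + (-1) * (φ z 1 * θ z s + φD z 1 * φ z s))
      (fun s => 1 * φD z (s+1) + (-1) * (φ z 1 * θD z s + φD z 1 * φD z s)) :=
    solQ_combo hQi hYφ hZφ 1 (-1)
  have hDθ : SolQ (fun s => ((p s : ℂ) - z^2))
      (fun s => 1 * θ z (s+1) + (-1) * (θ z 1 * θ z s + θD z 1 * φ z s))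
      (fun s => 1 * θD z (s+1) + (-1) * (θ z 1 * θD z s + θD z 1 * φD z s)) :=
    solQ_combo hQi hYθ hZθ 1 (-1)
  have hM1 : 1 * φ z (x+1) + (-1) * (φ z 1 * θ z x + φD z 1 * φ z x) = 0 := by
    refine solQ_unique_zero hQi hθs hφs hDφ hwf ?_ ?_ x
    · show 1 * φ z (0+1) + (-1) * (φ z 1 * θ z 0 + φD z 1 * φ z 0) = 0
      rw [zero_add, hθ0 z, hφ0 z]; ring
    · show 1 * φD z (0+1) + (-1) * (φ z 1 * θD z 0 + φD z 1 * φD z 0) = 0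
      rw [zero_add, hθD0 z, hφD0 z]; ring
  have hM2 : 1 * θ z (x+1) + (-1) * (θ z 1 * θ z x + θD z 1 * φ z x) = 0 := by
    refine solQ_unique_zero hQi hθs hφs hDθ hwf ?_ ?_ x
    · show 1 * θ z (0+1) + (-1) * (θ z 1 * θ z 0 + θD z 1 * φ z 0) = 0
      rw [zero_add, hθ0 z, hφ0 z]; ring
    · show 1 * θD z (0+1) + (-1) * (θ z 1 * θD z 0 + θD z 1 * φD z 0) = 0
      rw [zero_add, hθD0 z, hφD0 z]; ring
  linear_combination hU1 + θ z x * hM1 - φ z x * hM2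
end
end

section
/- Fix z ∈ ℂ and m ∈ ℂ. Let f : ℝ → ℂ solve −f'' + (p+q)·f = z²·f on ℝ and coincide, together with its first derivative, with θ(·,z) + m·φ(·,z) on [t,∞). Then f(0) = 1 + ∫₀ᵗ φ(x,z)·q(x)·f(x) dx and f'(0) = m − ∫₀ᵗ θ(x,z)·q(x)·f(x) dx. -/
open MeasureTheory intervalIntegral Set

noncomputable section

/-- Triangle Fubini swap. -/
lemma tri_swap (t : ℝ) (ht : 0 ≤ t) (h g : ℝ → ℂ)
    (hh : IntervalIntegrable h volume 0 t) (hg : IntervalIntegrable g volume 0 t) :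
    (∫ x in (0:ℝ)..t, h x * ∫ s in (0:ℝ)..x, g s)
      = ∫ s in (0:ℝ)..t, (∫ x in s..t, h x) * g s := by
  have hh' : Integrable h (volume.restrict (Ioc (0:ℝ) t)) :=
    (intervalIntegrable_iff_integrableOn_Ioc_of_le ht).1 hh
  have hg' : Integrable g (volume.restrict (Ioc (0:ℝ) t)) :=
    (intervalIntegrable_iff_integrableOn_Ioc_of_le ht).1 hg
  set μ := volume.restrict (Ioc (0:ℝ) t) with hμ
  have hmeas : MeasurableSet {z : ℝ × ℝ | z.2 ≤ z.1} :=
    measurableSet_le measurable_snd measurable_fst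
  set F : ℝ × ℝ → ℂ := ({z : ℝ × ℝ | z.2 ≤ z.1}).indicator (fun z => h z.1 * g z.2) with hF
  have hFi : Integrable F (μ.prod μ) := (hh'.mul_prod hg').indicator hmeas
  have key1 : (∫ x, (∫ s, F (x, s) ∂μ) ∂μ) = ∫ x in (0:ℝ)..t, h x * ∫ s in (0:ℝ)..x, g s := by
    rw [integral_of_le ht]
    refine setIntegral_congr_fun measurableSet_Ioc (fun x hx => ?_)
    have : ∀ s, F (x, s) = (Iic x).indicator (fun s => h x * g s) s := by
      intro s; simp [hF, indicator_apply]
    simp_rw [this]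
    rw [hμ, setIntegral_indicator measurableSet_Iic, Ioc_inter_Iic,
      min_eq_right hx.2, MeasureTheory.integral_const_mul, integral_of_le hx.1.le]
  have key2 : (∫ s, (∫ x, F (x, s) ∂μ) ∂μ) = ∫ s in (0:ℝ)..t, (∫ x in s..t, h x) * g s := by
    rw [integral_of_le ht]
    refine setIntegral_congr_fun measurableSet_Ioc (fun s hs => ?_)
    have : ∀ x, F (x, s) = (Ici s).indicator (fun x => h x * g s) x := by
      intro x; simp [hF, indicator_apply]
    simp_rw [this]
    have hset : Ioc (0:ℝ) t ∩ Ici s = Icc s t := by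
      ext y
      simp only [mem_inter_iff, mem_Ioc, mem_Ici, mem_Icc]
      constructor
      · rintro ⟨⟨_, h2⟩, h3⟩; exact ⟨h3, h2⟩
      · rintro ⟨h1, h2⟩; exact ⟨⟨lt_of_lt_of_le hs.1 h1, h2⟩, h1⟩
    rw [hμ, setIntegral_indicator measurableSet_Ici, hset,
      integral_Icc_eq_integral_Ioc, MeasureTheory.integral_mul_const, ← integral_of_le hs.2]
  calc (∫ x in (0:ℝ)..t, h x * ∫ s in (0:ℝ)..x, g s)
      = ∫ x, (∫ s, F (x, s) ∂μ) ∂μ := key1.symm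
    _ = ∫ s, (∫ x, F (x, s) ∂μ) ∂μ := integral_integral_swap hFi
    _ = _ := key2

/-- Integration by parts where `v` is an indefinite integral. -/
lemma parts (t : ℝ) (ht : 0 ≤ t) (u u' g v : ℝ → ℂ)
    (hu : ∀ x, HasDerivAt u (u' x) x)
    (hu' : IntervalIntegrable u' volume 0 t)
    (hg : IntervalIntegrable g volume 0 t)
    (hv : ∀ x, v x = v 0 + ∫ s in (0:ℝ)..x, g s) :
    u t * v t - u 0 * v 0
      = (∫ x in (0:ℝ)..t, u' x * v x) + ∫ x in (0:ℝ)..t, u x * g x := by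
  have hucont : ContinuousOn u (uIcc 0 t) := fun x _ => (hu x).continuousAt.continuousWithinAt
  have hVcont : ContinuousOn (fun x => ∫ s in (0:ℝ)..x, g s) (uIcc 0 t) :=
    continuousOn_primitive_interval' hg left_mem_uIcc
  have hftc : (∫ x in (0:ℝ)..t, u' x) = u t - u 0 :=
    integral_eq_sub_of_hasDerivAt (fun x _ => hu x) hu'
  have h1 : (∫ x in (0:ℝ)..t, u' x * v x)
      = (∫ x in (0:ℝ)..t, u' x * v 0) + ∫ x in (0:ℝ)..t, u' x * ∫ s in (0:ℝ)..x, g s := by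
    rw [← integral_add (hu'.mul_const _) (hu'.mul_continuousOn hVcont)]
    refine integral_congr fun x _ => ?_
    rw [hv x]; ring
  have h2 : (∫ x in (0:ℝ)..t, u' x * v 0) = (u t - u 0) * v 0 := by
    rw [intervalIntegral.integral_mul_const, hftc]
  have h3 : (∫ x in (0:ℝ)..t, u' x * ∫ s in (0:ℝ)..x, g s)
      = ∫ s in (0:ℝ)..t, (u t - u s) * g s := by
    rw [tri_swap t ht u' g hu' hg]
    refine integral_congr fun s hs => ?_
    congr 1
    refine integral_eq_sub_of_hasDerivAt (fun x _ => hu x) (hu'.mono_set ?_)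
    rw [uIcc_of_le ht] at hs
    rw [uIcc_of_le ht, uIcc_of_le hs.2]
    exact Icc_subset_Icc hs.1 le_rfl
  have h4 : (∫ s in (0:ℝ)..t, (u t - u s) * g s)
      = u t * (∫ s in (0:ℝ)..t, g s) - ∫ s in (0:ℝ)..t, u s * g s := by
    rw [← intervalIntegral.integral_const_mul,
      ← integral_sub (hg.const_mul _) (hg.continuousOn_mul hucont)]
    refine integral_congr fun s _ => ?_
    ring
  rw [h1, h2, h3, h4, hv t]
  ring

/-- If `f` solves `-f''+(p+q)f = z²f` and coincides (with derivative) with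
`θ + mφ` on `[t,∞)`, then `f(0) = 1 + ∫₀ᵗ φ q f` and `f'(0) = m − ∫₀ᵗ θ q f`. -/
theorem statement_10
    (p q : ℝ → ℝ) (t : ℝ) (ht : 0 < t)
    (hper : ∀ᵐ x ∂(volume : Measure ℝ), p (x + 1) = p x)
    (hpint : IntegrableOn p (Set.Icc 0 1))
    (hq : Integrable q) (hqsupp : Function.support q ⊆ Set.Icc 0 t)
    (z m : ℂ)
    (θ φ θD φD : ℝ → ℂ)
    (hθ : IsSol p z θ θD) (hθ0 : θ 0 = 1) (hθD0 : θD 0 = 0)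
    (hφ : IsSol p z φ φD) (hφ0 : φ 0 = 0) (hφD0 : φD 0 = 1)
    (f fD : ℝ → ℂ)
    (hf : IsSol (fun x => p x + q x) z f fD)
    (hmatch : ∀ x : ℝ, t ≤ x → f x = θ x + m * φ x ∧ fD x = θD x + m * φD x) :
    f 0 = 1 + ∫ x in (0:ℝ)..t, φ x * (q x : ℂ) * f x ∧
    fD 0 = m - ∫ x in (0:ℝ)..t, θ x * (q x : ℂ) * f x := by
  -- Step 1: p is interval integrable on [0, t]
  have h01 : IntervalIntegrable p volume 0 1 := by
    rw [intervalIntegrable_iff_integrableOn_Ioc_of_le zero_le_one]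
    exact hpint.mono_set Set.Ioc_subset_Icc_self
  have hshift : ∀ n : ℕ, (fun x : ℝ => p (x + n)) =ᵐ[volume] p := by
    intro n
    induction n with
    | zero => simp
    | succ k ih =>
      have h1 : ∀ᵐ x : ℝ, p (x + k + 1) = p (x + k) :=
        (measurePreserving_add_right volume (k : ℝ)).quasiMeasurePreserving.ae hper
      filter_upwards [h1, ih] with x hx1 hx2
      have : (x : ℝ) + (k + 1 : ℕ) = x + k + 1 := by push_cast; ring
      rw [this, hx1]
      exact hx2
  have hn : ∀ n : ℕ, IntervalIntegrable p volume n (n + 1) := by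
    intro n
    have h2 : IntervalIntegrable (fun x => p (x + n)) volume 0 1 := by
      rw [intervalIntegrable_iff] at h01 ⊢
      exact h01.congr (ae_restrict_of_ae (hshift n).symm)
    have h3 := h2.comp_sub_right (n : ℝ)
    have h4 : (fun x : ℝ => p (x - n + n)) = p := by funext x; congr 1; ring
    rw [h4] at h3
    simpa [add_comm] using h3
  have hcum : ∀ n : ℕ, IntervalIntegrable p volume 0 n := by
    intro n
    induction n with
    | zero => simp
    | succ k ih =>
      refine ih.trans ?_
      have := hn k
      push_cast
      exact_mod_cast this
  have hpt : IntervalIntegrable p volume 0 t := by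
    refine (hcum ⌈t⌉₊).mono_set ?_
    rw [uIcc_of_le ht.le, uIcc_of_le (by positivity)]
    exact Icc_subset_Icc le_rfl (Nat.le_ceil t)
  -- Step 2: integrability of integrands
  have hθc : Continuous θ := continuous_iff_continuousAt.2 fun x => (hθ.1 x).continuousAt
  have hφc : Continuous φ := continuous_iff_continuousAt.2 fun x => (hφ.1 x).continuousAt
  have hfc : Continuous f := continuous_iff_continuousAt.2 fun x => (hf.1 x).continuousAt
  have hqt : IntervalIntegrable q volume 0 t := hq.intervalIntegrable
  have hpC : IntervalIntegrable (fun x => (p x : ℂ)) volume 0 t := by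
    rw [intervalIntegrable_iff] at hpt ⊢; exact hpt.ofReal
  have hqC : IntervalIntegrable (fun x => (q x : ℂ)) volume 0 t := by
    rw [intervalIntegrable_iff] at hqt ⊢; exact hqt.ofReal
  have hgθI : IntervalIntegrable (fun x => ((p x : ℂ) - z ^ 2) * θ x) volume 0 t :=
    (hpC.sub intervalIntegrable_const).mul_continuousOn hθc.continuousOn
  have hgφI : IntervalIntegrable (fun x => ((p x : ℂ) - z ^ 2) * φ x) volume 0 t :=
    (hpC.sub intervalIntegrable_const).mul_continuousOn hφc.continuousOn
  have hgfI : IntervalIntegrable (fun x => ((p x : ℂ) + (q x : ℂ) - z ^ 2) * f x) volume 0 t :=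
    ((hpC.add hqC).sub intervalIntegrable_const).mul_continuousOn hfc.continuousOn
  have hf2 : ∀ x : ℝ, fD x = fD 0 + ∫ s in (0:ℝ)..x, ((p s : ℂ) + (q s : ℂ) - z ^ 2) * f s := by
    intro x
    rw [hf.2 x]
    congr 1
    refine integral_congr fun s _ => ?_
    push_cast
    ring
  -- Step 3: interval integrability of the derivatives
  have hDI : ∀ (y yD : ℝ → ℂ) (g : ℝ → ℂ), IntervalIntegrable g volume 0 t →
      (∀ x : ℝ, yD x = yD 0 + ∫ s in (0:ℝ)..x, g s) →
      IntervalIntegrable yD volume 0 t := by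
    intro y yD g hg hyD
    apply ContinuousOn.intervalIntegrable
    have hc : ContinuousOn (fun x => yD 0 + ∫ s in (0:ℝ)..x, g s) (uIcc (0:ℝ) t) :=
      continuousOn_const.add (continuousOn_primitive_interval' hg left_mem_uIcc)
    exact hc.congr fun x _ => hyD x
  have hθDI : IntervalIntegrable θD volume 0 t := hDI θ θD _ hgθI hθ.2
  have hφDI : IntervalIntegrable φD volume 0 t := hDI φ φD _ hgφI hφ.2
  have hfDI : IntervalIntegrable fD volume 0 t := hDI f fD _ hgfI hf2
  -- Step 4: six applications of integration by parts
  have A : φ t * fD t - φ 0 * fD 0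
      = (∫ x in (0:ℝ)..t, φD x * fD x)
        + ∫ x in (0:ℝ)..t, φ x * (((p x : ℂ) + (q x : ℂ) - z ^ 2) * f x) :=
    parts t ht.le φ φD _ fD hφ.1 hφDI hgfI hf2
  have B : f t * φD t - f 0 * φD 0
      = (∫ x in (0:ℝ)..t, fD x * φD x)
        + ∫ x in (0:ℝ)..t, f x * (((p x : ℂ) - z ^ 2) * φ x) :=
    parts t ht.le f fD _ φD hf.1 hfDI hgφI hφ.2
  have C : φ t * θD t - φ 0 * θD 0
      = (∫ x in (0:ℝ)..t, φD x * θD x)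
        + ∫ x in (0:ℝ)..t, φ x * (((p x : ℂ) - z ^ 2) * θ x) :=
    parts t ht.le φ φD _ θD hφ.1 hφDI hgθI hθ.2
  have D : θ t * φD t - θ 0 * φD 0
      = (∫ x in (0:ℝ)..t, θD x * φD x)
        + ∫ x in (0:ℝ)..t, θ x * (((p x : ℂ) - z ^ 2) * φ x) :=
    parts t ht.le θ θD _ φD hθ.1 hθDI hgφI hφ.2
  have E : θ t * fD t - θ 0 * fD 0
      = (∫ x in (0:ℝ)..t, θD x * fD x)
        + ∫ x in (0:ℝ)..t, θ x * (((p x : ℂ) + (q x : ℂ) - z ^ 2) * f x) :=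
    parts t ht.le θ θD _ fD hθ.1 hθDI hgfI hf2
  have Fp : f t * θD t - f 0 * θD 0
      = (∫ x in (0:ℝ)..t, fD x * θD x)
        + ∫ x in (0:ℝ)..t, f x * (((p x : ℂ) - z ^ 2) * θ x) :=
    parts t ht.le f fD _ θD hf.1 hfDI hgθI hθ.2
  -- commutations
  have comm1 : (∫ x in (0:ℝ)..t, φD x * fD x) = ∫ x in (0:ℝ)..t, fD x * φD x :=
    integral_congr fun x _ => mul_comm _ _
  have comm2 : (∫ x in (0:ℝ)..t, φD x * θD x) = ∫ x in (0:ℝ)..t, θD x * φD x :=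
    integral_congr fun x _ => mul_comm _ _
  have comm3 : (∫ x in (0:ℝ)..t, θD x * fD x) = ∫ x in (0:ℝ)..t, fD x * θD x :=
    integral_congr fun x _ => mul_comm _ _
  -- differences of integrals
  have hφgfI : IntervalIntegrable (fun x => φ x * (((p x : ℂ) + (q x : ℂ) - z ^ 2) * f x))
      volume 0 t := hgfI.continuousOn_mul hφc.continuousOn
  have hfgφI : IntervalIntegrable (fun x => f x * (((p x : ℂ) - z ^ 2) * φ x))
      volume 0 t := hgφI.continuousOn_mul hfc.continuousOn
  have hφgθI : IntervalIntegrable (fun x => φ x * (((p x : ℂ) - z ^ 2) * θ x))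
      volume 0 t := hgθI.continuousOn_mul hφc.continuousOn
  have hθgφI : IntervalIntegrable (fun x => θ x * (((p x : ℂ) - z ^ 2) * φ x))
      volume 0 t := hgφI.continuousOn_mul hθc.continuousOn
  have hθgfI : IntervalIntegrable (fun x => θ x * (((p x : ℂ) + (q x : ℂ) - z ^ 2) * f x))
      volume 0 t := hgfI.continuousOn_mul hθc.continuousOn
  have hfgθI : IntervalIntegrable (fun x => f x * (((p x : ℂ) - z ^ 2) * θ x))
      volume 0 t := hgθI.continuousOn_mul hfc.continuousOn
  have sub1 : (∫ x in (0:ℝ)..t, φ x * (((p x : ℂ) + (q x : ℂ) - z ^ 2) * f x))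
      - (∫ x in (0:ℝ)..t, f x * (((p x : ℂ) - z ^ 2) * φ x))
      = ∫ x in (0:ℝ)..t, φ x * (q x : ℂ) * f x := by
    rw [← integral_sub hφgfI hfgφI]
    exact integral_congr fun x _ => by ring
  have sub2 : (∫ x in (0:ℝ)..t, φ x * (((p x : ℂ) - z ^ 2) * θ x))
      - (∫ x in (0:ℝ)..t, θ x * (((p x : ℂ) - z ^ 2) * φ x)) = 0 := by
    rw [← integral_sub hφgθI hθgφI]
    have : (∫ x in (0:ℝ)..t, (φ x * (((p x : ℂ) - z ^ 2) * θ x)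
        - θ x * (((p x : ℂ) - z ^ 2) * φ x))) = ∫ x in (0:ℝ)..t, (0:ℂ) :=
      integral_congr fun x _ => by ring
    rw [this]
    simp
  have sub3 : (∫ x in (0:ℝ)..t, θ x * (((p x : ℂ) + (q x : ℂ) - z ^ 2) * f x))
      - (∫ x in (0:ℝ)..t, f x * (((p x : ℂ) - z ^ 2) * θ x))
      = ∫ x in (0:ℝ)..t, θ x * (q x : ℂ) * f x := by
    rw [← integral_sub hθgfI hfgθI]
    exact integral_congr fun x _ => by ring
  obtain ⟨hft, hfDt⟩ := hmatch t le_rfl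
  rw [hfDt, hφ0] at A
  rw [hft, hφD0] at B
  rw [hφ0, hθD0] at C
  rw [hθ0, hφD0] at D
  rw [hfDt, hθ0] at E
  rw [hft, hθD0] at Fp
  constructor
  · linear_combination A - B - C + D + comm1 - comm2 + sub1 - sub2
  · linear_combination Fp - E - m * C + m * D - comm3 - sub3 - m * comm2 - m * sub2
end
end

section
/- Fix z ∈ ℂ and m ∈ ℂ. Let f : ℝ → ℂ solve −f'' + (p+q)·f = z²·f on ℝ and coincide, together with its first derivative, with θ(·,z) + m·φ(·,z) on [t,∞). Then m·f(0) − f'(0) = ∫₀ᵗ q(x)·(θ(x,z) + m·φ(x,z))·f(x) dx. -/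
open MeasureTheory

noncomputable section

/-- Integration-by-parts / FTC for a `C¹` function `u` against a function `v`
given as an indefinite integral of an integrable `g`. -/
lemma parts_aux {t : ℝ} (ht : 0 ≤ t) (u uD v g : ℝ → ℂ)
    (hu : ∀ x, HasDerivAt u (uD x) x)
    (huD : ContinuousOn uD (Set.Icc 0 t))
    (hg : IntegrableOn g (Set.Icc 0 t))
    (hv : ∀ x ∈ Set.Icc 0 t, v x = v 0 + ∫ s in (0:ℝ)..x, g s) :
    u t * v t - u 0 * v 0 =
      (∫ x in (0:ℝ)..t, uD x * v x) + ∫ x in (0:ℝ)..t, u x * g x := by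
  have hucont : Continuous u := by
    rw [continuous_iff_continuousAt]; exact fun x => (hu x).continuousAt
  have huD_int : IntegrableOn uD (Set.Icc 0 t) :=
    huD.integrableOn_compact isCompact_Icc
  set G : ℝ → ℂ := fun x => ∫ s in Set.Ioc 0 x, g s with hGdef
  have hGc : ContinuousOn G (Set.Icc 0 t) := intervalIntegral.continuousOn_primitive hg
  have hguIcc : IntegrableOn g (Set.uIcc 0 t) := by rwa [Set.uIcc_of_le ht]
  -- FTC for u on subintervals of [0,t]
  have FTC : ∀ s ∈ Set.Icc 0 t, (∫ x in s..t, uD x) = u t - u s := by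
    intro s hs
    refine intervalIntegral.integral_eq_sub_of_hasDerivAt (fun x _ => hu x) ?_
    have : Set.uIcc s t ⊆ Set.Icc 0 t := by
      rw [Set.uIcc_of_le hs.2]
      exact Set.Icc_subset_Icc hs.1 le_rfl
    exact (huD_int.mono_set this).intervalIntegrable
  -- the Fubini step
  have star : (∫ x in Set.Ioc 0 t, uD x * G x)
      = ∫ s in Set.Ioc 0 t, g s * (u t - u s) := by
    set μ : Measure ℝ := volume.restrict (Set.Ioc 0 t) with hμ
    have hbase : Integrable (fun z : ℝ × ℝ => uD z.1 * g z.2) (μ.prod μ) :=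
      (huD_int.mono_set Set.Ioc_subset_Icc_self).mul_prod
        (hg.mono_set Set.Ioc_subset_Icc_self)
    have hsmeas : MeasurableSet {w : ℝ × ℝ | w.2 ≤ w.1} :=
      measurableSet_le measurable_snd measurable_fst
    have hK : Integrable
        (fun w : ℝ × ℝ => if w.2 ≤ w.1 then uD w.1 * g w.2 else 0) (μ.prod μ) := by
      have := hbase.indicator hsmeas
      refine this.congr (Filter.Eventually.of_forall fun w => ?_)
      simp [Set.indicator_apply]
    have swap := MeasureTheory.integral_integral_swap
      (f := fun x s => if s ≤ x then uD x * g s else 0) (μ := μ) (ν := μ) hK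
    calc (∫ x in Set.Ioc 0 t, uD x * G x)
        = ∫ x in Set.Ioc 0 t, ∫ s in Set.Ioc 0 t,
            (if s ≤ x then uD x * g s else 0) := by
          refine setIntegral_congr_fun measurableSet_Ioc (fun x hx => ?_)
          have hind : (fun s => if s ≤ x then uD x * g s else 0)
              = (Set.Iic x).indicator (fun s => uD x * g s) := by
            funext s; simp [Set.indicator_apply]
          rw [hind, setIntegral_indicator measurableSet_Iic]
          have hset : Set.Ioc 0 t ∩ Set.Iic x = Set.Ioc 0 x := by
            ext y
            simp only [Set.mem_inter_iff, Set.mem_Ioc, Set.mem_Iic]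
            exact ⟨fun ⟨⟨h1, _⟩, h3⟩ => ⟨h1, h3⟩,
              fun ⟨h1, h3⟩ => ⟨⟨h1, h3.trans hx.2⟩, h3⟩⟩
          rw [hset, MeasureTheory.integral_const_mul]
      _ = ∫ s in Set.Ioc 0 t, ∫ x in Set.Ioc 0 t,
            (if s ≤ x then uD x * g s else 0) := swap
      _ = ∫ s in Set.Ioc 0 t, g s * (u t - u s) := by
          refine setIntegral_congr_fun measurableSet_Ioc (fun s hs => ?_)
          have hind : (fun x => if s ≤ x then uD x * g s else 0)
              = (Set.Ici s).indicator (fun x => uD x * g s) := by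
            funext x; simp [Set.indicator_apply]
          rw [hind, setIntegral_indicator measurableSet_Ici]
          have hset : Set.Ioc 0 t ∩ Set.Ici s = Set.Icc s t := by
            ext y
            simp only [Set.mem_inter_iff, Set.mem_Ioc, Set.mem_Ici, Set.mem_Icc]
            exact ⟨fun ⟨⟨_, h2⟩, h3⟩ => ⟨h3, h2⟩,
              fun ⟨h3, h2⟩ => ⟨⟨lt_of_lt_of_le hs.1 h3, h2⟩, h3⟩⟩
          rw [hset, MeasureTheory.integral_mul_const, integral_Icc_eq_integral_Ioc,
            ← intervalIntegral.integral_of_le hs.2, FTC s ⟨hs.1.le, hs.2⟩, mul_comm]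
  -- assemble
  rw [intervalIntegral.integral_of_le ht, intervalIntegral.integral_of_le ht]
  have h2 : v t = v 0 + G t := by
    rw [hv t ⟨ht, le_rfl⟩, intervalIntegral.integral_of_le ht]
  have hIb : IntegrableOn (fun x => uD x * G x) (Set.Ioc 0 t) :=
    ((huD.mul hGc).integrableOn_compact isCompact_Icc).mono_set Set.Ioc_subset_Icc_self
  have hIa : IntegrableOn (fun x => uD x * v 0) (Set.Ioc 0 t) :=
    (huD_int.mono_set Set.Ioc_subset_Icc_self).mul_const _
  have h1 : (∫ x in Set.Ioc 0 t, uD x * v x)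
      = (u t - u 0) * v 0 + (G t * u t - ∫ s in Set.Ioc 0 t, g s * u s) := by
    have e1 : (∫ x in Set.Ioc 0 t, uD x * v x)
        = ∫ x in Set.Ioc 0 t, (uD x * v 0 + uD x * G x) := by
      refine setIntegral_congr_fun measurableSet_Ioc (fun x hx => ?_)
      rw [hv x ⟨hx.1.le, hx.2⟩, intervalIntegral.integral_of_le hx.1.le, mul_add]
    rw [e1, MeasureTheory.integral_add hIa hIb, MeasureTheory.integral_mul_const, star]
    have e2 : (∫ x in Set.Ioc 0 t, uD x) = u t - u 0 := by
      rw [← intervalIntegral.integral_of_le ht]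
      exact FTC 0 ⟨le_rfl, ht⟩
    have hIg : IntegrableOn g (Set.Ioc 0 t) := hg.mono_set Set.Ioc_subset_Icc_self
    have hIgu : IntegrableOn (fun s => g s * u s) (Set.Ioc 0 t) :=
      (hg.mul_continuousOn hucont.continuousOn isCompact_Icc).mono_set
        Set.Ioc_subset_Icc_self
    have e3 : (∫ s in Set.Ioc 0 t, g s * (u t - u s))
        = G t * u t - ∫ s in Set.Ioc 0 t, g s * u s := by
      have : (∫ s in Set.Ioc 0 t, g s * (u t - u s))
          = ∫ s in Set.Ioc 0 t, (g s * u t - g s * u s) := by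
        refine setIntegral_congr_fun measurableSet_Ioc (fun s _ => ?_)
        ring
      rw [this, MeasureTheory.integral_sub (hIg.mul_const _) hIgu,
        MeasureTheory.integral_mul_const]
    rw [e2, e3]
  have h3 : (∫ x in Set.Ioc 0 t, u x * g x) = ∫ s in Set.Ioc 0 t, g s * u s :=
    integral_congr_ae (Filter.Eventually.of_forall fun x => mul_comm _ _)
  rw [h1, h2, h3]
  ring

/-- If `f` solves `-f''+(p+q)f = z²f` and coincides (with derivative) with
`θ + mφ` on `[t,∞)`, then `m·f(0) − f'(0) = ∫₀ᵗ q(x)(θ(x)+mφ(x))f(x)dx`. -/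
theorem statement_12
    (p q : ℝ → ℝ) (t : ℝ) (ht : 0 < t)
    (hper : ∀ᵐ x ∂(volume : Measure ℝ), p (x + 1) = p x)
    (hpint : IntegrableOn p (Set.Icc 0 1))
    (hq : Integrable q) (hqsupp : Function.support q ⊆ Set.Icc 0 t)
    (z m : ℂ)
    (θ φ θD φD : ℝ → ℂ)
    (hθ : IsSol p z θ θD) (hθ0 : θ 0 = 1) (hθD0 : θD 0 = 0)
    (hφ : IsSol p z φ φD) (hφ0 : φ 0 = 0) (hφD0 : φD 0 = 1)
    (f fD : ℝ → ℂ)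
    (hf : IsSol (fun x => p x + q x) z f fD)
    (hmatch : ∀ x : ℝ, t ≤ x → f x = θ x + m * φ x ∧ fD x = θD x + m * φD x) :
    m * f 0 - fD 0 = ∫ x in (0:ℝ)..t, (q x : ℂ) * (θ x + m * φ x) * f x := by
  set ψ : ℝ → ℂ := fun x => θ x + m * φ x with hψdef
  set ψD : ℝ → ℂ := fun x => θD x + m * φD x with hψDdef
  have hψd : ∀ x, HasDerivAt ψ (ψD x) x := fun x =>
    (hθ.1 x).add ((hφ.1 x).const_mul m)
  have hfc : Continuous f := by
    rw [continuous_iff_continuousAt]; exact fun x => (hf.1 x).continuousAt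
  have hθc : Continuous θ := by
    rw [continuous_iff_continuousAt]; exact fun x => (hθ.1 x).continuousAt
  have hφc : Continuous φ := by
    rw [continuous_iff_continuousAt]; exact fun x => (hφ.1 x).continuousAt
  have hψc : Continuous ψ := hθc.add (continuous_const.mul hφc)
  -- integrability of p on [0,t]
  have hshift : ∀ n : ℕ, ∀ᵐ x : ℝ, p (x + n) = p x := by
    intro n
    induction n with
    | zero => simp
    | succ n ih =>
      have h2 : ∀ᵐ x : ℝ, p ((x + n) + 1) = p (x + n) :=
        (measurePreserving_add_right volume (n : ℝ)).quasiMeasurePreserving.ae hper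
      filter_upwards [h2, ih] with x h2 ih
      have hx : x + ((n : ℕ) + 1 : ℕ) = (x + n) + 1 := by push_cast; ring
      rw [hx, h2, ih]
  have hIccn : ∀ n : ℕ, IntegrableOn p (Set.Icc 0 (n : ℝ)) := by
    intro n
    induction n with
    | zero =>
      exact (hpint.mono_set (Set.Icc_subset_Icc le_rfl (by norm_num)))
    | succ n ih =>
      have step : IntegrableOn p (Set.Icc (n : ℝ) ((n : ℝ) + 1)) := by
        have h1 : IntegrableOn (fun x => p (x + n)) (Set.Icc 0 1) :=
          hpint.congr ((ae_restrict_of_ae (hshift n)).mono fun x h => h.symm)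
        have h2 : IntervalIntegrable (fun x => p (x + n)) volume 0 1 := by
          rw [intervalIntegrable_iff']
          rwa [Set.uIcc_of_le zero_le_one]
        have h3 := h2.comp_sub_right (n : ℝ)
        have h4 : IntervalIntegrable p volume (n : ℝ) ((n : ℝ) + 1) := by
          simpa [add_comm] using h3
        rw [intervalIntegrable_iff'] at h4
        rwa [Set.uIcc_of_le (by linarith)] at h4
      have hu : IntegrableOn p (Set.Icc 0 (n : ℝ) ∪ Set.Icc (n : ℝ) ((n : ℝ) + 1)) :=
        ih.union step
      refine hu.mono_set ?_
      push_cast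
      exact Set.Icc_subset_Icc_union_Icc
  have hpt : IntegrableOn p (Set.Icc 0 t) :=
    (hIccn ⌈t⌉₊).mono_set (Set.Icc_subset_Icc le_rfl (Nat.le_ceil t))
  -- complex coefficient functions
  have hfin : volume (Set.Icc (0:ℝ) t) < ⊤ := by
    simp [Real.volume_Icc]
  have hpC : IntegrableOn (fun x => ((p x : ℂ) - z ^ 2)) (Set.Icc 0 t) :=
    hpt.ofReal.sub (integrableOn_const hfin.ne)
  have hpqC : IntegrableOn (fun x => (((p x + q x : ℝ) : ℂ) - z ^ 2)) (Set.Icc 0 t) :=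
    (hpt.add hq.integrableOn).ofReal.sub (integrableOn_const hfin.ne)
  have hgθ : IntegrableOn (fun x => ((p x : ℂ) - z ^ 2) * θ x) (Set.Icc 0 t) :=
    hpC.mul_continuousOn hθc.continuousOn isCompact_Icc
  have hgφ : IntegrableOn (fun x => ((p x : ℂ) - z ^ 2) * φ x) (Set.Icc 0 t) :=
    hpC.mul_continuousOn hφc.continuousOn isCompact_Icc
  have hgψ : IntegrableOn (fun x => ((p x : ℂ) - z ^ 2) * ψ x) (Set.Icc 0 t) :=
    hpC.mul_continuousOn hψc.continuousOn isCompact_Icc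
  have hgf : IntegrableOn (fun x => (((p x + q x : ℝ) : ℂ) - z ^ 2) * f x)
      (Set.Icc 0 t) := hpqC.mul_continuousOn hfc.continuousOn isCompact_Icc
  -- integral representation of ψD on [0,t]
  have hψDrep : ∀ x ∈ Set.Icc 0 t,
      ψD x = ψD 0 + ∫ s in (0:ℝ)..x, ((p s : ℂ) - z ^ 2) * ψ s := by
    intro x hx
    have hsub : Set.uIcc 0 x ⊆ Set.Icc 0 t := by
      rw [Set.uIcc_of_le hx.1]
      exact Set.Icc_subset_Icc le_rfl hx.2
    have hIθ : IntervalIntegrable (fun s => ((p s : ℂ) - z ^ 2) * θ s) volume 0 x :=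
      (hgθ.mono_set hsub).intervalIntegrable
    have hIφ : IntervalIntegrable (fun s => m * (((p s : ℂ) - z ^ 2) * φ s)) volume 0 x :=
      ((hgφ.mono_set hsub).intervalIntegrable).const_mul m
    have : ψD x = ψD 0 + ((∫ s in (0:ℝ)..x, ((p s : ℂ) - z ^ 2) * θ s)
        + ∫ s in (0:ℝ)..x, m * (((p s : ℂ) - z ^ 2) * φ s)) := by
      rw [intervalIntegral.integral_const_mul]
      simp only [hψDdef]
      rw [hθ.2 x, hφ.2 x]
      ring
    rw [this, ← intervalIntegral.integral_add hIθ hIφ]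
    congr 1
    refine intervalIntegral.integral_congr fun s _ => ?_
    simp only [hψdef]
    ring
  -- continuity of ψD and fD on [0,t]
  have hψDc : ContinuousOn ψD (Set.Icc 0 t) := by
    have huIcc : IntegrableOn (fun s => ((p s : ℂ) - z ^ 2) * ψ s) (Set.uIcc 0 t) := by
      rwa [Set.uIcc_of_le ht.le]
    have hc : ContinuousOn
        (fun x => ψD 0 + ∫ s in (0:ℝ)..x, ((p s : ℂ) - z ^ 2) * ψ s) (Set.Icc 0 t) := by
      have := intervalIntegral.continuousOn_primitive_interval huIcc
      rw [Set.uIcc_of_le ht.le] at this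
      exact continuousOn_const.add this
    exact hc.congr hψDrep
  have hfDrep : ∀ x ∈ Set.Icc 0 t,
      fD x = fD 0 + ∫ s in (0:ℝ)..x, (((p s + q s : ℝ) : ℂ) - z ^ 2) * f s :=
    fun x _ => hf.2 x
  have hfDc : ContinuousOn fD (Set.Icc 0 t) := by
    have huIcc : IntegrableOn (fun s => (((p s + q s : ℝ) : ℂ) - z ^ 2) * f s)
        (Set.uIcc 0 t) := by rwa [Set.uIcc_of_le ht.le]
    have hc : ContinuousOn
        (fun x => fD 0 + ∫ s in (0:ℝ)..x, (((p s + q s : ℝ) : ℂ) - z ^ 2) * f s)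
        (Set.Icc 0 t) := by
      have := intervalIntegral.continuousOn_primitive_interval huIcc
      rw [Set.uIcc_of_le ht.le] at this
      exact continuousOn_const.add this
    exact hc.congr hfDrep
  -- apply the integration by parts lemma twice
  have hA := parts_aux ht.le ψ ψD fD (fun s => (((p s + q s : ℝ) : ℂ) - z ^ 2) * f s)
    hψd hψDc hgf hfDrep
  have hB := parts_aux ht.le f fD ψD (fun s => ((p s : ℂ) - z ^ 2) * ψ s)
    hf.1 hfDc hgψ hψDrep
  have hm := hmatch t le_rfl
  have h0ψ : ψ 0 = 1 := by simp [hψdef, hθ0, hφ0]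
  have h0ψD : ψD 0 = m := by simp [hψDdef, hθD0, hφD0]
  have hcomm : (∫ x in (0:ℝ)..t, ψD x * fD x) = ∫ x in (0:ℝ)..t, fD x * ψD x :=
    intervalIntegral.integral_congr fun x _ => mul_comm _ _
  have hI1 : IntervalIntegrable
      (fun x => ψ x * ((((p x + q x : ℝ) : ℂ) - z ^ 2) * f x)) volume 0 t := by
    have : IntegrableOn (fun x => ψ x * ((((p x + q x : ℝ) : ℂ) - z ^ 2) * f x))
        (Set.uIcc 0 t) := by
      rw [Set.uIcc_of_le ht.le]
      exact hgf.continuousOn_mul hψc.continuousOn isCompact_Icc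
    exact this.intervalIntegrable
  have hI2 : IntervalIntegrable
      (fun x => f x * (((p x : ℂ) - z ^ 2) * ψ x)) volume 0 t := by
    have : IntegrableOn (fun x => f x * (((p x : ℂ) - z ^ 2) * ψ x))
        (Set.uIcc 0 t) := by
      rw [Set.uIcc_of_le ht.le]
      exact hgψ.continuousOn_mul hfc.continuousOn isCompact_Icc
    exact this.intervalIntegrable
  calc m * f 0 - fD 0
      = (ψ t * fD t - ψ 0 * fD 0) - (f t * ψD t - f 0 * ψD 0) := by
        rw [hm.1, hm.2, h0ψ, h0ψD]
        show m * f 0 - fD 0 = (ψ t * ψD t - 1 * fD 0) - (ψ t * ψD t - f 0 * m)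
        ring
    _ = (∫ x in (0:ℝ)..t, ψ x * ((((p x + q x : ℝ) : ℂ) - z ^ 2) * f x))
        - ∫ x in (0:ℝ)..t, f x * (((p x : ℂ) - z ^ 2) * ψ x) := by
        rw [hA, hB, hcomm]; ring
    _ = ∫ x in (0:ℝ)..t, (ψ x * ((((p x + q x : ℝ) : ℂ) - z ^ 2) * f x)
        - f x * (((p x : ℂ) - z ^ 2) * ψ x)) :=
        (intervalIntegral.integral_sub hI1 hI2).symm
    _ = ∫ x in (0:ℝ)..t, (q x : ℂ) * (θ x + m * φ x) * f x := by
        refine intervalIntegral.integral_congr fun x _ => ?_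
        simp only [hψdef]
        push_cast
        ring
end
end
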